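/- arXiv:2408.07575 — 5 statements merged into one kernel-verified Lean document; each statement's English description precedes it below -/
import Mathlib

section
/- Reversing the implication (Proposition 2): Let 𝒜 and ℬ be properties relating distributions and graphs in 𝔾, with 𝒜 a class property. Suppose that for every distribution P, there exists G ∈ 𝔾 with 𝒜(P,G) = ⊤ if and only if there exists G' ∈ 𝔾 with ℬ(P,G') = ⊤. If 𝒜(P,G) = ⊤ ⇒ ℬ(P,G) = ⊤ for all distributions P and all G ∈ 𝔾, then supp(ℬ) ⊆ supp(𝒜). -/
/-- `A`-uniqueness holds at the distribution `P`: all graphs in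
`{G ∈ 𝔾 : A P G}` are pairwise Markov equivalent. -/
def Usat {D Γ I : Type*} (𝔾 : Set Γ) (J : Γ → Set I) (A : D → Γ → Prop) (P : D) : Prop :=
  ∀ G₁ ∈ 𝔾, ∀ G₂ ∈ 𝔾, A P G₁ → A P G₂ → J G₁ = J G₂

/-- The support of the property `A`:
`supp(A) = {(P,G) : G ∈ 𝔾, A(P,G) = ⊤ and U_A(P) = ⊤}`. -/
def supp {D Γ I : Type*} (𝔾 : Set Γ) (J : Γ → Set I) (A : D → Γ → Prop) :
    Set (D × Γ) :=
  {pg | pg.2 ∈ 𝔾 ∧ A pg.1 pg.2 ∧ Usat 𝔾 J A pg.1}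

/-- Reversing the implication (Proposition 2): if `A` is a class property,
`A` and `B` are simultaneously satisfiable at every `P`, and `A` implies `B`
pointwise, then `supp(B) ⊆ supp(A)`. -/
theorem reversing_the_implication {D Γ I : Type*} (𝔾 : Set Γ) (J : Γ → Set I)
    (A B : D → Γ → Prop)
    (hclass : ∀ P : D, ∀ G₁ ∈ 𝔾, ∀ G₂ ∈ 𝔾, J G₁ = J G₂ → (A P G₁ ↔ A P G₂))
    (hiff : ∀ P : D, (∃ G ∈ 𝔾, A P G) ↔ (∃ G' ∈ 𝔾, B P G'))
    (himp : ∀ P : D, ∀ G ∈ 𝔾, A P G → B P G) :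
    supp 𝔾 J B ⊆ supp 𝔾 J A := by
  rintro ⟨P, G⟩ ⟨hG, hB, hU⟩
  obtain ⟨G₀, hG₀, hA₀⟩ := (hiff P).mpr ⟨G, hG, hB⟩
  have hJ : J G₀ = J G := hU G₀ hG₀ G hG (himp P G₀ hG₀ hA₀) hB
  refine ⟨hG, (hclass P G₀ hG₀ G hG hJ).mp hA₀, fun G₁ h₁ G₂ h₂ hA₁ hA₂ =>
    hU G₁ h₁ G₂ h₂ (himp P G₁ h₁ hA₁) (himp P G₂ h₂ hA₂)⟩
end

section
/- V_{𝔫,𝔠}-uniqueness (Proposition 4, part 2): Let 𝔫 and 𝔠 be local properties such that for every independence model P and every v-configuration i∼k∼j in sk(P), it is not the case that both 𝔫(P, i∼k∼j) = ⊤ and 𝔠(P, i∼k∼j) = ⊤. Then for every independence model P such that V_{𝔫,𝔠}(P,G_P) = ⊤ for some DAG G_P on V, we have U_{V_{𝔫,𝔠}}(P) = ⊤, i.e. all DAGs G on V with V_{𝔫,𝔠}(P,G) = ⊤ are pairwise Markov equivalent. -/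
/-- A directed acyclic graph on vertex type `V`: a directed edge relation
with no directed cycles. -/
structure DAG (V : Type) where
  edge : V → V → Prop
  acyclic : ∀ i, ¬ Relation.TransGen edge i i

namespace DAG

variable {V : Type}

/-- `i` and `j` are adjacent in `G` (i.e. adjacent in the skeleton `sk(G)`). -/
def adj (G : DAG V) (i j : V) : Prop := G.edge i j ∨ G.edge j i

/-- A d-connecting walk from `i` to `j` given `C`: consecutive nodes are adjacent,
and an interior node is a collider on the walk if and only if it lies in `C`. -/
def ConnWalk (G : DAG V) (i j : V) (C : Set V) : Prop :=
  ∃ (n : ℕ) (w : ℕ → V), w 0 = i ∧ w n = j ∧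
    (∀ m, m < n → G.adj (w m) (w (m + 1))) ∧
    (∀ m, 0 < m → m < n →
      ((G.edge (w (m - 1)) (w m) ∧ G.edge (w (m + 1)) (w m)) ↔ w m ∈ C))

/-- d-separation of `A` and `B` given `C` in the DAG `G`. -/
def dsep (G : DAG V) (A B C : Set V) : Prop :=
  ∀ i ∈ A, ∀ j ∈ B, ¬ G.ConnWalk i j C

end DAG

/-- The components of the triple `t` are pairwise disjoint. -/
def DisjTriple {V : Type} (t : Set V × Set V × Set V) : Prop :=
  Disjoint t.1 t.2.1 ∧ Disjoint t.1 t.2.2 ∧ Disjoint t.2.1 t.2.2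

/-- The independence model `J(G)` of a DAG `G`: all triples `(A, B, C)` of pairwise
disjoint sets with `A ⊥_G B | C`.  Two DAGs are Markov equivalent iff their
independence models are equal. -/
def DAG.J {V : Type} (G : DAG V) : Set (Set V × Set V × Set V) :=
  {t | DisjTriple t ∧ G.dsep t.1 t.2.1 t.2.2}

/-- Adjacency in the skeleton `sk(P)` of an independence model `P`: distinct `i, j`
are adjacent iff there is no `C ⊆ V ∖ {i,j}` with `i ⊥⊥ j | C` in `P`. -/
def skP {V : Type} (P : Set (Set V × Set V × Set V)) (i j : V) : Prop :=
  i ≠ j ∧ ¬ ∃ C : Set V, i ∉ C ∧ j ∉ C ∧ (({i} : Set V), ({j} : Set V), C) ∈ P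

/-- A v-configuration `i ∼ k ∼ j` in the undirected graph with adjacency
relation `R`. -/
def VConfig {V : Type} (R : V → V → Prop) (i k j : V) : Prop :=
  i ≠ j ∧ R i k ∧ R j k ∧ ¬ R i j

/-- The v-configuration `i ∼ k ∼ j` is a collider (`i → k ← j`) in `G`. -/
def DAG.IsCollider {V : Type} (G : DAG V) (i k j : V) : Prop :=
  G.edge i k ∧ G.edge j k

/-- The property `V_{𝔫,𝔠}` induced by the local properties `ln` (for non-colliders)
and `lc` (for colliders): `sk(P) = sk(G)` and every v-configuration of `sk(P)` that
is a collider in `G` satisfies `lc`, every one that is a non-collider satisfies `ln`. -/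
def Vnc {V : Type} (ln lc : Set (Set V × Set V × Set V) → V → V → V → Prop)
    (P : Set (Set V × Set V × Set V)) (G : DAG V) : Prop :=
  (∀ i j, skP P i j ↔ G.adj i j) ∧
  ∀ i k j, VConfig (skP P) i k j →
    (G.IsCollider i k j → lc P i k j) ∧ (¬ G.IsCollider i k j → ln P i k j)

namespace VncAux

open Relation

variable {V : Type}

lemma no_self (G : DAG V) {a : V} (h : G.edge a a) : False :=
  G.acyclic a (TransGen.single h)

lemma no_two (G : DAG V) {a b : V} (h1 : G.edge a b) (h2 : G.edge b a) : False :=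
  G.acyclic a (TransGen.head h1 (TransGen.single h2))

abbrev State (V : Type) := V × Option Bool

def EdgeDir (G : DAG V) (a b : V) (e : Bool) : Prop := cond e (G.edge a b) (G.edge b a)

lemma edgedir_true {G : DAG V} {a b : V} : EdgeDir G a b true ↔ G.edge a b := Iff.rfl
lemma edgedir_false {G : DAG V} {a b : V} : EdgeDir G a b false ↔ G.edge b a := Iff.rfl

def Step (G : DAG V) (C : Set V) (s t : State V) : Prop :=
  ∃ e : Bool, t.2 = some e ∧ EdgeDir G s.1 t.1 e ∧
    ∀ d, s.2 = some d → ((d = true ∧ e = false) ↔ s.1 ∈ C)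

def Reach (G : DAG V) (C : Set V) (i : V) (s : State V) : Prop :=
  Relation.ReflTransGen (Step G C) (i, none) s

lemma reach_none {G : DAG V} {C : Set V} {i v : V} (h : Reach G C i (v, none)) : v = i := by
  rcases (Relation.ReflTransGen.cases_tail h) with h | ⟨u, _, hstep⟩
  · exact (Prod.ext_iff.1 h).1
  · rcases hstep with ⟨e, he, _⟩; simp at he

lemma reach_of_walk (G : DAG V) (C : Set V) {i j : V} (h : G.ConnWalk i j C) :
    ∃ od, Reach G C i (j, od) := by
  obtain ⟨n, w, h0, hn, hadj, hint⟩ := h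
  subst h0 hn
  suffices H : ∀ m, m ≤ n → ∃ od, Reach G C (w 0) (w m, od) ∧
      (0 < m → ∃ e, od = some e ∧ (e = true ↔ G.edge (w (m-1)) (w m))) ∧
      (m = 0 → od = none) by
    obtain ⟨od, hr, _, _⟩ := H n le_rfl
    exact ⟨od, hr⟩
  intro m hm
  induction m with
  | zero => exact ⟨none, Relation.ReflTransGen.refl, by omega, fun _ => rfl⟩
  | succ k ih =>
    obtain ⟨od, hr, hpos, hzero⟩ := ih (by omega)
    have hadjk := hadj k (by omega)
    -- choose direction e'
    have hE : ∃ e' : Bool, EdgeDir G (w k) (w (k+1)) e' ∧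
        (e' = true ↔ G.edge (w k) (w (k+1))) := by
      rcases Classical.em (G.edge (w k) (w (k+1))) with he | he
      · exact ⟨true, he, by simp [he]⟩
      · rcases hadjk with h1 | h1
        · exact absurd h1 he
        · exact ⟨false, h1, by simp [he]⟩
    obtain ⟨e', hdir, hiff⟩ := hE
    have hcond : ∀ d, od = some d → ((d = true ∧ e' = false) ↔ w k ∈ C) := by
      intro d hd
      have hk0 : 0 < k := by
        by_contra hk
        have : k = 0 := by omega
        subst this
        rw [hzero rfl] at hd; simp at hd
      obtain ⟨e, he, heiff⟩ := hpos hk0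
      rw [he] at hd
      cases hd
      have hint' := hint k hk0 (by omega)
      constructor
      · rintro ⟨hd1, he1⟩
        refine hint'.1 ⟨heiff.1 hd1, ?_⟩
        rcases hadjk with h1 | h1
        · exfalso; rw [he1] at hiff; simp at hiff; exact hiff h1
        · exact h1
      · intro hc
        obtain ⟨ha, hb⟩ := hint'.2 hc
        refine ⟨heiff.2 ha, ?_⟩
        cases e' with
        | true => exact absurd (hiff.1 rfl) (fun hh => no_two G hh hb)
        | false => rfl
    refine ⟨some e', Relation.ReflTransGen.tail hr ⟨e', rfl, hdir, hcond⟩, ?_, by omega⟩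
    intro _
    exact ⟨e', rfl, by simpa using hiff⟩

lemma walk_of_reach (G : DAG V) (C : Set V) {i : V} {s : State V} (h : Reach G C i s) :
    ∃ (n : ℕ) (w : ℕ → V), w 0 = i ∧ w n = s.1 ∧ (∀ m, m < n → G.adj (w m) (w (m+1))) ∧
      (∀ m, 0 < m → m < n → ((G.edge (w (m-1)) (w m) ∧ G.edge (w (m+1)) (w m)) ↔ w m ∈ C)) ∧
      (s.2 = none → n = 0) ∧
      (∀ e, s.2 = some e → 0 < n ∧ (e = true ↔ G.edge (w (n-1)) (w n))) := by
  induction h with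
  | refl =>
    exact ⟨0, fun _ => i, rfl, rfl, by omega, by omega, fun _ => rfl, by simp⟩
  | tail hab hbc ih =>
    rename_i b c
    obtain ⟨n, w, h0, hb1, hadj, hint, hnone, hsome⟩ := ih
    obtain ⟨e, hce, hdir, hcond⟩ := hbc
    refine ⟨n+1, fun m => if m ≤ n then w m else c.1, ?_, ?_, ?_, ?_, by simp [hce], ?_⟩
    · show (if 0 ≤ n then w 0 else c.1) = i
      rw [if_pos (by omega)]; exact h0
    · show (if n + 1 ≤ n then w (n+1) else c.1) = c.1
      rw [if_neg (by omega)]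
    · intro m hm
      by_cases hmn : m < n
      · show G.adj (if m ≤ n then w m else c.1) (if m + 1 ≤ n then w (m+1) else c.1)
        rw [if_pos (by omega), if_pos (by omega)]
        exact hadj m hmn
      · have hmeq : m = n := by omega
        show G.adj (if m ≤ n then w m else c.1) (if m + 1 ≤ n then w (m+1) else c.1)
        rw [if_pos (by omega), if_neg (by omega), hmeq, hb1]
        cases e with
        | true => exact Or.inl (edgedir_true.1 hdir)
        | false => exact Or.inr (edgedir_false.1 hdir)
    · intro m hm0 hmn
      show (G.edge (if m - 1 ≤ n then w (m-1) else c.1) (if m ≤ n then w m else c.1) ∧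
            G.edge (if m + 1 ≤ n then w (m+1) else c.1) (if m ≤ n then w m else c.1)) ↔
            (if m ≤ n then w m else c.1) ∈ C
      by_cases hmn' : m < n
      · rw [if_pos (by omega : m - 1 ≤ n), if_pos (by omega : m ≤ n), if_pos (by omega : m + 1 ≤ n)]
        exact hint m hm0 hmn'
      · have hmeq : m = n := by omega
        rw [if_pos (by omega : m - 1 ≤ n), if_pos (by omega : m ≤ n),
          if_neg (by omega : ¬ (m + 1 ≤ n)), hmeq]
        rcases hd : b.2 with _ | d
        · exfalso; have := hnone hd; omega
        obtain ⟨hn0, heiff⟩ := hsome d hd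
        have hcd := hcond d hd
        rw [hb1] at heiff ⊢
        constructor
        · rintro ⟨h5, h6⟩
          refine hcd.1 ⟨heiff.2 h5, ?_⟩
          cases e with
          | true => exact absurd (edgedir_true.1 hdir) (fun hh => no_two G hh h6)
          | false => rfl
        · intro hc
          obtain ⟨h5, h6⟩ := hcd.2 hc
          subst h6
          exact ⟨heiff.1 h5, edgedir_false.1 hdir⟩
    · intro e' he'
      rw [hce] at he'
      cases he'
      refine ⟨by omega, ?_⟩
      show e = true ↔ G.edge (if n + 1 - 1 ≤ n then w (n+1-1) else c.1)
          (if n + 1 ≤ n then w (n+1) else c.1)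
      rw [if_pos (by omega : n + 1 - 1 ≤ n), if_neg (by omega : ¬ (n + 1 ≤ n))]
      rw [Nat.add_sub_cancel, hb1]
      cases e with
      | true => simpa using edgedir_true.1 hdir
      | false =>
        simp only [Bool.false_eq_true, false_iff]
        exact fun hh => no_two G hh (edgedir_false.1 hdir)

lemma connwalk_iff_reach (G : DAG V) (C : Set V) (i j : V) :
    G.ConnWalk i j C ↔ ∃ od, Reach G C i (j, od) := by
  constructor
  · exact reach_of_walk G C
  · rintro ⟨od, hr⟩
    obtain ⟨n, w, h0, h1, h2, h3, _, _⟩ := walk_of_reach G C hr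
    exact ⟨n, w, h0, h1, h2, h3⟩

end VncAux

namespace VncAux

open Relation

variable {V : Type}

def Xt (G' : DAG V) (C : Set V) (i x y : V) : Prop :=
  Reach G' C i (x, some true) ∧ Reach G' C i (y, some true)

def Yf (G' : DAG V) (C : Set V) (i y : V) : Prop := Reach G' C i (y, some false)

def Xf (G' : DAG V) (C : Set V) (i x y : V) : Prop :=
  Reach G' C i (x, some false) ∨
  (y ∉ C ∧ Reach G' C i (y, some false) ∧ Reach G' C i (x, some true)) ∨
  (y ∈ C ∧ Reach G' C i (x, some true) ∧ Reach G' C i (y, some true)) ∨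
  (Reach G' C i (y, none) ∧ Reach G' C i (x, some true)) ∨
  (x ∉ C ∧ Reach G' C i (x, none))

def Yt (G' : DAG V) (C : Set V) (i x y : V) : Prop :=
  (Reach G' C i (x, some true) ∧ Reach G' C i (y, some true)) ∨
  (x ∉ C ∧ Reach G' C i (x, some false) ∧ Reach G' C i (y, some false)) ∨
  (y ∉ C ∧ Reach G' C i (x, some true) ∧ Reach G' C i (y, some false)) ∨
  (x ∉ C ∧ Reach G' C i (x, none)) ∨
  (Reach G' C i (y, none) ∧ Reach G' C i (x, some true) ∧ x ∉ C)

open Classical in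
noncomputable def Psi (G' : DAG V) (C : Set V) (i x y : V) : State V → Prop
  | (v, none) => Reach G' C i (v, none)
  | (v, some d) =>
    if v = x then (if d then Xt G' C i x y else Xf G' C i x y)
    else if v = y then (if d then Yt G' C i x y else Yf G' C i y)
    else Reach G' C i (v, some d)

section PsiLemmas

variable {G' : DAG V} {C : Set V} {i x y v : V} {d : Bool}

lemma psi_none : Psi G' C i x y (v, none) ↔ Reach G' C i (v, none) := by simp [Psi]

lemma psi_x_t : Psi G' C i x y (x, some true) ↔ Xt G' C i x y := by simp [Psi]

lemma psi_x_f : Psi G' C i x y (x, some false) ↔ Xf G' C i x y := by simp [Psi]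

lemma psi_y_t (hne : y ≠ x) : Psi G' C i x y (y, some true) ↔ Yt G' C i x y := by
  simp [Psi, hne]

lemma psi_y_f (hne : y ≠ x) : Psi G' C i x y (y, some false) ↔ Yf G' C i y := by
  simp [Psi, hne]

lemma psi_other (hvx : v ≠ x) (hvy : v ≠ y) :
    Psi G' C i x y (v, some d) ↔ Reach G' C i (v, some d) := by
  simp [Psi, hvx, hvy]

end PsiLemmas

section Reverse

variable {G G' : DAG V} {C : Set V} {i x y : V}

lemma step_none {v u : V} {e : Bool} (h : Reach G' C i (v, none))
    (hd : EdgeDir G' v u e) : Reach G' C i (u, some e) :=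
  ReflTransGen.tail h ⟨e, rfl, hd, fun _ hd' => by simp at hd'⟩

lemma step_some {v u : V} {d e : Bool} (h : Reach G' C i (v, some d))
    (hd : EdgeDir G' v u e) (hc : (d = true ∧ e = false) ↔ v ∈ C) :
    Reach G' C i (u, some e) :=
  ReflTransGen.tail h ⟨e, rfl, hd, fun dd hdd => by injection hdd with h'; subst h'; exact hc⟩

variable (hxy : G.edge x y) (h'yx : G'.edge y x)
  (hE : ∀ a b, ¬(a = x ∧ b = y) → ¬(a = y ∧ b = x) → (G.edge a b ↔ G'.edge a b))
  (hcov : ∀ z, G.edge z y ↔ (G.edge z x ∨ z = x))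
  (hiC : i ∉ C)

include hxy h'yx hE hcov hiC in
lemma psi_step {v u : V} {od : Option Bool} {e : Bool}
    (hpsi : Psi G' C i x y (v, od))
    (hdir : EdgeDir G v u e)
    (hcond : ∀ d, od = some d → ((d = true ∧ e = false) ↔ v ∈ C)) :
    Psi G' C i x y (u, some e) := by
  have hne : x ≠ y := fun h => no_self G (h ▸ hxy)
  have hnyx : ¬ G.edge y x := fun h => no_two G hxy h
  have t1 : ∀ z, z ≠ y → (G.edge z x ↔ G'.edge z x) := fun z hz =>
    hE z x (fun h => hne h.2) (fun h => hz h.1)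
  have t2 : ∀ z, z ≠ y → (G.edge x z ↔ G'.edge x z) := fun z hz =>
    hE x z (fun h => hz h.2) (fun h => hne h.1)
  have t3 : ∀ z, z ≠ x → (G.edge z y ↔ G'.edge z y) := fun z hz =>
    hE z y (fun h => hz h.1) (fun h => hne h.2.symm)
  have t4 : ∀ z, z ≠ x → (G.edge y z ↔ G'.edge y z) := fun z hz =>
    hE y z (fun h => hne.symm h.1) (fun h => hz h.2)
  have e'px : ∀ {p}, G.edge p x → G'.edge p x := fun {p} hp =>
    (t1 p (fun h => hnyx (h ▸ hp))).1 hp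
  have e'py : ∀ {p}, G.edge p x → G'.edge p y := fun {p} hp =>
    (t3 p (fun h => no_self G (h ▸ hp))).1 ((hcov p).2 (Or.inl hp))
  have e'xc : ∀ {c}, G.edge x c → c ≠ y → G'.edge x c := fun {c} hc hcy =>
    (t2 c hcy).1 hc
  have e'yc : ∀ {c}, G.edge y c → G'.edge y c := fun {c} hc =>
    (t4 c (fun h => hnyx (h ▸ hc))).1 hc
  have e'uy : ∀ {z}, G.edge z y → z ≠ x → G'.edge z y := fun {z} hz hzx =>
    (t3 z hzx).1 hz
  have pa_y : ∀ {z}, G.edge z y → z ≠ x → G.edge z x := fun {z} hz hzx => by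
    rcases (hcov z).1 hz with h | h
    · exact h
    · exact absurd h hzx
  by_cases hux : u = x
  · subst hux
    cases e with
    | true =>
      have hvpx : G.edge v u := hdir
      have hvnx : v ≠ u := fun h => no_self G (h ▸ hvpx)
      have hvny : v ≠ y := fun h => hnyx (h ▸ hvpx)
      have e1 : EdgeDir G' v u true := e'px hvpx
      have e2 : EdgeDir G' v y true := e'py hvpx
      refine psi_x_t.2 ?_
      rcases od with _ | d
      · have hr := psi_none.1 hpsi
        exact ⟨step_none hr e1, step_none hr e2⟩
      · have hr := (psi_other hvnx hvny).1 hpsi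
        have hcd := hcond d rfl
        exact ⟨step_some hr e1 hcd, step_some hr e2 hcd⟩
    | false =>
      have hxv : G.edge u v := hdir
      refine psi_x_f.2 ?_
      by_cases hvy : v = y
      · subst hvy
        rcases od with _ | d
        · have hr := psi_none.1 hpsi
          exact Or.inr (Or.inr (Or.inr (Or.inl ⟨hr, step_none hr (show EdgeDir G' v u true from h'yx)⟩)))
        · have hcd := hcond d rfl
          cases d with
          | true =>
            have hyC : v ∈ C := hcd.1 ⟨rfl, rfl⟩
            rcases (psi_y_t hne.symm).1 hpsi with ⟨h1, h2⟩ | ⟨hxC, h1, h2⟩ | ⟨hyC', h1, h2⟩ | ⟨hxC, h1⟩ | ⟨h1, h2, hxC⟩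
            · exact Or.inr (Or.inr (Or.inl ⟨hyC, h1, h2⟩))
            · exact Or.inl h1
            · exact absurd hyC hyC'
            · exact Or.inr (Or.inr (Or.inr (Or.inr ⟨hxC, h1⟩)))
            · exact Or.inr (Or.inr (Or.inr (Or.inl ⟨h1, h2⟩)))
          | false =>
            have hyC : v ∉ C := fun hc => by simpa using hcd.2 hc
            have h1 := (psi_y_f hne.symm).1 hpsi
            exact Or.inr (Or.inl ⟨hyC, h1,
              step_some h1 (show EdgeDir G' v u true from h'yx) (by simp [hyC])⟩)
      · have hvnx : v ≠ u := fun h => no_self G (h ▸ hxv)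
        have e1 : EdgeDir G' v u false := e'xc hxv hvy
        rcases od with _ | d
        · exact Or.inl (step_none (psi_none.1 hpsi) e1)
        · exact Or.inl (step_some ((psi_other hvnx hvy).1 hpsi) e1 (hcond d rfl))
  · by_cases huy : u = y
    · subst huy
      cases e with
      | true =>
        have hvy : G.edge v u := hdir
        refine (psi_y_t hne.symm).2 ?_
        by_cases hvx : v = x
        · subst hvx
          rcases od with _ | d
          · have hr := psi_none.1 hpsi
            have hxi : v = i := reach_none hr
            have hxC : v ∉ C := hxi ▸ hiC
            exact Or.inr (Or.inr (Or.inr (Or.inl ⟨hxC, hr⟩)))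
          · have hcd := hcond d rfl
            have hxC : v ∉ C := fun hc => by simpa using hcd.2 hc
            cases d with
            | true =>
              exact Or.inl (psi_x_t.1 hpsi)
            | false =>
              rcases psi_x_f.1 hpsi with h1 | ⟨hyC, h1, h2⟩ | ⟨hyC, h1, h2⟩ | ⟨h1, h2⟩ | ⟨hxC2, h1⟩
              · exact Or.inr (Or.inl ⟨hxC, h1,
                  step_some h1 (show EdgeDir G' v u false from h'yx) (by simp [hxC])⟩)
              · exact Or.inr (Or.inr (Or.inl ⟨hyC, h2, h1⟩))
              · exact Or.inl ⟨h1, h2⟩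
              · exact Or.inr (Or.inr (Or.inr (Or.inr ⟨h1, h2, hxC⟩)))
              · exact Or.inr (Or.inr (Or.inr (Or.inl ⟨hxC2, h1⟩)))
        · have hvny : v ≠ u := fun h => no_self G (h ▸ hvy)
          have hpx : G.edge v x := pa_y hvy hvx
          have e1 : EdgeDir G' v x true := e'px hpx
          have e2 : EdgeDir G' v u true := e'uy hvy hvx
          rcases od with _ | d
          · have hr := psi_none.1 hpsi
            exact Or.inl ⟨step_none hr e1, step_none hr e2⟩
          · have hr := (psi_other hvx hvny).1 hpsi
            have hcd := hcond d rfl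
            exact Or.inl ⟨step_some hr e1 hcd, step_some hr e2 hcd⟩
      | false =>
        have hyv : G.edge u v := hdir
        have hvnx : v ≠ x := fun h => hnyx (h ▸ hyv)
        have hvny : v ≠ u := fun h => no_self G (h ▸ hyv)
        refine (psi_y_f hne.symm).2 ?_
        rcases od with _ | d
        · exact step_none (psi_none.1 hpsi) (show EdgeDir G' v u false from e'yc hyv)
        · exact step_some ((psi_other hvnx hvny).1 hpsi)
            (show EdgeDir G' v u false from e'yc hyv) (hcond d rfl)
    · refine (psi_other hux huy).2 ?_
      by_cases hvx : v = x
      · subst hvx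
        cases e with
        | true =>
          have hxu : G.edge v u := hdir
          have e1 : EdgeDir G' v u true := e'xc hxu huy
          rcases od with _ | d
          · exact step_none (psi_none.1 hpsi) e1
          · have hcd := hcond d rfl
            have hxC : v ∉ C := fun hc => by simpa using hcd.2 hc
            cases d with
            | true => exact step_some (psi_x_t.1 hpsi).1 e1 (by simp [hxC])
            | false =>
              rcases psi_x_f.1 hpsi with h1 | ⟨hyC, h1, h2⟩ | ⟨hyC, h1, h2⟩ | ⟨h1, h2⟩ | ⟨hxC2, h1⟩
              · exact step_some h1 e1 (by simp [hxC])
              · exact step_some h2 e1 (by simp [hxC])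
              · exact step_some h1 e1 (by simp [hxC])
              · exact step_some h2 e1 (by simp [hxC])
              · exact step_none h1 e1
        | false =>
          have hupx : G.edge u v := hdir
          have e1 : EdgeDir G' v u false := e'px hupx
          have e2y : G'.edge u y := e'py hupx
          rcases od with _ | d
          · exact step_none (psi_none.1 hpsi) e1
          · have hcd := hcond d rfl
            cases d with
            | true =>
              have hxC : v ∈ C := hcd.1 ⟨rfl, rfl⟩
              exact step_some (psi_x_t.1 hpsi).1 e1 (by simp [hxC])
            | false =>
              have hxC : v ∉ C := fun hc => by simpa using hcd.2 hc
              rcases psi_x_f.1 hpsi with h1 | ⟨hyC, h1, h2⟩ | ⟨hyC, h1, h2⟩ | ⟨h1, h2⟩ | ⟨hxC2, h1⟩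
              · exact step_some h1 e1 (by simp [hxC])
              · exact step_some h1 (show EdgeDir G' y u false from e2y) (by simp [hyC])
              · exact step_some h2 (show EdgeDir G' y u false from e2y) (by simp [hyC])
              · exact step_none h1 (show EdgeDir G' y u false from e2y)
              · exact step_none h1 e1
      · by_cases hvy : v = y
        · subst hvy
          cases e with
          | true =>
            have hyu : G.edge v u := hdir
            have e1 : EdgeDir G' v u true := e'yc hyu
            rcases od with _ | d
            · exact step_none (psi_none.1 hpsi) e1
            · have hcd := hcond d rfl
              have hyC : v ∉ C := fun hc => by simpa using hcd.2 hc
              cases d with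
              | true =>
                rcases (psi_y_t hne.symm).1 hpsi with ⟨h1, h2⟩ | ⟨hxC, h1, h2⟩ | ⟨hyC2, h1, h2⟩ | ⟨hxC, h1⟩ | ⟨h1, h2, hxC⟩
                · exact step_some h2 e1 (by simp [hyC])
                · exact step_some h2 e1 (by simp [hyC])
                · exact step_some h2 e1 (by simp [hyC])
                · exact step_some (step_none h1 (show EdgeDir G' x v false from h'yx)) e1
                    (by simp [hyC])
                · exact step_none h1 e1
              | false =>
                exact step_some ((psi_y_f hne.symm).1 hpsi) e1 (by simp [hyC])
          | false =>
            have huy2 : G.edge u v := hdir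
            have e1 : EdgeDir G' v u false := e'uy huy2 hux
            have e2 : EdgeDir G' x u false := e'px (pa_y huy2 hux)
            rcases od with _ | d
            · exact step_none (psi_none.1 hpsi) e1
            · have hcd := hcond d rfl
              cases d with
              | true =>
                have hyC : v ∈ C := hcd.1 ⟨rfl, rfl⟩
                rcases (psi_y_t hne.symm).1 hpsi with ⟨h1, h2⟩ | ⟨hxC, h1, h2⟩ | ⟨hyC2, h1, h2⟩ | ⟨hxC, h1⟩ | ⟨h1, h2, hxC⟩
                · exact step_some h2 e1 (by simp [hyC])
                · exact step_some h1 e2 (by simp [hxC])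
                · exact absurd hyC hyC2
                · exact step_none h1 e2
                · exact step_none h1 e1
              | false =>
                have hyC : v ∉ C := fun hc => by simpa using hcd.2 hc
                exact step_some ((psi_y_f hne.symm).1 hpsi) e1 (by simp [hyC])
        · cases e with
          | true =>
            have e1 : EdgeDir G' v u true :=
              (hE v u (fun h => hvx h.1) (fun h => hvy h.1)).1 hdir
            rcases od with _ | d
            · exact step_none (psi_none.1 hpsi) e1
            · exact step_some ((psi_other hvx hvy).1 hpsi) e1 (hcond d rfl)
          | false =>
            have e1 : EdgeDir G' v u false :=
              (hE u v (fun h => hux h.1) (fun h => huy h.1)).1 hdir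
            rcases od with _ | d
            · exact step_none (psi_none.1 hpsi) e1
            · exact step_some ((psi_other hvx hvy).1 hpsi) e1 (hcond d rfl)

include hxy h'yx hE hcov hiC in
lemma psi_of_reach : ∀ s, Reach G C i s → Psi G' C i x y s := by
  intro s hs
  induction hs with
  | refl => exact psi_none.2 ReflTransGen.refl
  | tail hab hbc ih =>
    rename_i b c
    obtain ⟨u, oe⟩ := c
    obtain ⟨e, hoe, hdir, hcond⟩ := hbc
    simp only at hoe
    subst hoe
    obtain ⟨v, od⟩ := b
    exact psi_step hxy h'yx hE hcov hiC ih hdir hcond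

include hxy h'yx hE hcov hiC in
lemma connwalk_reverse {j : V} (hcw : G.ConnWalk i j C) : G'.ConnWalk i j C := by
  obtain ⟨od, hr⟩ := (connwalk_iff_reach G C i j).1 hcw
  have hpsi := psi_of_reach hxy h'yx hE hcov hiC (j, od) hr
  have hne : x ≠ y := fun h => no_self G (h ▸ hxy)
  refine (connwalk_iff_reach G' C i j).2 ?_
  by_cases hjx : j = x
  · subst hjx
    rcases od with _ | d
    · exact ⟨none, psi_none.1 hpsi⟩
    cases d with
    | true => exact ⟨some true, (psi_x_t.1 hpsi).1⟩
    | false =>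
      rcases psi_x_f.1 hpsi with h1 | ⟨_, _, h2⟩ | ⟨_, h2, _⟩ | ⟨_, h2⟩ | ⟨_, h1⟩
      · exact ⟨_, h1⟩
      · exact ⟨_, h2⟩
      · exact ⟨_, h2⟩
      · exact ⟨_, h2⟩
      · exact ⟨_, h1⟩
  · by_cases hjy : j = y
    · subst hjy
      rcases od with _ | d
      · exact ⟨none, psi_none.1 hpsi⟩
      cases d with
      | true =>
        rcases (psi_y_t hne.symm).1 hpsi with ⟨_, h2⟩ | ⟨_, _, h2⟩ | ⟨_, _, h2⟩ | ⟨_, h1⟩ | ⟨h1, _, _⟩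
        · exact ⟨_, h2⟩
        · exact ⟨_, h2⟩
        · exact ⟨_, h2⟩
        · exact ⟨some false, step_none h1 (show EdgeDir G' x j false from h'yx)⟩
        · exact ⟨_, h1⟩
      | false => exact ⟨_, (psi_y_f hne.symm).1 hpsi⟩
    · rcases od with _ | d
      · exact ⟨none, psi_none.1 hpsi⟩
      · exact ⟨some d, (psi_other hjx hjy).1 hpsi⟩

end Reverse

end VncAux

namespace VncAux

open Relation

variable {V : Type}

def revEdge (G : DAG V) (x y : V) (a b : V) : Prop :=
  (G.edge a b ∧ ¬(a = x ∧ b = y)) ∨ (a = y ∧ b = x)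

lemma rev_acyclic (G : DAG V) {x y : V} (hxy : G.edge x y)
    (hcov : ∀ z, G.edge z y ↔ (G.edge z x ∨ z = x)) :
    ∀ v, ¬ Relation.TransGen (revEdge G x y) v v := by
  intro v hv
  set r'' : V → V → Prop := fun a b => G.edge a b ∧ ¬(a = x ∧ b = y) with hr''
  have hdec : ∀ a b, TransGen (revEdge G x y) a b →
      TransGen r'' a b ∨ (ReflTransGen r'' a y ∧ ReflTransGen r'' x b) := by
    intro a b hab
    induction hab with
    | single h =>
      rcases h with h | ⟨h1, h2⟩
      · exact Or.inl (TransGen.single h)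
      · subst h1; subst h2; exact Or.inr ⟨ReflTransGen.refl, ReflTransGen.refl⟩
    | tail hab hbc ih =>
      rcases hbc with h | ⟨h1, h2⟩
      · rcases ih with ih | ⟨ih1, ih2⟩
        · exact Or.inl (TransGen.tail ih h)
        · exact Or.inr ⟨ih1, ReflTransGen.tail ih2 h⟩
      · subst h1; subst h2
        rcases ih with ih | ⟨ih1, _⟩
        · exact Or.inr ⟨ih.to_reflTransGen, ReflTransGen.refl⟩
        · exact Or.inr ⟨ih1, ReflTransGen.refl⟩
  have hmono : ∀ a b, TransGen r'' a b → TransGen G.edge a b :=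
    fun a b h => TransGen.mono (r := r'') (p := G.edge) (fun _ _ hh => hh.1) a b h
  rcases hdec v v hv with h | ⟨h1, h2⟩
  · exact G.acyclic v (hmono _ _ h)
  · have hxne : x ≠ y := fun h => no_self G (h ▸ hxy)
    have hxyR : ReflTransGen r'' x y := ReflTransGen.trans h2 h1
    rcases hxyR.cases_head with h | ⟨w, hxw, hwy⟩
    · exact hxne h
    · have hGxw : G.edge x w := hxw.1
      have hwny : w ≠ y := fun h => hxw.2 ⟨rfl, h⟩
      have hwyG : ReflTransGen G.edge w y :=
        ReflTransGen.mono (r := r'') (p := G.edge) (fun _ _ hh => hh.1) w y hwy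
      rcases hwyG.cases_head with h | ⟨w2, hww2, hw2y⟩
      · exact hwny h
      · have htg : TransGen G.edge w y := TransGen.head' hww2 hw2y
        rcases (TransGen.tail'_iff).1 htg with ⟨uu, hwu, huy⟩
        rcases (hcov uu).1 huy with h | h
        · exact G.acyclic x (TransGen.tail (TransGen.head' hGxw hwu) h)
        · subst h
          exact G.acyclic uu (TransGen.head' hGxw hwu)

def revDAG (G : DAG V) (x y : V) (hxy : G.edge x y)
    (hcov : ∀ z, G.edge z y ↔ (G.edge z x ∨ z = x)) : DAG V :=
  ⟨revEdge G x y, rev_acyclic G hxy hcov⟩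

lemma J_eq_of_connwalk_iff (G G' : DAG V)
    (h : ∀ i j (C : Set V), i ∉ C → (G.ConnWalk i j C ↔ G'.ConnWalk i j C)) :
    DAG.J G = DAG.J G' := by
  ext t
  simp only [DAG.J, Set.mem_setOf_eq]
  constructor
  · rintro ⟨hd, hsep⟩
    refine ⟨hd, fun i hi j hj hcw => hsep i hi j hj ?_⟩
    have hiC : i ∉ t.2.2 := fun hc => (Set.disjoint_left.1 hd.2.1) hi hc
    exact (h i j t.2.2 hiC).2 hcw
  · rintro ⟨hd, hsep⟩
    refine ⟨hd, fun i hi j hj hcw => hsep i hi j hj ?_⟩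
    have hiC : i ∉ t.2.2 := fun hc => (Set.disjoint_left.1 hd.2.1) hi hc
    exact (h i j t.2.2 hiC).1 hcw

lemma J_rev_eq (G : DAG V) {x y : V} (hxy : G.edge x y)
    (hcov : ∀ z, G.edge z y ↔ (G.edge z x ∨ z = x)) :
    DAG.J G = DAG.J (revDAG G x y hxy hcov) := by
  set G' := revDAG G x y hxy hcov with hG'
  have hne : x ≠ y := fun h => no_self G (h ▸ hxy)
  have h'yx : G'.edge y x := Or.inr ⟨rfl, rfl⟩
  have hE : ∀ a b, ¬(a = x ∧ b = y) → ¬(a = y ∧ b = x) → (G.edge a b ↔ G'.edge a b) := by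
    intro a b h1 h2
    constructor
    · intro h; exact Or.inl ⟨h, h1⟩
    · rintro (⟨h, _⟩ | hh)
      · exact h
      · exact absurd hh h2
  have hE' : ∀ a b, ¬(a = y ∧ b = x) → ¬(a = x ∧ b = y) → (G'.edge a b ↔ G.edge a b) :=
    fun a b h1 h2 => (hE a b h2 h1).symm
  have hcov' : ∀ z, G'.edge z x ↔ (G'.edge z y ∨ z = y) := by
    intro z
    constructor
    · rintro (⟨h, _⟩ | ⟨h, _⟩)
      · exact Or.inl (Or.inl ⟨(hcov z).2 (Or.inl h), fun hh => no_self G (hh.1 ▸ h)⟩)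
      · exact Or.inr h
    · rintro (h | h)
      · rcases h with ⟨h, hc⟩ | ⟨h1, h2⟩
        · have hzx : z ≠ x := fun hh => hc ⟨hh, rfl⟩
          rcases (hcov z).1 h with h' | h'
          · exact Or.inl ⟨h', fun hh => hne hh.2⟩
          · exact absurd h' hzx
        · exact absurd h2 hne.symm
      · exact Or.inr ⟨h, rfl⟩
  apply J_eq_of_connwalk_iff
  intro i j C hiC
  exact ⟨fun hw => connwalk_reverse hxy h'yx hE hcov hiC hw,
         fun hw => connwalk_reverse h'yx hxy hE' hcov' hiC hw⟩

lemma rev_adj (G : DAG V) {x y : V} (hxy : G.edge x y)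
    (hcov : ∀ z, G.edge z y ↔ (G.edge z x ∨ z = x)) (a b : V) :
    (revDAG G x y hxy hcov).adj a b ↔ G.adj a b := by
  show (revEdge G x y a b ∨ revEdge G x y b a) ↔ _
  unfold revEdge
  constructor
  · rintro ((⟨h, _⟩ | ⟨h1, h2⟩) | (⟨h, _⟩ | ⟨h1, h2⟩))
    · exact Or.inl h
    · subst h1; subst h2; exact Or.inr hxy
    · exact Or.inr h
    · subst h1; subst h2; exact Or.inl hxy
  · rintro (h | h)
    · by_cases hc : a = x ∧ b = y
      · exact Or.inr (Or.inr ⟨hc.2, hc.1⟩)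
      · exact Or.inl (Or.inl ⟨h, hc⟩)
    · by_cases hc : b = x ∧ a = y
      · exact Or.inl (Or.inr ⟨hc.2, hc.1⟩)
      · exact Or.inr (Or.inl ⟨h, hc⟩)

lemma rev_collider (G : DAG V) {x y : V} (hxy : G.edge x y)
    (hcov : ∀ z, G.edge z y ↔ (G.edge z x ∨ z = x)) (a k b : V)
    (hab : a ≠ b) (hnab : ¬ G.adj a b) :
    ((revDAG G x y hxy hcov).IsCollider a k b ↔ G.IsCollider a k b) := by
  have hne : x ≠ y := fun h => no_self G (h ▸ hxy)
  show (revEdge G x y a k ∧ revEdge G x y b k) ↔ (G.edge a k ∧ G.edge b k)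
  by_cases hky : k = y
  · subst hky
    have hred : ∀ z, revEdge G x k z k ↔ (G.edge z k ∧ z ≠ x) := by
      intro z
      unfold revEdge
      constructor
      · rintro (⟨h1, h2⟩ | ⟨h1, h2⟩)
        · exact ⟨h1, fun hh => h2 ⟨hh, rfl⟩⟩
        · exact absurd h2.symm hne
      · rintro ⟨h1, h2⟩
        exact Or.inl ⟨h1, fun hh => h2 hh.1⟩
    rw [hred, hred]
    constructor
    · rintro ⟨⟨h1, _⟩, ⟨h2, _⟩⟩
      exact ⟨h1, h2⟩
    · rintro ⟨h1, h2⟩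
      refine ⟨⟨h1, ?_⟩, ⟨h2, ?_⟩⟩
      · rintro rfl
        have hbx : G.edge b a := by
          rcases (hcov b).1 h2 with h | h
          · exact h
          · exact absurd h.symm hab
        exact hnab (Or.inr hbx)
      · rintro rfl
        have hax : G.edge a b := by
          rcases (hcov a).1 h1 with h | h
          · exact h
          · exact absurd h hab
        exact hnab (Or.inl hax)
  · by_cases hkx : k = x
    · subst hkx
      have hred : ∀ z, revEdge G k y z k ↔ (G.edge z k ∨ z = y) := by
        intro z
        unfold revEdge
        constructor
        · rintro (⟨h1, _⟩ | ⟨h1, _⟩)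
          · exact Or.inl h1
          · exact Or.inr h1
        · rintro (h1 | h1)
          · exact Or.inl ⟨h1, fun hh => hne hh.2⟩
          · exact Or.inr ⟨h1, rfl⟩
      rw [hred, hred]
      constructor
      · rintro ⟨h1 | h1, h2 | h2⟩
        · exact ⟨h1, h2⟩
        · subst h2
          exact absurd (Or.inl ((hcov a).2 (Or.inl h1))) hnab
        · subst h1
          exact absurd (Or.inr ((hcov b).2 (Or.inl h2))) hnab
        · subst h1; exact absurd h2.symm hab
      · rintro ⟨h1, h2⟩
        exact ⟨Or.inl h1, Or.inl h2⟩
    · have hred : ∀ z, revEdge G x y z k ↔ G.edge z k := by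
        intro z
        unfold revEdge
        constructor
        · rintro (⟨h1, _⟩ | ⟨_, h2⟩)
          · exact h1
          · exact absurd h2 hkx
        · intro h1
          exact Or.inl ⟨h1, fun hh => hky hh.2⟩
      rw [hred, hred]

lemma rev_D (G G₂ : DAG V) {x y : V} (hxy : G.edge x y)
    (hcov : ∀ z, G.edge z y ↔ (G.edge z x ∨ z = x)) (h2yx : G₂.edge y x) :
    {p : V × V | (revDAG G x y hxy hcov).edge p.1 p.2 ∧ G₂.edge p.2 p.1}
      = {p : V × V | G.edge p.1 p.2 ∧ G₂.edge p.2 p.1} \ {(x, y)} := by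
  ext ⟨a, b⟩
  simp only [Set.mem_setOf_eq, Set.mem_diff, Set.mem_singleton_iff, Prod.mk.injEq]
  constructor
  · rintro ⟨(⟨h1, h2⟩ | ⟨h1, h2⟩), h3⟩
    · exact ⟨⟨h1, h3⟩, fun hh => h2 ⟨hh.1, hh.2⟩⟩
    · subst h1; subst h2
      exact absurd h3 (fun hh => no_two G₂ h2yx hh)
  · rintro ⟨⟨h1, h3⟩, hne'⟩
    exact ⟨Or.inl ⟨h1, fun hh => hne' ⟨hh.1, hh.2⟩⟩, h3⟩

lemma markov_equiv [Fintype V] (G₂ : DAG V) :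
    ∀ n (G : DAG V),
    (∀ a b, G.adj a b ↔ G₂.adj a b) →
    (∀ a k b, a ≠ b → G.adj a k → G.adj b k → ¬ G.adj a b →
      (G.IsCollider a k b ↔ G₂.IsCollider a k b)) →
    Set.ncard {p : V × V | G.edge p.1 p.2 ∧ G₂.edge p.2 p.1} = n →
    DAG.J G = DAG.J G₂ := by
  intro n
  induction n using Nat.strong_induction_on with
  | _ n ih =>
    intro G hadj hcol hcard
    by_cases hD : {p : V × V | G.edge p.1 p.2 ∧ G₂.edge p.2 p.1} = ∅
    · have hedge : ∀ a b, G.edge a b ↔ G₂.edge a b := by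
        intro a b
        constructor
        · intro hgab
          rcases (hadj a b).1 (Or.inl hgab) with h2 | h2
          · exact h2
          · exact absurd ⟨hgab, h2⟩ (Set.eq_empty_iff_forall_notMem.1 hD (a, b))
        · intro hgab
          by_contra hn
          rcases (hadj a b).2 (Or.inl hgab) with h2 | h2
          · exact hn h2
          · exact (Set.eq_empty_iff_forall_notMem.1 hD (b, a)) ⟨h2, hgab⟩
      have hGeq : G = G₂ := by
        cases G with
        | mk e ac =>
          cases G₂ with
          | mk e2 ac2 =>
            have he : e = e2 := by
              funext a b
              exact propext (hedge a b)
            subst he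
            rfl
      rw [hGeq]
    · have hDne : {p : V × V | G.edge p.1 p.2 ∧ G₂.edge p.2 p.1}.Nonempty :=
        Set.nonempty_iff_ne_empty.2 hD
      haveI ht1 : IsTrans V (fun a b => TransGen G.edge a b) :=
        ⟨fun _ _ _ h1 h2 => TransGen.trans h1 h2⟩
      haveI ht2 : IsIrrefl V (fun a b => TransGen G.edge a b) :=
        ⟨fun a hcy => G.acyclic a hcy⟩
      have wf : WellFounded (fun a b : V => TransGen G.edge a b) :=
        Finite.wellFounded_of_trans_of_irrefl _
      haveI ht3 : IsTrans V (fun a b => TransGen G.edge b a) :=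
        ⟨fun _ _ _ h1 h2 => TransGen.trans h2 h1⟩
      haveI ht4 : IsIrrefl V (fun a b => TransGen G.edge b a) :=
        ⟨fun a hcy => G.acyclic a hcy⟩
      have wf' : WellFounded (fun a b : V => TransGen G.edge b a) :=
        Finite.wellFounded_of_trans_of_irrefl _
      set T := {b | ∃ a, G.edge a b ∧ G₂.edge b a} with hT
      have hTne : T.Nonempty := by
        obtain ⟨p, hp⟩ := hDne
        exact ⟨p.2, p.1, hp.1, hp.2⟩
      set yy := wf.min T hTne with hyy
      have hyT : yy ∈ T := wf.min_mem T hTne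
      have hymin : ∀ b ∈ T, ¬ TransGen G.edge b yy := fun b hb => wf.not_lt_min T hb
      set S := {a | G.edge a yy ∧ G₂.edge yy a} with hS
      have hSne : S.Nonempty := hyT
      set xx := wf'.min S hSne with hxx
      have hxS : xx ∈ S := wf'.min_mem S hSne
      have hxmax : ∀ a ∈ S, ¬ TransGen G.edge xx a := fun a ha => wf'.not_lt_min S ha
      have hxy : G.edge xx yy := hxS.1
      have h2yx : G₂.edge yy xx := hxS.2
      have hcov : ∀ z, G.edge z yy ↔ (G.edge z xx ∨ z = xx) := by
        intro z
        constructor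
        · intro hz
          by_cases hzx : z = xx
          · exact Or.inr hzx
          left
          by_contra hzx2
          by_cases hadjzx : G.adj z xx
          · have hxxz : G.edge xx z := hadjzx.resolve_left hzx2
            have hadj2 : G₂.adj z yy := (hadj z yy).1 (Or.inl hz)
            rcases hadj2 with h2zy | h2yz
            · have hadj2' : G₂.adj xx z := (hadj xx z).1 (Or.inl hxxz)
              rcases hadj2' with h2xz | h2zx
              · exact G₂.acyclic yy
                  (TransGen.tail (TransGen.tail (TransGen.single h2yx) h2xz) h2zy)
              · exact hymin z ⟨xx, hxxz, h2zx⟩ (TransGen.single hz)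
            · exact hxmax z ⟨hz, h2yz⟩ (TransGen.single hxxz)
          · have hc := (hcol z yy xx hzx (Or.inl hz) (Or.inl hxy) hadjzx).1 ⟨hz, hxy⟩
            exact no_two G₂ hc.2 h2yx
        · intro hz
          rcases hz with hz | hz
          · by_contra hzy
            have hzny : z ≠ yy := fun hh => no_two G hxy (hh ▸ hz)
            by_cases hadjzy : G.adj z yy
            · rcases hadjzy with h1 | h1
              · exact hzy h1
              · exact G.acyclic z
                  (TransGen.tail (TransGen.tail (TransGen.single hz) hxy) h1)
            · have hiff := hcol z xx yy hzny (Or.inl hz) (Or.inr hxy) hadjzy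
              have hncol : ¬ G.IsCollider z xx yy := fun hc => no_two G hxy hc.2
              have hncol2 : ¬ G₂.IsCollider z xx yy := fun hc => hncol (hiff.2 hc)
              have hadj2 : G₂.adj z xx := (hadj z xx).1 (Or.inl hz)
              have h2xz : G₂.edge xx z := by
                rcases hadj2 with hh | hh
                · exact absurd ⟨hh, h2yx⟩ hncol2
                · exact hh
              exact hymin xx ⟨z, hz, h2xz⟩ (TransGen.single hxy)
          · subst hz; exact hxy
      -- the reversal
      set G' := revDAG G xx yy hxy hcov with hG'
      have hJ : DAG.J G = DAG.J G' := J_rev_eq G hxy hcov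
      have hadj' : ∀ a b, G'.adj a b ↔ G₂.adj a b := fun a b =>
        (rev_adj G hxy hcov a b).trans (hadj a b)
      have hcol' : ∀ a k b, a ≠ b → G'.adj a k → G'.adj b k → ¬ G'.adj a b →
          (G'.IsCollider a k b ↔ G₂.IsCollider a k b) := by
        intro a k b hab hak hbk hnab
        have hak' : G.adj a k := (rev_adj G hxy hcov a k).1 hak
        have hbk' : G.adj b k := (rev_adj G hxy hcov b k).1 hbk
        have hnab' : ¬ G.adj a b := fun hh => hnab ((rev_adj G hxy hcov a b).2 hh)
        exact (rev_collider G hxy hcov a k b hab hnab').trans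
          (hcol a k b hab hak' hbk' hnab')
      have hmem : ((xx, yy) : V × V) ∈ {p : V × V | G.edge p.1 p.2 ∧ G₂.edge p.2 p.1} :=
        ⟨hxy, h2yx⟩
      have hcard' : Set.ncard {p : V × V | G'.edge p.1 p.2 ∧ G₂.edge p.2 p.1} <
          n := by
        rw [rev_D G G₂ hxy hcov h2yx, ← hcard]
        exact Set.ncard_diff_singleton_lt_of_mem hmem (Set.toFinite _)
      rw [hJ]
      exact ih _ hcard' G' hadj' hcol' rfl

end VncAux


/-- `V_{𝔫,𝔠}`-uniqueness (Proposition 4, part 2): if for no independence model `P`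
and v-configuration of `sk(P)` both `ln` and `lc` hold simultaneously, then for
every `P` such that `V_{𝔫,𝔠}(P, G_P) = ⊤` for some DAG `G_P`, all DAGs `G` with
`V_{𝔫,𝔠}(P, G) = ⊤` are pairwise Markov equivalent. -/
theorem Vnc_uniqueness {V : Type} [Fintype V]
    (ln lc : Set (Set V × Set V × Set V) → V → V → V → Prop)
    (h : ∀ P : Set (Set V × Set V × Set V), (∀ t ∈ P, DisjTriple t) →
      ∀ i k j : V, VConfig (skP P) i k j → ¬ (ln P i k j ∧ lc P i k j))
    (P : Set (Set V × Set V × Set V)) (hP : ∀ t ∈ P, DisjTriple t)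
    (hex : ∃ G : DAG V, Vnc ln lc P G) :
    ∀ G₁ G₂ : DAG V, Vnc ln lc P G₁ → Vnc ln lc P G₂ → DAG.J G₁ = DAG.J G₂ := by

  intro G₁ G₂ h₁ h₂
  have hadj : ∀ a b, G₁.adj a b ↔ G₂.adj a b := fun a b =>
    (h₁.1 a b).symm.trans (h₂.1 a b)
  have hcol : ∀ a k b, a ≠ b → G₁.adj a k → G₁.adj b k → ¬ G₁.adj a b →
      (G₁.IsCollider a k b ↔ G₂.IsCollider a k b) := by
    intro a k b hab hak hbk hnab
    have hv : VConfig (skP P) a k b :=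
      ⟨hab, (h₁.1 a k).2 hak, (h₁.1 b k).2 hbk, fun hc => hnab ((h₁.1 a b).1 hc)⟩
    constructor
    · intro hc1
      by_contra hc2
      exact h P hP a k b hv ⟨(h₂.2 a k b hv).2 hc2, (h₁.2 a k b hv).1 hc1⟩
    · intro hc2
      by_contra hc1
      exact h P hP a k b hv ⟨(h₁.2 a k b hv).2 hc1, (h₂.2 a k b hv).1 hc2⟩
  exact VncAux.markov_equiv G₂ _ G₁ hadj hcol rfl
end

section
/- Exact correctness condition for the PC algorithm with orientation rule 1 (Proposition 6, case I = 1): For every independence model P and every DAG G₀ on V, V₁(P,G₀) = ⊤ if and only if the set {G a DAG on V : V₁(P,G) = ⊤} is nonempty and every DAG in this set is Markov equivalent to G₀ (the set being the output of the PC variant using orientation rule 1, and the right-hand side being correctness of that algorithm). -/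
/-- The property `V₁` corresponding to PC orientation rule 1: `sk(P) = sk(G)` and
for every v-configuration `i∼k∼j` of `sk(G)`, `i∼k∼j` is a collider in `G` iff
for every `C ⊆ V ∖ {i,j}` with `i ⊥⊥ j | C` we have `k ∉ C`. -/
def V1 {V : Type} (P : Set (Set V × Set V × Set V)) (G : DAG V) : Prop :=
  (∀ i j, skP P i j ↔ G.adj i j) ∧
  ∀ i k j, VConfig G.adj i k j →
    (G.IsCollider i k j ↔
      ∀ C : Set V, i ∉ C → j ∉ C → (({i} : Set V), ({j} : Set V), C) ∈ P → k ∉ C)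

namespace PCwork

open DAG

variable {V : Type}

lemma edge_irrefl (G : DAG V) (i : V) : ¬ G.edge i i :=
  fun h => G.acyclic i (Relation.TransGen.single h)

lemma edge_asymm (G : DAG V) {i j : V} (h : G.edge i j) : ¬ G.edge j i :=
  fun h' => G.acyclic i (Relation.TransGen.tail (Relation.TransGen.single h) h')

lemma adj_symm (G : DAG V) {i j : V} (h : G.adj i j) : G.adj j i := Or.symm h

lemma adj_irrefl (G : DAG V) (i : V) : ¬ G.adj i i := by
  rintro (h | h) <;> exact edge_irrefl G i h

lemma tg_asymm (G : DAG V) {i j : V} (h : Relation.TransGen G.edge i j) :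
    ¬ Relation.TransGen G.edge j i :=
  fun h' => G.acyclic i (h.trans h')

lemma not_tg_both (G : DAG V) (i j : V) :
    ¬ Relation.TransGen G.edge j i ∨ ¬ Relation.TransGen G.edge i j := by
  by_cases h : Relation.TransGen G.edge j i
  · exact Or.inr (tg_asymm G h)
  · exact Or.inl h

/-- single edge walk -/
lemma conn_single (G : DAG V) {i j : V} (h : G.adj i j) (C : Set V) :
    G.ConnWalk i j C := by
  refine ⟨1, fun m => if m = 0 then i else j, by simp, by simp, ?_, ?_⟩
  · intro m hm
    interval_cases m
    simpa using h
  · intro m hm hm'; omega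

/-- two edge collider walk -/
lemma conn_collider (G : DAG V) {i j k : V} (h1 : G.edge i k) (h2 : G.edge j k)
    {C : Set V} (hk : k ∈ C) : G.ConnWalk i j C := by
  refine ⟨2, fun m => if m = 0 then i else if m = 1 then k else j, by simp, by simp, ?_, ?_⟩
  · intro m hm
    interval_cases m
    · exact (Or.inl h1 : G.adj i k)
    · exact (Or.inr h2 : G.adj k j)
  · intro m hm hm'
    have hm1 : m = 1 := by omega
    subst hm1
    simpa using ⟨fun _ => hk, fun _ => ⟨h1, h2⟩⟩

/-- reversal -/
lemma conn_rev (G : DAG V) {i j : V} {C : Set V} (h : G.ConnWalk i j C) :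
    G.ConnWalk j i C := by
  obtain ⟨n, w, h0, hn, hadj, hst⟩ := h
  refine ⟨n, fun k => w (n - k), by simpa, by simpa, ?_, ?_⟩
  · intro m hm
    have e1 : n - m = (n - (m+1)) + 1 := by omega
    have := hadj (n - (m+1)) (by omega)
    show G.adj (w (n - m)) (w (n - (m+1)))
    rw [e1]
    exact adj_symm G this
  · intro m hm hm'
    have e1 : n - (m - 1) = (n - m) + 1 := by omega
    have e2 : n - (m + 1) = (n - m) - 1 := by omega
    have h2 := hst (n - m) (by omega) (by omega)
    show G.edge (w (n - (m-1))) (w (n - m)) ∧ G.edge (w (n - (m+1))) (w (n - m)) ↔ w (n-m) ∈ C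
    rw [e1, e2]
    constructor
    · rintro ⟨a, b⟩; exact h2.mp ⟨b, a⟩
    · intro hc; exact ⟨(h2.mpr hc).2, (h2.mpr hc).1⟩

end PCwork
namespace PCwork
open DAG
variable {V : Type}

/-- Separation by parents of j. -/
lemma sep_pa (G : DAG V) {i j : V} (hna : ¬ G.adj i j) (hij : i ≠ j)
    (htg : ¬ Relation.TransGen G.edge j i) :
    ¬ G.ConnWalk i j {k | G.edge k j} := by
  rintro ⟨n, w, h0, hn, hadj, hst⟩
  -- n ≥ 2
  have hn2 : 2 ≤ n := by
    rcases Nat.lt_or_ge n 2 with h | h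
    · interval_cases n
      · exact (hij (h0.symm.trans hn)).elim
      · have h := hadj 0 (by omega)
        rw [show (0:ℕ)+1 = 1 from rfl, h0, hn] at h
        exact (hna h).elim
    · exact h
  -- base : edge j (w (n-1))
  have base : G.edge j (w (n-1)) := by
    rcases hadj (n-1) (by omega) with h | h
    · -- edge w(n-1) (w n) = edge w(n-1) j : so w(n-1) ∈ C, interior
      rw [show n - 1 + 1 = n by omega, hn] at h
      have hmem : w (n-1) ∈ {k | G.edge k j} := h
      have := (hst (n-1) (by omega) (by omega)).mpr hmem
      rw [show n - 1 + 1 = n by omega, hn] at this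
      exact this.2
    · rw [show n - 1 + 1 = n by omega, hn] at h
      exact h
  -- induction : ∀ m, 1 ≤ m → m ≤ n → edge (w (n - m + 1))?? use v m = w (n - m)
  have main : ∀ m, 1 ≤ m → m ≤ n →
      G.edge (w (n - m + 1)) (w (n - m)) ∧ Relation.TransGen G.edge j (w (n - m)) := by
    intro m
    induction m with
    | zero => omega
    | succ m ih =>
      intro h1 h2
      rcases Nat.eq_or_lt_of_le h1 with he | hlt
      · -- m + 1 = 1
        have : m = 0 := by omega
        subst this
        constructor
        · rw [show n - 1 + 1 = n by omega, hn]; exact base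
        · exact Relation.TransGen.single base
      · have hm1 : 1 ≤ m := by omega
        obtain ⟨ihe, ihtg⟩ := ih hm1 (by omega)
        -- w (n - m) is interior : 0 < n - m < n
        have hint : 0 < n - m ∧ n - m < n := by omega
        have hnotC : w (n - m) ∉ {k | G.edge k j} := by
          intro hc
          exact G.acyclic j (ihtg.tail hc)
        have hnc := (hst (n-m) hint.1 hint.2)
        rw [show n - m - 1 = n - (m+1) by omega, show n - m + 1 = n - m + 1 from rfl] at hnc
        have : ¬ (G.edge (w (n - (m+1))) (w (n-m)) ∧ G.edge (w (n - m + 1)) (w (n-m))) := by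
          intro hcc; exact hnotC (hnc.mp hcc)
        have hne : ¬ G.edge (w (n - (m+1))) (w (n-m)) := fun hx => this ⟨hx, ihe⟩
        have hadj' := hadj (n - (m+1)) (by omega)
        rw [show n - (m+1) + 1 = n - m by omega] at hadj'
        have hfwd : G.edge (w (n - m)) (w (n - (m+1))) := by
          rcases hadj' with h | h
          · exact absurd h hne
          · exact h
        refine ⟨?_, ihtg.tail hfwd⟩
        rw [show n - (m+1) + 1 = n - m by omega]
        exact hfwd
  have := (main n (by omega) le_rfl).2
  rw [Nat.sub_self, h0] at this
  exact htg this

/-- Lemma A : adjacency is determined by J. -/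
lemma adj_iff_J (G : DAG V) (i j : V) :
    G.adj i j ↔ (i ≠ j ∧ ¬ ∃ C : Set V, i ∉ C ∧ j ∉ C ∧
      (({i} : Set V), ({j} : Set V), C) ∈ G.J) := by
  constructor
  · intro h
    constructor
    · rintro rfl; exact adj_irrefl G i h
    · rintro ⟨C, _, _, hJ⟩
      exact hJ.2 i rfl j rfl (conn_single G h C)
  · rintro ⟨hij, hne⟩
    by_contra hna
    apply hne
    rcases not_tg_both G i j with htg | htg
    · refine ⟨{k | G.edge k j}, ?_, ?_, ?_, ?_⟩
      · intro hc; exact hna (Or.inl hc)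
      · exact edge_irrefl G j
      · refine ⟨?_, ?_, ?_⟩
        · simpa [Set.disjoint_singleton_left] using hij
        · simp only [Set.disjoint_singleton_left]
          intro hc; exact hna (Or.inl hc)
        · simp only [Set.disjoint_singleton_left]
          exact edge_irrefl G j
      · rintro a rfl b rfl
        exact sep_pa G hna hij htg
    · refine ⟨{k | G.edge k i}, ?_, ?_, ?_, ?_⟩
      · exact edge_irrefl G i
      · intro hc; exact hna (Or.inr hc)
      · refine ⟨?_, ?_, ?_⟩
        · simpa [Set.disjoint_singleton_left] using hij
        · simp only [Set.disjoint_singleton_left]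
          exact edge_irrefl G i
        · simp only [Set.disjoint_singleton_left]
          intro hc; exact hna (Or.inr hc)
      · rintro a rfl b rfl hcw
        exact sep_pa G (fun hc => hna (adj_symm G hc)) (Ne.symm hij) htg (conn_rev G hcw)

/-- Lemma C : collider status of v-configs is determined by J. -/
lemma coll_iff_J (G : DAG V) (i k j : V) (hv : VConfig G.adj i k j) :
    G.IsCollider i k j ↔
      ∀ C : Set V, i ∉ C → j ∉ C →
        (({i} : Set V), ({j} : Set V), C) ∈ G.J → k ∉ C := by
  obtain ⟨hij, hik, hjk, hnij⟩ := hv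
  constructor
  · rintro ⟨e1, e2⟩ C hi hj hJ hk
    exact hJ.2 i rfl j rfl (conn_collider G e1 e2 hk)
  · intro hall
    by_contra hnc
    rcases not_tg_both G i j with htg | htg
    · -- edge k j
      have hkj : G.edge k j := by
        rcases hjk with h | h
        · -- edge j k : then edge k i, path j → k → i
          have hki : G.edge k i := by
            rcases hik with h' | h'
            · exact absurd ⟨h', h⟩ hnc
            · exact h'
          exact absurd ((Relation.TransGen.single h).tail hki) htg
        · exact h
      refine hall {x | G.edge x j} (fun hc => hnij (Or.inl hc)) (edge_irrefl G j) ?_ hkj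
      refine ⟨⟨?_, ?_, ?_⟩, ?_⟩
      · simpa [Set.disjoint_singleton_left] using hij
      · simp only [Set.disjoint_singleton_left]; intro hc; exact hnij (Or.inl hc)
      · simp only [Set.disjoint_singleton_left]; exact edge_irrefl G j
      · rintro a rfl b rfl
        exact sep_pa G hnij hij htg
    · have hki : G.edge k i := by
        rcases hik with h | h
        · have hkj : G.edge k j := by
            rcases hjk with h' | h'
            · exact absurd ⟨h, h'⟩ hnc
            · exact h'
          exact absurd ((Relation.TransGen.single h).tail hkj) htg
        · exact h
      refine hall {x | G.edge x i} (edge_irrefl G i) (fun hc => hnij (Or.inr hc)) ?_ hki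
      refine ⟨⟨?_, ?_, ?_⟩, ?_⟩
      · simpa [Set.disjoint_singleton_left] using hij
      · simp only [Set.disjoint_singleton_left]; exact edge_irrefl G i
      · simp only [Set.disjoint_singleton_left]; intro hc; exact hnij (Or.inr hc)
      · rintro a rfl b rfl hcw
        exact sep_pa G (fun hc => hnij (adj_symm G hc)) (Ne.symm hij) htg (conn_rev G hcw)

end PCwork
namespace PCwork
open DAG
variable {V : Type}

/-- `y` is an ancestor of `C` (or in `C`). -/
def anc (G : DAG V) (C : Set V) (y : V) : Prop :=
  ∃ (k : ℕ) (p : ℕ → V), p 0 = y ∧ (∀ m, m < k → G.edge (p m) (p (m + 1))) ∧ p k ∈ C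

lemma anc_of_mem (G : DAG V) {C : Set V} {y : V} (h : y ∈ C) : anc G C y :=
  ⟨0, fun _ => y, rfl, by omega, h⟩

lemma anc_step (G : DAG V) {C : Set V} {x y : V} (h : G.edge y x) (hx : anc G C x) :
    anc G C y := by
  obtain ⟨k, p, hp0, hpe, hpk⟩ := hx
  refine ⟨k + 1, fun m => if m = 0 then y else p (m - 1), by simp, ?_, by simpa⟩
  intro m hm
  rcases Nat.eq_zero_or_pos m with rfl | hm0
  · simpa [hp0] using h
  · have e1 : m ≠ 0 := by omega
    have e2 : m + 1 ≠ 0 := by omega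
    simp only [e1, e2, if_false]
    have := hpe (m - 1) (by omega)
    rw [show m + 1 - 1 = (m - 1) + 1 by omega]
    exact this

/-- relaxed interior status -/
def relSt (G : DAG V) (C : Set V) (a y b : V) : Prop :=
  (G.edge a y ∧ G.edge b y ∧ anc G C y) ∨ (¬ (G.edge a y ∧ G.edge b y) ∧ y ∉ C)

/-- relaxed walk property -/
def wprop (G : DAG V) (C : Set V) (n : ℕ) (w : ℕ → V) : Prop :=
  (∀ m, m < n → G.adj (w m) (w (m + 1))) ∧
  (∀ m, 0 < m → m < n → relSt G C (w (m - 1)) (w m) (w (m + 1)))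

def RW (G : DAG V) (i j : V) (C : Set V) : Prop :=
  ∃ (n : ℕ) (w : ℕ → V), w 0 = i ∧ w n = j ∧ wprop G C n w

lemma conn_to_rw (G : DAG V) {i j : V} {C : Set V} (h : G.ConnWalk i j C) :
    RW G i j C := by
  obtain ⟨n, w, h0, hn, hadj, hst⟩ := h
  refine ⟨n, w, h0, hn, hadj, ?_⟩
  intro m hm hm'
  by_cases hc : G.edge (w (m-1)) (w m) ∧ G.edge (w (m+1)) (w m)
  · exact Or.inl ⟨hc.1, hc.2, anc_of_mem G ((hst m hm hm').mp hc)⟩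
  · exact Or.inr ⟨hc, fun hmem => hc ((hst m hm hm').mpr hmem)⟩

open Classical in
/-- distance to C -/
noncomputable def dG (G : DAG V) (C : Set V) (y : V) : ℕ :=
  sInf {k : ℕ | ∃ p : ℕ → V, p 0 = y ∧ (∀ m, m < k → G.edge (p m) (p (m + 1))) ∧ p k ∈ C}

/-- minimal descent extraction -/
lemma min_descent (G : DAG V) {C : Set V} {y : V} (h : anc G C y) (hy : y ∉ C) :
    ∃ (K : ℕ) (p : ℕ → V), 1 ≤ K ∧ dG G C y = K ∧ p 0 = y ∧
      (∀ m, m < K → G.edge (p m) (p (m + 1))) ∧ p K ∈ C ∧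
      (∀ m, m < K → p m ∉ C) ∧
      (∀ m, m + 2 ≤ K → ¬ G.adj (p m) (p (m + 2))) ∧
      dG G C (p 1) ≤ K - 1 := by
  set S := {k : ℕ | ∃ p : ℕ → V, p 0 = y ∧ (∀ m, m < k → G.edge (p m) (p (m + 1))) ∧ p k ∈ C}
    with hS
  have hne : S.Nonempty := by
    obtain ⟨k, p, hp⟩ := h
    exact ⟨k, p, hp⟩
  have hmem : dG G C y ∈ S := Nat.sInf_mem hne
  set K := dG G C y with hK
  obtain ⟨p, hp0, hpe, hpK⟩ := hmem
  have hmin : ∀ k, k < K → k ∉ S := fun k hk => Nat.notMem_of_lt_sInf hk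
  have hK1 : 1 ≤ K := by
    rcases Nat.eq_zero_or_pos K with h0 | h1
    · exfalso; rw [h0] at hpK; rw [hp0] at hpK; exact hy hpK
    · exact h1
  refine ⟨K, p, hK1, rfl, hp0, hpe, hpK, ?_, ?_, ?_⟩
  · -- interiors not in C
    intro m hm hmC
    exact hmin m hm ⟨p, hp0, fun l hl => hpe l (by omega), hmC⟩
  · -- no shortcut adjacency
    intro m hm2 hadj
    have hne2 : ¬ G.edge (p (m+2)) (p m) := by
      intro hx
      exact G.acyclic (p m)
        (((Relation.TransGen.single (hpe m (by omega))).tail (hpe (m+1) (by omega))).tail hx)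
    have hedge : G.edge (p m) (p (m+2)) := by
      rcases hadj with h | h
      · exact h
      · exact absurd h hne2
    -- splice : shorter descent
    apply hmin (K - 1) (by omega)
    refine ⟨fun l => if l ≤ m then p l else p (l + 1), by simp [hp0], ?_, ?_⟩
    · intro l hl
      by_cases h1 : l + 1 ≤ m
      · simp only [show l ≤ m by omega, if_pos, h1, if_pos]
        exact hpe l (by omega)
      · by_cases h2 : l ≤ m
        · have : l = m := by omega
          subst this
          simp only [if_pos le_rfl, if_neg h1]
          exact hedge
        · simp only [if_neg h2, if_neg (by omega : ¬ l + 1 ≤ m)]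
          have := hpe (l+1) (by omega)
          rw [show l + 1 + 1 = l + 2 by omega] at this ⊢
          exact this
    · simp only [if_neg (by omega : ¬ K - 1 ≤ m)]
      rw [show K - 1 + 1 = K by omega]
      exact hpK
  · -- dG (p 1) ≤ K - 1
    apply Nat.sInf_le
    refine ⟨fun l => p (l + 1), rfl, fun l hl => ?_, ?_⟩
    · have := hpe (l + 1) (by omega)
      exact this
    · show p (K - 1 + 1) ∈ C
      rw [show K - 1 + 1 = K by omega]
      exact hpK

end PCwork
namespace PCwork
open DAG
variable {V : Type}

/-- insertion of a double descent detour at position m -/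
def ins (w p : ℕ → V) (m K : ℕ) : ℕ → V := fun k =>
  if k ≤ m then w k else if k ≤ m + K then p (k - m)
  else if k ≤ m + 2*K then p (m + 2*K - k) else w (k - 2*K)

lemma ins_low {w p : ℕ → V} {m K k : ℕ} (h : k ≤ m) : ins w p m K k = w k := by
  simp [ins, h]

lemma ins_mid {w p : ℕ → V} {m K k : ℕ} (h1 : m ≤ k) (h2 : k ≤ m + K)
    (hm : w m = p 0) : ins w p m K k = p (k - m) := by
  rcases Nat.eq_or_lt_of_le h1 with rfl | h
  · simp [ins, hm]
  · simp only [ins, if_neg (by omega : ¬ k ≤ m), if_pos h2]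

lemma ins_hi {w p : ℕ → V} {m K k : ℕ} (h1 : m + K ≤ k) (h2 : k ≤ m + 2*K)
    (hK : 1 ≤ K) : ins w p m K k = p (m + 2*K - k) := by
  rcases Nat.eq_or_lt_of_le h1 with rfl | h
  · simp only [ins, if_neg (by omega : ¬ m + K ≤ m), if_pos (le_refl (m+K))]
    congr 1
    omega
  · simp only [ins, if_neg (by omega : ¬ k ≤ m), if_neg (by omega : ¬ k ≤ m + K), if_pos h2]

lemma ins_top {w p : ℕ → V} {m K k : ℕ} (h : m + 2*K < k) : ins w p m K k = w (k - 2*K) := by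
  simp only [ins, if_neg (by omega : ¬ k ≤ m), if_neg (by omega : ¬ k ≤ m + K),
    if_neg (by omega : ¬ k ≤ m + 2*K)]

open Classical in
/-- set of bad colliders : colliders not in C -/
noncomputable def badF (G : DAG V) (C : Set V) (n : ℕ) (w : ℕ → V) : Finset ℕ :=
  (Finset.range n).filter
    (fun m => 0 < m ∧ G.edge (w (m-1)) (w m) ∧ G.edge (w (m+1)) (w m) ∧ w m ∉ C)

open Classical in
lemma mem_badF {G : DAG V} {C : Set V} {n : ℕ} {w : ℕ → V} {m : ℕ} :
    m ∈ badF G C n w ↔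
      m < n ∧ 0 < m ∧ G.edge (w (m-1)) (w m) ∧ G.edge (w (m+1)) (w m) ∧ w m ∉ C := by
  simp [badF, Finset.mem_filter, Finset.mem_range, and_assoc]

lemma no_bad_conn (G : DAG V) {C : Set V} {n : ℕ} {w : ℕ → V}
    (hw : wprop G C n w) (hb : ∀ m, m ∉ badF G C n w) :
    G.ConnWalk (w 0) (w n) C := by
  refine ⟨n, w, rfl, rfl, hw.1, ?_⟩
  intro m hm hm'
  rcases hw.2 m hm hm' with ⟨h1, h2, _⟩ | ⟨h1, h2⟩
  · constructor
    · intro _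
      by_contra hc
      exact hb m (mem_badF.mpr ⟨hm', hm, h1, h2, hc⟩)
    · intro _; exact ⟨h1, h2⟩
  · constructor
    · intro hc; exact absurd hc h1
    · intro hc; exact absurd hc h2

lemma rw_to_conn (G : DAG V) {i j : V} {C : Set V} (h : RW G i j C) :
    G.ConnWalk i j C := by
  obtain ⟨n, w, h0, hn, hw⟩ := h
  subst h0; subst hn
  -- strong induction on the number of bad colliders
  suffices key : ∀ c (n : ℕ) (w : ℕ → V), (badF G C n w).card ≤ c → wprop G C n w →
      G.ConnWalk (w 0) (w n) C by
    exact key (badF G C n w).card n w le_rfl hw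
  intro c
  induction c with
  | zero =>
    intro n w hc hw
    refine no_bad_conn G hw (fun m hm => ?_)
    have := Finset.card_pos.mpr ⟨m, hm⟩
    omega
  | succ c ih =>
    intro n w hc hw
    by_cases hne : (badF G C n w).Nonempty
    · obtain ⟨m, hm⟩ := hne
      obtain ⟨hmn, hm0, he1, he2, hmC⟩ := mem_badF.mp hm
      have hanc : anc G C (w m) := by
        rcases hw.2 m hm0 hmn with ⟨_, _, h⟩ | ⟨h, _⟩
        · exact h
        · exact absurd ⟨he1, he2⟩ h
      obtain ⟨K, p, hK1, hdK, hp0, hpe, hpK, hpC, _, _⟩ := min_descent G hanc hmC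
      have hmp0 : w m = p 0 := hp0.symm
      have asymm := fun {a b : V} (h : G.edge a b) => edge_asymm G h
      set n' := n + 2*K with hn'
      set w' : ℕ → V := ins w p m K with hw'
      have Elow : ∀ k, k ≤ m → w' k = w k := fun k hk => ins_low hk
      have Emid : ∀ k, m ≤ k → k ≤ m + K → w' k = p (k - m) :=
        fun k h1 h2 => ins_mid h1 h2 hmp0
      have Ehi : ∀ k, m + K ≤ k → k ≤ m + 2*K → w' k = p (m + 2*K - k) :=
        fun k h1 h2 => ins_hi h1 h2 hK1
      have Etop : ∀ k, m + 2*K ≤ k → w' k = w (k - 2*K) := by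
        intro k hk
        rcases Nat.eq_or_lt_of_le hk with he | h
        · rw [Ehi k (by omega) (by omega), show m + 2*K - k = 0 by omega, hp0]
          congr 1; omega
        · exact ins_top h
      -- adjacency
      have hadj' : ∀ k, k < n' → G.adj (w' k) (w' (k+1)) := by
        intro k hk
        rcases Nat.lt_or_ge k m with h1 | h1
        · rw [Elow k (by omega), Elow (k+1) (by omega)]
          exact hw.1 k (by omega)
        rcases Nat.lt_or_ge k (m + K) with h2 | h2
        · rw [Emid k h1 (by omega), Emid (k+1) (by omega) (by omega),
            show k + 1 - m = (k - m) + 1 by omega]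
          exact Or.inl (hpe (k - m) (by omega))
        rcases Nat.lt_or_ge k (m + 2*K) with h3 | h3
        · rw [Ehi k h2 (by omega), Ehi (k+1) (by omega) (by omega),
            show m + 2*K - k = (m + 2*K - (k+1)) + 1 by omega]
          exact Or.inr (hpe (m + 2*K - (k+1)) (by omega))
        · rw [Etop k h3, Etop (k+1) (by omega),
            show k + 1 - 2*K = (k - 2*K) + 1 by omega]
          exact hw.1 (k - 2*K) (by omega)
      -- statuses
      have hst' : ∀ k, 0 < k → k < n' →
          relSt G C (w' (k-1)) (w' k) (w' (k+1)) ∧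
          (m ≤ k → k ≤ m + 2*K →
            ¬ (G.edge (w' (k-1)) (w' k) ∧ G.edge (w' (k+1)) (w' k) ∧ w' k ∉ C)) := by
        intro k hk0 hk
        rcases Nat.lt_or_ge k m with h1 | h1
        · rw [Elow (k-1) (by omega), Elow k (by omega), Elow (k+1) (by omega)]
          exact ⟨hw.2 k hk0 (by omega), by omega⟩
        rcases Nat.eq_or_lt_of_le h1 with he | h1
        · rw [Elow (k-1) (by omega), Elow k (by omega),
            Emid (k+1) (by omega) (by omega), show k + 1 - m = 1 by omega,
            ← congrArg w he]
          have hne : ¬ G.edge (p 1) (w m) := by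
            rw [hmp0]; exact asymm (hpe 0 hK1)
          exact ⟨Or.inr ⟨fun hc => hne hc.2, hmC⟩, fun _ _ hc => hne hc.2.1⟩
        rcases Nat.lt_or_ge k (m + K) with h2 | h2
        · rw [Emid (k-1) (by omega) (by omega), Emid k (by omega) (by omega),
            Emid (k+1) (by omega) (by omega), show k + 1 - m = (k - m) + 1 by omega,
            show k - 1 - m = (k - m) - 1 by omega]
          have hne : ¬ G.edge (p (k - m + 1)) (p (k - m)) := asymm (hpe (k-m) (by omega))
          exact ⟨Or.inr ⟨fun hc => hne hc.2, hpC (k-m) (by omega)⟩, fun _ _ hc => hne hc.2.1⟩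
        rcases Nat.eq_or_lt_of_le h2 with he | h2
        · rw [Emid (k-1) (by omega) (by omega), Emid k (by omega) (by omega),
            Ehi (k+1) (by omega) (by omega), show k - m = K by omega,
            show k - 1 - m = K - 1 by omega, show m + 2*K - (k + 1) = K - 1 by omega]
          have he : G.edge (p (K-1)) (p K) := by
            have := hpe (K-1) (by omega)
            rw [show K - 1 + 1 = K by omega] at this
            exact this
          exact ⟨Or.inl ⟨he, he, anc_of_mem G hpK⟩, fun _ _ hc => hc.2.2 hpK⟩
        rcases Nat.lt_or_ge k (m + 2*K) with h3 | h3
        · rw [Ehi (k-1) (by omega) (by omega), Ehi k (by omega) (by omega),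
            Ehi (k+1) (by omega) (by omega),
            show m + 2*K - (k-1) = (m + 2*K - k) + 1 by omega,
            show m + 2*K - (k+1) = (m + 2*K - k) - 1 by omega]
          have he : G.edge (p (m + 2*K - k)) (p ((m + 2*K - k)+1)) :=
            hpe (m + 2*K - k) (by omega)
          have hne : ¬ G.edge (p ((m + 2*K - k)+1)) (p (m + 2*K - k)) := asymm he
          exact ⟨Or.inr ⟨fun hc => hne hc.1, hpC (m + 2*K - k) (by omega)⟩,
            fun _ _ hc => hne hc.1⟩
        rcases Nat.eq_or_lt_of_le h3 with he | h3
        · have E1 : w' (k - 1) = p 1 := by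
            rcases Nat.eq_or_lt_of_le hK1 with hKe | hK2
            · rw [Emid (k-1) (by omega) (by omega)]
              congr 1; omega
            · rw [Ehi (k-1) (by omega) (by omega)]
              congr 1; omega
          have E2 : w' k = w m := by
            rw [Etop k (by omega)]; congr 1; omega
          have E3 : w' (k+1) = w (m+1) := by
            rw [Etop (k+1) (by omega)]; congr 1; omega
          rw [E1, E2, E3]
          have hne : ¬ G.edge (p 1) (w m) := by rw [hmp0]; exact asymm (hpe 0 hK1)
          exact ⟨Or.inr ⟨fun hc => hne hc.1, hmC⟩, fun _ _ hc => hne hc.1⟩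
        · have E1 : w' (k - 1) = w ((k - 2*K) - 1) := by
            rw [Etop (k-1) (by omega)]; congr 1; omega
          have E2 : w' k = w (k - 2*K) := Etop k (by omega)
          have E3 : w' (k+1) = w ((k - 2*K) + 1) := by
            rw [Etop (k+1) (by omega)]; congr 1; omega
          rw [E1, E2, E3]
          exact ⟨hw.2 (k - 2*K) (by omega) (by omega), by omega⟩
      -- badF decreases
      have hcard : (badF G C n' w').card < (badF G C n w).card := by
        have hsub : badF G C n' w' ⊆
            ((badF G C n w).erase m).image (fun k => if k < m then k else k + 2*K) := by
          intro k' hk'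
          obtain ⟨hk'n, hk'0, hb1, hb2, hb3⟩ := mem_badF.mp hk'
          rcases Nat.lt_or_ge k' m with h1 | h1
          · refine Finset.mem_image.mpr ⟨k', ?_, by simp [h1]⟩
            have E1 := Elow (k'-1) (by omega)
            have E2 := Elow k' (by omega)
            have E3 := Elow (k'+1) (by omega)
            simp only [E1, E2, E3] at hb1 hb2 hb3
            exact Finset.mem_erase.mpr ⟨by omega,
              mem_badF.mpr ⟨by omega, hk'0, hb1, hb2, hb3⟩⟩
          rcases Nat.lt_or_ge (m + 2*K) k' with h2 | h2
          · refine Finset.mem_image.mpr ⟨k' - 2*K, ?_, by rw [if_neg (by omega)]; omega⟩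
            have E1 : w' (k' - 1) = w ((k' - 2*K) - 1) := by
              rw [Etop (k'-1) (by omega)]; congr 1; omega
            have E2 : w' k' = w (k' - 2*K) := Etop k' (by omega)
            have E3 : w' (k'+1) = w ((k' - 2*K) + 1) := by
              rw [Etop (k'+1) (by omega)]; congr 1; omega
            simp only [E1, E2, E3] at hb1 hb2 hb3
            exact Finset.mem_erase.mpr ⟨by omega,
              mem_badF.mpr ⟨by omega, by omega, hb1, hb2, hb3⟩⟩
          · exact absurd ⟨hb1, hb2, hb3⟩ ((hst' k' hk'0 hk'n).2 h1 h2)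
        calc (badF G C n' w').card
            ≤ (((badF G C n w).erase m).image (fun k => if k < m then k else k + 2*K)).card :=
              Finset.card_le_card hsub
          _ ≤ ((badF G C n w).erase m).card := Finset.card_image_le
          _ < (badF G C n w).card := by
              rw [Finset.card_erase_of_mem hm]
              have := Finset.card_pos.mpr ⟨m, hm⟩
              omega
      have hend0 : w' 0 = w 0 := Elow 0 (by omega)
      have hendn : w' n' = w n := by
        rw [Etop n' (by omega)]; congr 1; omega
      have := ih n' w' (by omega) ⟨hadj', fun k hx1 hx2 => (hst' k hx1 hx2).1⟩
      rw [hend0, hendn] at this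
      exact this
    · refine no_bad_conn G hw (fun m hm => hne ⟨m, hm⟩)
end PCwork
namespace PCwork
open DAG
variable {V : Type}

/-- generic single-node deletion surgery -/
lemma del_walk (G : DAG V) (C : Set V) {n : ℕ} {w : ℕ → V} (hw : wprop G C n w)
    {q : ℕ} (hq0 : 0 < q) (hqn : q < n)
    (hadjq : G.adj (w (q-1)) (w (q+1)))
    (hstL : 1 < q → relSt G C (w (q-2)) (w (q-1)) (w (q+1)))
    (hstR : q + 1 < n → relSt G C (w (q-1)) (w (q+1)) (w (q+2))) :
    ∃ w' : ℕ → V, w' 0 = w 0 ∧ w' (n-1) = w n ∧ wprop G C (n-1) w' := by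
  refine ⟨fun k => if k < q then w k else w (k+1), by simp [hq0], ?_, ?_, ?_⟩
  · simp only [if_neg (by omega : ¬ n - 1 < q)]
    congr 1; omega
  · intro k hk
    by_cases hA : k < q - 1
    · simp only [if_pos (by omega : k < q), if_pos (by omega : k + 1 < q)]
      exact hw.1 k (by omega)
    by_cases hB : k = q - 1
    · simp only [if_pos (by omega : k < q), if_neg (by omega : ¬ k + 1 < q)]
      rw [show k = q - 1 by omega, show q - 1 + 1 + 1 = q + 1 by omega]
      exact hadjq
    · simp only [if_neg (by omega : ¬ k < q), if_neg (by omega : ¬ k + 1 < q)]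
      exact hw.1 (k+1) (by omega)
  · intro k hk0 hk
    by_cases hA : k < q - 1
    · simp only [if_pos (by omega : k - 1 < q), if_pos (by omega : k < q),
        if_pos (by omega : k + 1 < q)]
      exact hw.2 k hk0 (by omega)
    by_cases hB : k = q - 1
    · simp only [if_pos (by omega : k - 1 < q), if_pos (by omega : k < q),
        if_neg (by omega : ¬ k + 1 < q)]
      rw [show k = q - 1 by omega, show q - 1 - 1 = q - 2 by omega,
        show q - 1 + 1 + 1 = q + 1 by omega]
      exact hstL (by omega)
    by_cases hC : k = q
    · simp only [if_pos (by omega : k - 1 < q), if_neg (by omega : ¬ k < q),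
        if_neg (by omega : ¬ k + 1 < q)]
      rw [show k = q by omega, show q - 1 = q - 1 from rfl,
        show q + 1 + 1 = q + 2 by omega]
      exact hstR (by omega)
    · simp only [if_neg (by omega : ¬ k - 1 < q), if_neg (by omega : ¬ k < q),
        if_neg (by omega : ¬ k + 1 < q)]
      rw [show k - 1 + 1 = k + 1 - 1 by omega]
      exact hw.2 (k+1) (by omega) (by omega)

/-- spike (double-node) deletion surgery -/
lemma del2_walk (G : DAG V) (C : Set V) {n : ℕ} {w : ℕ → V} (hw : wprop G C n w)
    {q : ℕ} (hq0 : 0 < q) (hqn : q < n) (hsp : w (q-1) = w (q+1))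
    (hstM : 1 < q → q + 1 < n → relSt G C (w (q-2)) (w (q-1)) (w (q+2))) :
    ∃ w' : ℕ → V, w' 0 = w 0 ∧ w' (n-2) = w n ∧ wprop G C (n-2) w' := by
  refine ⟨fun k => if k < q then w k else w (k+2), by simp [hq0], ?_, ?_, ?_⟩
  · by_cases h : n - 2 < q
    · simp only [if_pos h]
      rw [show n - 2 = q - 1 by omega, hsp]
      congr 1; omega
    · simp only [if_neg h]
      congr 1; omega
  · intro k hk
    by_cases hA : k < q - 1
    · simp only [if_pos (by omega : k < q), if_pos (by omega : k + 1 < q)]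
      exact hw.1 k (by omega)
    by_cases hB : k = q - 1
    · simp only [if_pos (by omega : k < q), if_neg (by omega : ¬ k + 1 < q)]
      rw [show k = q - 1 by omega, hsp, show q - 1 + 1 + 2 = q + 2 by omega]
      exact hw.1 (q+1) (by omega)
    · simp only [if_neg (by omega : ¬ k < q), if_neg (by omega : ¬ k + 1 < q)]
      rw [show k + 1 + 2 = (k + 2) + 1 by omega]
      exact hw.1 (k+2) (by omega)
  · intro k hk0 hk
    by_cases hA : k < q - 1
    · simp only [if_pos (by omega : k - 1 < q), if_pos (by omega : k < q),
        if_pos (by omega : k + 1 < q)]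
      exact hw.2 k hk0 (by omega)
    by_cases hB : k = q - 1
    · simp only [if_pos (by omega : k - 1 < q), if_pos (by omega : k < q),
        if_neg (by omega : ¬ k + 1 < q)]
      rw [show k = q - 1 by omega, show q - 1 - 1 = q - 2 by omega,
        show q - 1 + 1 + 2 = q + 2 by omega]
      exact hstM (by omega) (by omega)
    by_cases hC : k = q
    · simp only [if_pos (by omega : k - 1 < q), if_neg (by omega : ¬ k < q),
        if_neg (by omega : ¬ k + 1 < q)]
      rw [show k - 1 = q - 1 by omega, hsp, show k = q by omega,
        show q + 1 + 2 = (q + 2) + 1 by omega]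
      exact hw.2 (q+2) (by omega) (by omega)
    · simp only [if_neg (by omega : ¬ k - 1 < q), if_neg (by omega : ¬ k < q),
        if_neg (by omega : ¬ k + 1 < q)]
      rw [show k - 1 + 2 = k + 2 - 1 by omega, show k + 1 + 2 = (k + 2) + 1 by omega]
      exact hw.2 (k+2) (by omega) (by omega)

open Classical in
/-- weight of a walk : total descent distance over colliders -/
noncomputable def wgt (G : DAG V) (C : Set V) (n : ℕ) (w : ℕ → V) : ℕ :=
  ∑ m ∈ Finset.Ico 1 n,
    (if G.edge (w (m-1)) (w m) ∧ G.edge (w (m+1)) (w m) then dG G C (w m) else 0)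

end PCwork
namespace PCwork
open DAG
variable {V : Type}

lemma rw_transfer (G H : DAG V)
    (hadj : ∀ a b, G.adj a b ↔ H.adj a b)
    (hcol : ∀ a k b, VConfig G.adj a k b → (G.IsCollider a k b ↔ H.IsCollider a k b))
    (C : Set V) : ∀ i j : V, RW G i j C → RW H i j C := by
  suffices key : ∀ N Ω (n : ℕ) (w : ℕ → V), n ≤ N → wgt G C n w ≤ Ω → wprop G C n w →
      RW H (w 0) (w n) C by
    rintro i j ⟨n, w, h0, hn, hw⟩
    rw [← h0, ← hn]
    exact key n (wgt G C n w) n w le_rfl le_rfl hw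
  intro N
  induction N using Nat.strongRecOn with
  | ind N ihN =>
  intro Ω
  induction Ω using Nat.strongRecOn with
  | ind Ω ihΩ =>
  intro n w hn hΩ hw
  by_cases hsp : ∃ m, 0 < m ∧ m < n ∧ w (m-1) = w (m+1)
  · -- spike deletion
    obtain ⟨m, hm0, hmn, hspm⟩ := hsp
    have hstM : 1 < m → m + 1 < n → relSt G C (w (m-2)) (w (m-1)) (w (m+2)) := by
      intro h1 h2
      have hSm1 := hw.2 (m-1) (by omega) (by omega)
      have hSm := hw.2 m hm0 hmn
      have hSp1 := hw.2 (m+1) (by omega) h2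
      rw [show m - 1 - 1 = m - 2 by omega, show m - 1 + 1 = m by omega] at hSm1
      rw [show m + 1 - 1 = m by omega, show m + 1 + 1 = m + 2 by omega, ← hspm] at hSp1
      by_cases hcoll : G.edge (w (m-2)) (w (m-1)) ∧ G.edge (w (m+2)) (w (m-1))
      · left
        refine ⟨hcoll.1, hcoll.2, ?_⟩
        by_cases hxa : G.edge (w m) (w (m-1))
        · rcases hSm1 with ⟨_,_,h⟩|⟨hno,_⟩
          · exact h
          · exact absurd ⟨hcoll.1, hxa⟩ hno
        · have hax : G.edge (w (m-1)) (w m) := by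
            have h := hw.1 (m-1) (by omega)
            rw [show m - 1 + 1 = m by omega] at h
            rcases h with h | h
            · exact h
            · exact absurd h hxa
          have hx : anc G C (w m) := by
            rcases hSm with ⟨_,_,h⟩|⟨hno,_⟩
            · exact h
            · exact absurd ⟨hax, by rw [← hspm]; exact hax⟩ hno
          exact anc_step G hax hx
      · right
        refine ⟨hcoll, ?_⟩
        by_cases hua : G.edge (w (m-2)) (w (m-1))
        · have hva : ¬ G.edge (w (m+2)) (w (m-1)) := fun hv => hcoll ⟨hua, hv⟩
          rcases hSp1 with ⟨_,h2',_⟩|⟨_,h2'⟩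
          · exact absurd h2' hva
          · exact h2'
        · rcases hSm1 with ⟨h1',_,_⟩|⟨_,h2'⟩
          · exact absurd h1' hua
          · exact h2'
    obtain ⟨w', h0', hn', hw'⟩ := del2_walk G C hw hm0 hmn hspm hstM
    have hres := ihN (N-1) (by omega) (wgt G C (n-2) w') (n-2) w' (by omega) le_rfl hw'
    rw [h0', hn'] at hres
    exact hres
  push_neg at hsp
  by_cases hdf : ∃ m, 0 < m ∧ m < n ∧
      ¬((G.edge (w (m-1)) (w m) ∧ G.edge (w (m+1)) (w m)) ↔
        (H.edge (w (m-1)) (w m) ∧ H.edge (w (m+1)) (w m)))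
  · obtain ⟨m, hm0, hmn, hdfm⟩ := hdf
    have hab : w (m-1) ≠ w (m+1) := hsp m hm0 hmn
    have hadj_ay : G.adj (w (m-1)) (w m) := by
      have := hw.1 (m-1) (by omega)
      rwa [show m-1+1 = m by omega] at this
    have hadj_yb : G.adj (w m) (w (m+1)) := hw.1 m hmn
    have hshield : G.adj (w (m-1)) (w (m+1)) := by
      by_contra hno
      exact hdfm (hcol (w (m-1)) (w m) (w (m+1)) ⟨hab, hadj_ay, adj_symm G hadj_yb, hno⟩)
    by_cases hcG : G.edge (w (m-1)) (w m) ∧ G.edge (w (m+1)) (w m)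
    · -- G-collider at m, shielded : delete m
      have hanc : anc G C (w m) := by
        rcases hw.2 m hm0 hmn with ⟨_,_,h⟩|⟨hno,_⟩
        · exact h
        · exact absurd hcG hno
      have hstL : 1 < m → relSt G C (w (m-2)) (w (m-1)) (w (m+1)) := by
        intro h1
        have hSm1 := hw.2 (m-1) (by omega) (by omega)
        rw [show m-1-1 = m-2 by omega, show m-1+1 = m by omega] at hSm1
        have haC : w (m-1) ∉ C := by
          rcases hSm1 with ⟨_,h2,_⟩|⟨_,h2⟩
          · exact absurd h2 (edge_asymm G hcG.1)
          · exact h2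
        rcases hshield with hab' | hba
        · right; exact ⟨fun hc => edge_asymm G hab' hc.2, haC⟩
        · by_cases hua : G.edge (w (m-2)) (w (m-1))
          · left; exact ⟨hua, hba, anc_step G hcG.1 hanc⟩
          · right; exact ⟨fun hc => hua hc.1, haC⟩
      have hstR : m + 1 < n → relSt G C (w (m-1)) (w (m+1)) (w (m+2)) := by
        intro h2
        have hSp1 := hw.2 (m+1) (by omega) h2
        rw [show m+1-1 = m by omega, show m+1+1 = m+2 by omega] at hSp1
        have hbC : w (m+1) ∉ C := by
          rcases hSp1 with ⟨h1',_,_⟩|⟨_,h2'⟩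
          · exact absurd h1' (edge_asymm G hcG.2)
          · exact h2'
        rcases hshield with hab' | hba
        · by_cases hvb : G.edge (w (m+2)) (w (m+1))
          · left; exact ⟨hab', hvb, anc_step G hcG.2 hanc⟩
          · right; exact ⟨fun hc => hvb hc.2, hbC⟩
        · right; exact ⟨fun hc => edge_asymm G hba hc.1, hbC⟩
      obtain ⟨w', h0', hn', hw'⟩ := del_walk G C hw hm0 hmn hshield hstL hstR
      have hres := ihN (N-1) (by omega) (wgt G C (n-1) w') (n-1) w' (by omega) le_rfl hw'
      rw [h0', hn'] at hres
      exact hres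
    · -- y not a G-collider
      have hyC : w m ∉ C := by
        rcases hw.2 m hm0 hmn with ⟨h1,h2,_⟩|⟨_,h⟩
        · exact absurd ⟨h1,h2⟩ hcG
        · exact h
      have hcH : H.edge (w (m-1)) (w m) ∧ H.edge (w (m+1)) (w m) := by
        by_contra hnH
        exact hdfm (iff_of_false hcG hnH)
      rcases hadj_ay with eay | eya
      · -- a → y, y → b, shield a → b : delete m
        have eyb : G.edge (w m) (w (m+1)) := by
          rcases hadj_yb with h | h
          · exact h
          · exact absurd ⟨eay, h⟩ hcG
        have eab : G.edge (w (m-1)) (w (m+1)) := by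
          rcases hshield with h | h
          · exact h
          · exact absurd (((Relation.TransGen.single eay).tail eyb).tail h) (G.acyclic _)
        have hstL : 1 < m → relSt G C (w (m-2)) (w (m-1)) (w (m+1)) := by
          intro h1
          have hSm1 := hw.2 (m-1) (by omega) (by omega)
          rw [show m-1-1 = m-2 by omega, show m-1+1 = m by omega] at hSm1
          have haC : w (m-1) ∉ C := by
            rcases hSm1 with ⟨_,h2,_⟩|⟨_,h2⟩
            · exact absurd h2 (edge_asymm G eay)
            · exact h2
          right; exact ⟨fun hc => edge_asymm G eab hc.2, haC⟩
        have hstR : m+1 < n → relSt G C (w (m-1)) (w (m+1)) (w (m+2)) := by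
          intro h2
          have hSp1 := hw.2 (m+1) (by omega) h2
          rw [show m+1-1 = m by omega, show m+1+1 = m+2 by omega] at hSp1
          rcases hSp1 with ⟨_,h2',h3⟩|⟨h1',h2'⟩
          · left; exact ⟨eab, h2', h3⟩
          · right; exact ⟨fun hc => h1' ⟨eyb, hc.2⟩, h2'⟩
        obtain ⟨w', h0', hn', hw'⟩ := del_walk G C hw hm0 hmn (Or.inl eab) hstL hstR
        have hres := ihN (N-1) (by omega) (wgt G C (n-1) w') (n-1) w' (by omega) le_rfl hw'
        rw [h0', hn'] at hres
        exact hres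
      rcases hadj_yb with eyb | eby
      · -- y → a and y → b : hard case
        rcases hshield with eab | eba
        · by_cases hL : 1 < m ∧ G.edge (w (m-2)) (w (m-1))
          · -- delete m-1
            have hSm1 := hw.2 (m-1) (by omega) (by omega)
            rw [show m-1-1 = m-2 by omega, show m-1+1 = m by omega] at hSm1
            have hancA : anc G C (w (m-1)) := by
              rcases hSm1 with ⟨_,_,h⟩|⟨hno,_⟩
              · exact h
              · exact absurd ⟨hL.2, eya⟩ hno
            have huy : w (m-2) ≠ w m := by
              have := hsp (m-1) (by omega) (by omega)
              rwa [show m-1-1 = m-2 by omega, show m-1+1 = m by omega] at this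
            have hadjuy : G.adj (w (m-2)) (w m) := by
              by_contra hno
              have hadjua : G.adj (w (m-2)) (w (m-1)) := by
                have := hw.1 (m-2) (by omega)
                rwa [show m-2+1 = m-1 by omega] at this
              have hvc : VConfig G.adj (w (m-2)) (w (m-1)) (w m) :=
                ⟨huy, hadjua, Or.inl eya, hno⟩
              have := (hcol _ _ _ hvc).mp ⟨hL.2, eya⟩
              exact edge_asymm H this.2 hcH.1
            have hstL' : 1 < m-1 → relSt G C (w (m-1-2)) (w (m-1-1)) (w (m-1+1)) := by
              intro h1
              rw [show m-1-1 = m-2 by omega, show m-1+1 = m by omega]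
              have hSm2 := hw.2 (m-2) (by omega) (by omega)
              rw [show m-2-1 = m-1-2 by omega, show m-2+1 = m-1 by omega] at hSm2
              have huC : w (m-2) ∉ C := by
                rcases hSm2 with ⟨_,h2,_⟩|⟨_,h2⟩
                · exact absurd h2 (edge_asymm G hL.2)
                · exact h2
              by_cases hcu : G.edge (w (m-1-2)) (w (m-2)) ∧ G.edge (w m) (w (m-2))
              · left; exact ⟨hcu.1, hcu.2, anc_step G hL.2 hancA⟩
              · right; exact ⟨hcu, huC⟩
            have hstR' : (m-1)+1 < n → relSt G C (w (m-1-1)) (w (m-1+1)) (w (m-1+2)) := by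
              intro _
              rw [show m-1-1 = m-2 by omega, show m-1+1 = m by omega,
                show m-1+2 = m+1 by omega]
              right; exact ⟨fun hc => edge_asymm G eyb hc.2, hyC⟩
            have hadjq : G.adj (w (m-1-1)) (w (m-1+1)) := by
              rw [show m-1-1 = m-2 by omega, show m-1+1 = m by omega]
              exact hadjuy
            obtain ⟨w', h0', hn', hw'⟩ :=
              del_walk G C hw (q := m-1) (by omega) (by omega) hadjq hstL' hstR'
            have hres := ihN (N-1) (by omega) (wgt G C (n-1) w') (n-1) w' (by omega) le_rfl hw'
            rw [h0', hn'] at hres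
            exact hres
          · -- delete m
            have hstL : 1 < m → relSt G C (w (m-2)) (w (m-1)) (w (m+1)) := by
              intro h1
              have hnua : ¬ G.edge (w (m-2)) (w (m-1)) := fun h => hL ⟨h1, h⟩
              have hSm1 := hw.2 (m-1) (by omega) (by omega)
              rw [show m-1-1 = m-2 by omega, show m-1+1 = m by omega] at hSm1
              have haC : w (m-1) ∉ C := by
                rcases hSm1 with ⟨h1',_,_⟩|⟨_,h2⟩
                · exact absurd h1' hnua
                · exact h2
              right; exact ⟨fun hc => hnua hc.1, haC⟩
            have hstR : m+1 < n → relSt G C (w (m-1)) (w (m+1)) (w (m+2)) := by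
              intro h2
              have hSp1 := hw.2 (m+1) (by omega) h2
              rw [show m+1-1 = m by omega, show m+1+1 = m+2 by omega] at hSp1
              rcases hSp1 with ⟨_,h2',h3⟩|⟨h1',h2'⟩
              · left; exact ⟨eab, h2', h3⟩
              · right; exact ⟨fun hc => h1' ⟨eyb, hc.2⟩, h2'⟩
            obtain ⟨w', h0', hn', hw'⟩ := del_walk G C hw hm0 hmn (Or.inl eab) hstL hstR
            have hres := ihN (N-1) (by omega) (wgt G C (n-1) w') (n-1) w' (by omega) le_rfl hw'
            rw [h0', hn'] at hres
            exact hres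
        · by_cases hR : m+1 < n ∧ G.edge (w (m+2)) (w (m+1))
          · -- delete m+1
            have hSp1 := hw.2 (m+1) (by omega) hR.1
            rw [show m+1-1 = m by omega, show m+1+1 = m+2 by omega] at hSp1
            have hancB : anc G C (w (m+1)) := by
              rcases hSp1 with ⟨_,_,h⟩|⟨hno,_⟩
              · exact h
              · exact absurd ⟨eyb, hR.2⟩ hno
            have hyv : w m ≠ w (m+2) := by
              have := hsp (m+1) (by omega) hR.1
              rwa [show m+1-1 = m by omega, show m+1+1 = m+2 by omega] at this
            have hadjyv : G.adj (w m) (w (m+2)) := by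
              by_contra hno
              have hadjvb : G.adj (w (m+2)) (w (m+1)) := by
                have := hw.1 (m+1) hR.1
                rw [show m+1+1 = m+2 by omega] at this
                exact adj_symm G this
              have hvc : VConfig G.adj (w m) (w (m+1)) (w (m+2)) :=
                ⟨hyv, Or.inl eyb, hadjvb, hno⟩
              have := (hcol _ _ _ hvc).mp ⟨eyb, hR.2⟩
              exact edge_asymm H this.1 hcH.2
            have hstL' : 1 < m+1 → relSt G C (w (m+1-2)) (w (m+1-1)) (w (m+1+1)) := by
              intro _
              rw [show m+1-2 = m-1 by omega, show m+1-1 = m by omega,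
                show m+1+1 = m+2 by omega]
              right; exact ⟨fun hc => edge_asymm G eya hc.1, hyC⟩
            have hstR' : (m+1)+1 < n → relSt G C (w (m+1-1)) (w (m+1+1)) (w (m+1+2)) := by
              intro h2
              rw [show m+1-1 = m by omega, show m+1+1 = m+2 by omega,
                show m+1+2 = m+3 by omega]
              have hSp2 := hw.2 (m+2) (by omega) (by omega)
              rw [show m+2-1 = m+1 by omega, show m+2+1 = m+3 by omega] at hSp2
              have hvC : w (m+2) ∉ C := by
                rcases hSp2 with ⟨h1',_,_⟩|⟨_,h2'⟩
                · exact absurd h1' (edge_asymm G hR.2)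
                · exact h2'
              by_cases hcv : G.edge (w m) (w (m+2)) ∧ G.edge (w (m+3)) (w (m+2))
              · left; exact ⟨hcv.1, hcv.2, anc_step G hR.2 hancB⟩
              · right; exact ⟨hcv, hvC⟩
            have hadjq : G.adj (w (m+1-1)) (w (m+1+1)) := by
              rw [show m+1-1 = m by omega, show m+1+1 = m+2 by omega]
              exact hadjyv
            obtain ⟨w', h0', hn', hw'⟩ :=
              del_walk G C hw (q := m+1) (by omega) (by omega) hadjq hstL' hstR'
            have hres := ihN (N-1) (by omega) (wgt G C (n-1) w') (n-1) w' (by omega) le_rfl hw'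
            rw [h0', hn'] at hres
            exact hres
          · -- delete m
            have hstL : 1 < m → relSt G C (w (m-2)) (w (m-1)) (w (m+1)) := by
              intro h1
              have hSm1 := hw.2 (m-1) (by omega) (by omega)
              rw [show m-1-1 = m-2 by omega, show m-1+1 = m by omega] at hSm1
              rcases hSm1 with ⟨h1',_,h3⟩|⟨h1',h2'⟩
              · left; exact ⟨h1', eba, h3⟩
              · right; exact ⟨fun hc => h1' ⟨hc.1, eya⟩, h2'⟩
            have hstR : m+1 < n → relSt G C (w (m-1)) (w (m+1)) (w (m+2)) := by
              intro h2
              have hnvb : ¬ G.edge (w (m+2)) (w (m+1)) := fun h => hR ⟨h2, h⟩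
              have hSp1 := hw.2 (m+1) (by omega) h2
              rw [show m+1-1 = m by omega, show m+1+1 = m+2 by omega] at hSp1
              have hbC : w (m+1) ∉ C := by
                rcases hSp1 with ⟨_,h2',_⟩|⟨_,h2'⟩
                · exact absurd h2' hnvb
                · exact h2'
              right; exact ⟨fun hc => hnvb hc.2, hbC⟩
            obtain ⟨w', h0', hn', hw'⟩ := del_walk G C hw hm0 hmn (Or.inr eba) hstL hstR
            have hres := ihN (N-1) (by omega) (wgt G C (n-1) w') (n-1) w' (by omega) le_rfl hw'
            rw [h0', hn'] at hres
            exact hres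
      · -- y → a and b → y : delete m (shield b → a forced)
        have eba : G.edge (w (m+1)) (w (m-1)) := by
          rcases hshield with h | h
          · exact absurd (((Relation.TransGen.single eby).tail eya).tail h) (G.acyclic _)
          · exact h
        have hstL : 1 < m → relSt G C (w (m-2)) (w (m-1)) (w (m+1)) := by
          intro h1
          have hSm1 := hw.2 (m-1) (by omega) (by omega)
          rw [show m-1-1 = m-2 by omega, show m-1+1 = m by omega] at hSm1
          rcases hSm1 with ⟨h1',_,h3⟩|⟨h1',h2'⟩
          · left; exact ⟨h1', eba, h3⟩
          · right; exact ⟨fun hc => h1' ⟨hc.1, eya⟩, h2'⟩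
        have hstR : m+1 < n → relSt G C (w (m-1)) (w (m+1)) (w (m+2)) := by
          intro h2
          have hSp1 := hw.2 (m+1) (by omega) h2
          rw [show m+1-1 = m by omega, show m+1+1 = m+2 by omega] at hSp1
          have hbC : w (m+1) ∉ C := by
            rcases hSp1 with ⟨h1',_,_⟩|⟨_,h2'⟩
            · exact absurd h1' (edge_asymm G eby)
            · exact h2'
          right; exact ⟨fun hc => edge_asymm G eba hc.1, hbC⟩
        obtain ⟨w', h0', hn', hw'⟩ := del_walk G C hw hm0 hmn (Or.inr eba) hstL hstR
        have hres := ihN (N-1) (by omega) (wgt G C (n-1) w') (n-1) w' (by omega) le_rfl hw'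
        rw [h0', hn'] at hres
        exact hres
  push_neg at hdf
  by_cases hbad : ∃ m, 0 < m ∧ m < n ∧
      (G.edge (w (m-1)) (w m) ∧ G.edge (w (m+1)) (w m)) ∧ ¬ anc H C (w m)
  · -- collider whose H-descent is missing
    obtain ⟨m, hm0, hmn, hcGm, hnanc⟩ := hbad
    have hyC : w m ∉ C := fun h => hnanc (anc_of_mem H h)
    have hancG : anc G C (w m) := by
      rcases hw.2 m hm0 hmn with ⟨_,_,h⟩|⟨hno,_⟩
      · exact h
      · exact absurd hcGm hno
    obtain ⟨K, p, hK1, hdK, hp0, hpe, hpK, hpC, hsc, hd1⟩ := min_descent G hancG hyC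
    have eyp1 : G.edge (w m) (p 1) := by
      have := hpe 0 (by omega)
      rwa [hp0] at this
    by_cases hbothadj : G.adj (w (m-1)) (p 1) ∧ G.adj (w (m+1)) (p 1)
    · -- replace w m by p 1
      have eap1 : G.edge (w (m-1)) (p 1) := by
        rcases hbothadj.1 with h | h
        · exact h
        · exact absurd (((Relation.TransGen.single hcGm.1).tail eyp1).tail h) (G.acyclic _)
      have ebp1 : G.edge (w (m+1)) (p 1) := by
        rcases hbothadj.2 with h | h
        · exact h
        · exact absurd (((Relation.TransGen.single hcGm.2).tail eyp1).tail h) (G.acyclic _)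
      have hnp1a : ¬ G.edge (p 1) (w (m-1)) := edge_asymm G eap1
      have hnp1b : ¬ G.edge (p 1) (w (m+1)) := edge_asymm G ebp1
      set w' : ℕ → V := fun k => if k = m then p 1 else w k with hw'def
      have Ew : ∀ x, x ≠ m → w' x = w x := fun x hx => if_neg hx
      have Em : w' m = p 1 := if_pos rfl
      have hancp1 : anc G C (p 1) := by
        refine ⟨K-1, fun l => p (l+1), rfl, fun l hl => hpe (l+1) (by omega), ?_⟩
        show p (K-1+1) ∈ C
        rw [show K-1+1 = K by omega]
        exact hpK
      have hw'p : wprop G C n w' := by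
        constructor
        · intro k hk
          by_cases hk1 : k = m - 1
          · rw [Ew k (by omega), show k + 1 = m by omega, Em, show k = m - 1 by omega]
            exact Or.inl eap1
          by_cases hk2 : k = m
          · subst hk2
            rw [Em, Ew (k+1) (by omega)]
            exact Or.inr ebp1
          · rw [Ew k (by omega), Ew (k+1) (by omega)]
            exact hw.1 k hk
        · intro k hk0 hk
          by_cases hk1 : k = m - 1
          · have h2m : 2 ≤ m := by omega
            rw [Ew (k-1) (by omega), Ew k (by omega), show k + 1 = m by omega, Em]
            have hSm1 := hw.2 (m-1) (by omega) (by omega)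
            rw [show m-1-1 = m-2 by omega, show m-1+1 = m by omega] at hSm1
            have haC : w (m-1) ∉ C := by
              rcases hSm1 with ⟨_,h2,_⟩|⟨_,h2⟩
              · exact absurd h2 (edge_asymm G hcGm.1)
              · exact h2
            rw [show k = m-1 by omega]
            right
            exact ⟨fun hc => hnp1a hc.2, haC⟩
          by_cases hk2 : k = m
          · subst hk2
            rw [Ew (k-1) (by omega), Em, Ew (k+1) (by omega)]
            left
            exact ⟨(show G.edge (w (k-1)) (p 1) from eap1), ebp1, hancp1⟩
          by_cases hk3 : k = m + 1
          · subst hk3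
            rw [show m+1-1 = m by omega, Em, Ew (m+1) (by omega), Ew (m+1+1) (by omega)]
            have hSp1 := hw.2 (m+1) (by omega) hk
            rw [show m+1-1 = m by omega] at hSp1
            have hbC : w (m+1) ∉ C := by
              rcases hSp1 with ⟨h1',_,_⟩|⟨_,h2'⟩
              · exact absurd h1' (edge_asymm G hcGm.2)
              · exact h2'
            right
            exact ⟨fun hc => hnp1b hc.1, hbC⟩
          · rw [Ew (k-1) (by omega), Ew k (by omega), Ew (k+1) (by omega)]
            exact hw.2 k hk0 hk
      have hwgt : wgt G C n w' < wgt G C n w := by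
        unfold wgt
        apply Finset.sum_lt_sum
        · intro i hi
          simp only [Finset.mem_Ico] at hi
          by_cases h1 : i = m - 1
          · rw [if_neg]
            · exact Nat.zero_le _
            · rw [Ew i (by omega), show i + 1 = m by omega, Em]
              intro hc
              rw [show i = m - 1 by omega] at hc
              exact hnp1a hc.2
          by_cases h2 : i = m
          · subst h2
            rw [Ew (i-1) (by omega), Em, Ew (i+1) (by omega),
              if_pos ⟨(show G.edge (w (i-1)) (p 1) from eap1), ebp1⟩, if_pos hcGm]
            omega
          by_cases h3 : i = m + 1
          · rw [if_neg]
            · exact Nat.zero_le _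
            · rw [show i - 1 = m by omega, Em, Ew i (by omega)]
              intro hc
              rw [show i = m + 1 by omega] at hc
              exact hnp1b hc.1
          · rw [Ew (i-1) (by omega), Ew i (by omega), Ew (i+1) (by omega)]
        · refine ⟨m, Finset.mem_Ico.mpr ⟨by omega, hmn⟩, ?_⟩
          rw [Ew (m-1) (by omega), Em, Ew (m+1) (by omega),
            if_pos ⟨(show G.edge (w (m-1)) (p 1) from eap1), ebp1⟩, if_pos hcGm]
          omega
      have hres := ihΩ (wgt G C n w') (by omega) n w' hn le_rfl hw'p
      rw [Ew 0 (by omega), Ew n (by omega)] at hres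
      exact hres
    · -- contradiction : H-descent exists
      exfalso
      have hcHm : H.edge (w (m-1)) (w m) ∧ H.edge (w (m+1)) (w m) :=
        (hdf m hm0 hmn).mp hcGm
      have main : ∀ x, G.edge x (w m) → H.edge x (w m) → ¬ G.adj x (p 1) →
          H.edge (w m) (p 1) := by
        intro x hGx hHx hnadj
        have hxp1 : x ≠ p 1 := fun heq => edge_asymm G eyp1 (heq ▸ hGx)
        have hvc : VConfig G.adj x (w m) (p 1) := ⟨hxp1, Or.inl hGx, Or.inr eyp1, hnadj⟩
        have hniso : ¬ G.IsCollider x (w m) (p 1) := fun hc => edge_asymm G eyp1 hc.2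
        have hnH : ¬ H.IsCollider x (w m) (p 1) := fun hh => hniso ((hcol _ _ _ hvc).mpr hh)
        have hne : ¬ H.edge (p 1) (w m) := fun hh => hnH ⟨hHx, hh⟩
        rcases (hadj _ _).mp (Or.inl eyp1) with h | h
        · exact h
        · exact absurd h hne
      have key : H.edge (w m) (p 1) := by
        rcases not_and_or.mp hbothadj with h | h
        · exact main _ hcGm.1 hcHm.1 h
        · exact main _ hcGm.2 hcHm.2 h
      have chain : ∀ i, i < K → H.edge (p i) (p (i+1)) := by
        intro i
        induction i with
        | zero => intro _; rwa [hp0]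
        | succ i ihi =>
          intro hi
          have hprev := ihi (by omega)
          have hii : G.edge (p (i+1)) (p (i+2)) := by
            have := hpe (i+1) (by omega)
            rwa [show i+1+1 = i+2 by omega] at this
          have hne : p i ≠ p (i+2) := by
            intro heq
            apply G.acyclic (p i)
            have h2 := hii
            rw [← heq] at h2
            exact (Relation.TransGen.single (hpe i (by omega))).tail h2
          have hvc : VConfig G.adj (p i) (p (i+1)) (p (i+2)) :=
            ⟨hne, Or.inl (hpe i (by omega)), Or.inr hii, hsc i (by omega)⟩
          have hniso : ¬ G.IsCollider (p i) (p (i+1)) (p (i+2)) :=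
            fun hc => edge_asymm G hii hc.2
          have hnH : ¬ H.IsCollider (p i) (p (i+1)) (p (i+2)) :=
            fun hh => hniso ((hcol _ _ _ hvc).mpr hh)
          have hnr : ¬ H.edge (p (i+2)) (p (i+1)) := fun hh => hnH ⟨hprev, hh⟩
          have hfin : H.edge (p (i+1)) (p (i+2)) := by
            rcases (hadj _ _).mp (Or.inl hii) with h | h
            · exact h
            · exact absurd h hnr
          rwa [show i+2 = i+1+1 by omega] at hfin
      exact hnanc ⟨K, p, hp0, fun l hl => chain l hl, hpK⟩
  push_neg at hbad
  · refine ⟨n, w, rfl, rfl, fun k hk => (hadj _ _).mp (hw.1 k hk), ?_⟩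
    intro k hk0 hk
    have hiff := hdf k hk0 hk
    rcases hw.2 k hk0 hk with ⟨h1,h2,_⟩|⟨h1,h2⟩
    · have hH := hiff.mp ⟨h1,h2⟩
      exact Or.inl ⟨hH.1, hH.2, hbad k hk0 hk ⟨h1,h2⟩⟩
    · exact Or.inr ⟨fun hh => h1 (hiff.mpr hh), h2⟩

end PCwork
namespace PCwork
open DAG
variable {V : Type}

lemma conn_transfer (G H : DAG V)
    (hadj : ∀ a b, G.adj a b ↔ H.adj a b)
    (hcol : ∀ a k b, VConfig G.adj a k b → (G.IsCollider a k b ↔ H.IsCollider a k b))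
    {C : Set V} {i j : V} (h : G.ConnWalk i j C) : H.ConnWalk i j C :=
  rw_to_conn H (rw_transfer G H hadj hcol C i j (conn_to_rw G h))

lemma vconfig_transfer {G H : DAG V} (hadj : ∀ a b, G.adj a b ↔ H.adj a b)
    {a k b : V} (h : VConfig H.adj a k b) : VConfig G.adj a k b :=
  ⟨h.1, (hadj _ _).mpr h.2.1, (hadj _ _).mpr h.2.2.1, fun hc => h.2.2.2 ((hadj _ _).mp hc)⟩

lemma J_eq_of (G H : DAG V)
    (hadj : ∀ a b, G.adj a b ↔ H.adj a b)
    (hcol : ∀ a k b, VConfig G.adj a k b → (G.IsCollider a k b ↔ H.IsCollider a k b)) :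
    G.J = H.J := by
  have hadj' : ∀ a b, H.adj a b ↔ G.adj a b := fun a b => (hadj a b).symm
  have hcol' : ∀ a k b, VConfig H.adj a k b → (H.IsCollider a k b ↔ G.IsCollider a k b) :=
    fun a k b hv => (hcol a k b (vconfig_transfer hadj hv)).symm
  ext t
  show (DisjTriple t ∧ G.dsep t.1 t.2.1 t.2.2) ↔ (DisjTriple t ∧ H.dsep t.1 t.2.1 t.2.2)
  constructor
  · rintro ⟨hd, hsep⟩
    exact ⟨hd, fun a ha b hb hcw => hsep a ha b hb (conn_transfer H G hadj' hcol' hcw)⟩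
  · rintro ⟨hd, hsep⟩
    exact ⟨hd, fun a ha b hb hcw => hsep a ha b hb (conn_transfer G H hadj hcol hcw)⟩

end PCwork

theorem PC_rule1_exact_correctness' {V : Type}
    (P : Set (Set V × Set V × Set V))
    (G₀ : DAG V) :
    V1 P G₀ ↔
      ((∃ G : DAG V, V1 P G) ∧ ∀ G : DAG V, V1 P G → DAG.J G = DAG.J G₀) := by
  open PCwork in
  constructor
  · intro h₀
    refine ⟨⟨G₀, h₀⟩, ?_⟩
    intro G hG
    have hadj : ∀ a b, G.adj a b ↔ G₀.adj a b :=
      fun a b => (hG.1 a b).symm.trans (h₀.1 a b)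
    have hcol : ∀ a k b, VConfig G.adj a k b → (G.IsCollider a k b ↔ G₀.IsCollider a k b) := by
      intro a k b hv
      have hv₀ : VConfig G₀.adj a k b := vconfig_transfer (fun x y => (hadj x y).symm) hv
      exact (hG.2 a k b hv).trans (h₀.2 a k b hv₀).symm
    exact J_eq_of G G₀ hadj hcol
  · rintro ⟨⟨G, hG⟩, hall⟩
    have hJ : G.J = G₀.J := hall G hG
    have hadjGG0 : ∀ a b, G.adj a b ↔ G₀.adj a b := by
      intro a b
      rw [adj_iff_J G, adj_iff_J G₀, hJ]
    constructor
    · intro a b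
      exact (hG.1 a b).trans (hadjGG0 a b)
    · intro i k j hv₀
      have hv : VConfig G.adj i k j := vconfig_transfer hadjGG0 hv₀
      have e1 := coll_iff_J G i k j hv
      have e2 := coll_iff_J G₀ i k j hv₀
      rw [hJ] at e1
      exact (e2.trans e1.symm).trans (hG.2 i k j hv)

/-- Exact correctness condition for the PC algorithm with orientation rule 1
(Proposition 6, case I = 1): `V₁(P, G₀) = ⊤` iff the output set
`{G : V₁(P,G) = ⊤}` of the PC variant using orientation rule 1 is nonempty and
every DAG in it is Markov equivalent to the true causal graph `G₀`. -/
theorem PC_rule1_exact_correctness {V : Type} [Fintype V]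
    (P : Set (Set V × Set V × Set V)) (hP : ∀ t ∈ P, DisjTriple t)
    (G₀ : DAG V) :
    V1 P G₀ ↔
      ((∃ G : DAG V, V1 P G) ∧ ∀ G : DAG V, V1 P G → DAG.J G = DAG.J G₀) :=
  PC_rule1_exact_correctness' P G₀
end

section
/- Exact correctness condition for the PC algorithm with orientation rule 2 (Proposition 6, case I = 2): For every independence model P and every DAG G₀ on V, V₂(P,G₀) = ⊤ if and only if the set {G a DAG on V : V₂(P,G) = ⊤} is nonempty and every DAG in this set is Markov equivalent to G₀ (the set being the output of the PC variant using orientation rule 2, and the right-hand side being correctness of that algorithm). -/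
/-- The property `V₂` corresponding to PC orientation rule 2: `sk(P) = sk(G)` and
for every v-configuration `i∼k∼j` of `sk(G)`, `i∼k∼j` is a non-collider in `G` iff
for every `C ⊆ V ∖ {i,j}` with `i ⊥⊥ j | C` we have `k ∈ C`. -/
def V2 {V : Type} (P : Set (Set V × Set V × Set V)) (G : DAG V) : Prop :=
  (∀ i j, skP P i j ↔ G.adj i j) ∧
  ∀ i k j, VConfig G.adj i k j →
    (¬ G.IsCollider i k j ↔
      ∀ C : Set V, i ∉ C → j ∉ C → (({i} : Set V), ({j} : Set V), C) ∈ P → k ∈ C)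

namespace PCProof


variable {V : Type}

def Ac (e : V → V → Prop) : Prop := ∀ i, ¬ Relation.TransGen e i i

lemma Ac.no_self {e : V → V → Prop} (he : Ac e) (i : V) : ¬ e i i :=
  fun h => he i (Relation.TransGen.single h)

lemma Ac.no2 {e : V → V → Prop} (he : Ac e) {u v : V} (h1 : e u v) (h2 : e v u) : False :=
  he u (Relation.TransGen.head h1 (Relation.TransGen.single h2))

def adjr (e : V → V → Prop) (u v : V) : Prop := e u v ∨ e v u

lemma adjr_symm {e : V → V → Prop} {u v : V} : adjr e u v → adjr e v u := Or.symm

def okw (e : V → V → Prop) (C : Set V) (n : ℕ) (w : ℕ → V) : Prop :=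
  (∀ m, m < n → adjr e (w m) (w (m + 1))) ∧
  (∀ m, 0 < m → m < n → ((e (w (m - 1)) (w m) ∧ e (w (m + 1)) (w m)) ↔ w m ∈ C))

def conn (e : V → V → Prop) (C : Set V) (i j : V) : Prop :=
  ∃ (n : ℕ) (w : ℕ → V), w 0 = i ∧ w n = j ∧ okw e C n w

lemma connWalk_iff (G : DAG V) (C : Set V) (i j : V) :
    G.ConnWalk i j C ↔ conn G.edge C i j := Iff.rfl

lemma conn_refl (e : V → V → Prop) (C : Set V) (i : V) : conn e C i i :=
  ⟨0, fun _ => i, rfl, rfl, fun m hm => absurd hm (by omega),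
    fun m h1 h2 => absurd h2 (by omega)⟩

lemma conn_single {e : V → V → Prop} {C : Set V} {i j : V} (h : adjr e i j) : conn e C i j := by
  refine ⟨1, fun t => if t = 0 then i else j, by simp, by simp, ?_, ?_⟩
  · intro m hm
    have : m = 0 := by omega
    subst this; simpa using h
  · intro m h1 h2; omega

lemma okw_sub {e : V → V → Prop} {C : Set V} {n : ℕ} {w : ℕ → V} (h : okw e C n w)
    (s t : ℕ) (htn : t ≤ n) :
    okw e C (t - s) (fun u => w (s + u)) := by
  constructor
  · intro m hm
    have h1 : s + m < n := by omega
    have := h.1 (s + m) h1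
    have e2 : s + (m + 1) = s + m + 1 := by omega
    simpa only [e2] using this
  · intro m hm0 hmt
    have h1 : 0 < s + m := by omega
    have h2 : s + m < n := by omega
    have := h.2 (s + m) h1 h2
    have e1 : s + (m - 1) = s + m - 1 := by omega
    have e2 : s + (m + 1) = s + m + 1 := by omega
    simpa only [e1, e2] using this

lemma okw_rev {e : V → V → Prop} {C : Set V} {n : ℕ} {w : ℕ → V} (h : okw e C n w) :
    okw e C n (fun t => w (n - t)) := by
  constructor
  · intro m hm
    have := h.1 (n - m - 1) (by omega)
    have e1 : n - m - 1 + 1 = n - m := by omega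
    have e2 : n - (m + 1) = n - m - 1 := by omega
    rw [e1] at this
    simpa only [e2] using adjr_symm this
  · intro m hm0 hmn
    have := h.2 (n - m) (by omega) (by omega)
    have e1 : n - (m - 1) = n - m + 1 := by omega
    have e2 : n - (m + 1) = n - m - 1 := by omega
    simp only [e1, e2]
    rw [and_comm]
    exact this

lemma conn_symm {e : V → V → Prop} {C : Set V} {i j : V} (h : conn e C i j) : conn e C j i := by
  obtain ⟨n, w, h0, hn, hw⟩ := h
  exact ⟨n, fun t => w (n - t), by simpa using hn, by simpa using h0, okw_rev hw⟩

lemma okw_del1 {e : V → V → Prop} {C : Set V} {n : ℕ} {w : ℕ → V} (h : okw e C n w)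
    (q : ℕ) (h0 : 0 < q) (hn : q < n)
    (hadj : adjr e (w (q - 1)) (w (q + 1)))
    (hL : 1 < q → ((e (w (q - 2)) (w (q - 1)) ∧ e (w (q + 1)) (w (q - 1))) ↔ w (q - 1) ∈ C))
    (hR : q + 1 < n → ((e (w (q - 1)) (w (q + 1)) ∧ e (w (q + 2)) (w (q + 1))) ↔ w (q + 1) ∈ C)) :
    ∃ w', w' 0 = w 0 ∧ w' (n - 1) = w n ∧ okw e C (n - 1) w' := by
  set w' : ℕ → V := fun t => if t < q then w t else w (t + 1) with hw'
  have hlt : ∀ t, t < q → w' t = w t := by intro t ht; simp [hw', ht]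
  have hge : ∀ t, q ≤ t → w' t = w (t + 1) := by
    intro t ht; simp [hw', Nat.not_lt.mpr ht]
  refine ⟨w', hlt 0 h0, ?_, ?_, ?_⟩
  · rw [hge (n - 1) (by omega)]; congr 1; omega
  · intro m hm
    rcases lt_trichotomy (m + 1) q with hc | hc | hc
    · rw [hlt m (by omega), hlt (m + 1) hc]
      exact h.1 m (by omega)
    · rw [hlt m (by omega), hge (m + 1) (by omega)]
      have e1 : m = q - 1 := by omega
      have e2 : m + 1 + 1 = q + 1 := by omega
      rw [e2, e1]
      exact hadj
    · rw [hge m (by omega), hge (m + 1) (by omega)]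
      exact h.1 (m + 1) (by omega)
  · intro m hm0 hmn
    rcases lt_trichotomy (m + 1) q with hc | hc | hc
    · rw [hlt (m - 1) (by omega), hlt m (by omega), hlt (m + 1) hc]
      exact h.2 m hm0 (by omega)
    · -- m = q - 1
      rw [hlt (m - 1) (by omega), hlt m (by omega), hge (m + 1) (by omega)]
      have e1 : m - 1 = q - 2 := by omega
      have e2 : m = q - 1 := by omega
      have e3 : m + 1 + 1 = q + 1 := by omega
      rw [e3, e1, e2]
      exact hL (by omega)
    · rcases Nat.eq_or_lt_of_le (Nat.succ_le_of_lt hc) with hq | hq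
      · -- q + 1 = m + 1, i.e. m = q
        have e0 : m = q := by omega
        subst e0
        rw [hlt (m - 1) (by omega), hge m (le_refl _), hge (m + 1) (by omega)]
        have e1 : m - 1 = m - 1 := rfl
        have e3 : m + 1 + 1 = m + 2 := by omega
        rw [e3]
        exact hR (by omega)
      · -- m > q
        rw [hge (m - 1) (by omega), hge m (by omega), hge (m + 1) (by omega)]
        have := h.2 (m + 1) (by omega) (by omega)
        have e1 : m - 1 + 1 = m + 1 - 1 := by omega
        have e3 : m + 1 + 1 = m + 1 + 1 := rfl
        rw [e1]
        exact this

lemma okw_del2 {e : V → V → Prop} {C : Set V} {n : ℕ} {w : ℕ → V} (h : okw e C n w)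
    (q : ℕ) (h0 : 0 < q) (hn : q + 1 < n)
    (hadj : adjr e (w (q - 1)) (w (q + 2)))
    (hL : 1 < q → ((e (w (q - 2)) (w (q - 1)) ∧ e (w (q + 2)) (w (q - 1))) ↔ w (q - 1) ∈ C))
    (hR : q + 2 < n → ((e (w (q - 1)) (w (q + 2)) ∧ e (w (q + 3)) (w (q + 2))) ↔ w (q + 2) ∈ C)) :
    ∃ w', w' 0 = w 0 ∧ w' (n - 2) = w n ∧ okw e C (n - 2) w' := by
  set w' : ℕ → V := fun t => if t < q then w t else w (t + 2) with hw'
  have hlt : ∀ t, t < q → w' t = w t := by intro t ht; simp [hw', ht]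
  have hge : ∀ t, q ≤ t → w' t = w (t + 2) := by
    intro t ht; simp [hw', Nat.not_lt.mpr ht]
  refine ⟨w', hlt 0 h0, ?_, ?_, ?_⟩
  · rw [hge (n - 2) (by omega)]; congr 1; omega
  · intro m hm
    rcases lt_trichotomy (m + 1) q with hc | hc | hc
    · rw [hlt m (by omega), hlt (m + 1) hc]
      exact h.1 m (by omega)
    · rw [hlt m (by omega), hge (m + 1) (by omega)]
      have e2 : m + 1 + 2 = q + 2 := by omega
      have e1 : m = q - 1 := by omega
      rw [e2, e1]
      exact hadj
    · rw [hge m (by omega), hge (m + 1) (by omega)]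
      have e2 : m + 1 + 2 = m + 2 + 1 := by omega
      rw [e2]
      exact h.1 (m + 2) (by omega)
  · intro m hm0 hmn
    rcases lt_trichotomy (m + 1) q with hc | hc | hc
    · rw [hlt (m - 1) (by omega), hlt m (by omega), hlt (m + 1) hc]
      exact h.2 m hm0 (by omega)
    · rw [hlt (m - 1) (by omega), hlt m (by omega), hge (m + 1) (by omega)]
      have e3 : m + 1 + 2 = q + 2 := by omega
      have e1 : m - 1 = q - 2 := by omega
      have e2 : m = q - 1 := by omega
      rw [e3, e1, e2]
      exact hL (by omega)
    · rcases Nat.eq_or_lt_of_le (Nat.succ_le_of_lt hc) with hq | hq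
      · have e0 : m = q := by omega
        subst e0
        rw [hlt (m - 1) (by omega), hge m (le_refl _), hge (m + 1) (by omega)]
        have e3 : m + 1 + 2 = m + 3 := by omega
        rw [e3]
        exact hR (by omega)
      · rw [hge (m - 1) (by omega), hge m (by omega), hge (m + 1) (by omega)]
        have := h.2 (m + 2) (by omega) (by omega)
        have e1 : m - 1 + 2 = m + 2 - 1 := by omega
        have e2 : m + 1 + 2 = m + 2 + 1 := by omega
        rw [e1, e2]
        exact this

lemma okw_rep3 {e : V → V → Prop} {C : Set V} {n : ℕ} {w : ℕ → V} (h : okw e C n w)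
    (q : ℕ) (v : V) (h0 : 0 < q) (hn : q + 2 < n)
    (hadjL : adjr e (w (q - 1)) v) (hadjR : adjr e v (w (q + 3)))
    (hL : 1 < q → ((e (w (q - 2)) (w (q - 1)) ∧ e v (w (q - 1))) ↔ w (q - 1) ∈ C))
    (hM : (e (w (q - 1)) v ∧ e (w (q + 3)) v) ↔ v ∈ C)
    (hR : q + 3 < n → ((e v (w (q + 3)) ∧ e (w (q + 4)) (w (q + 3))) ↔ w (q + 3) ∈ C)) :
    ∃ w', w' 0 = w 0 ∧ w' (n - 2) = w n ∧ okw e C (n - 2) w' := by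
  set w' : ℕ → V := fun t => if t < q then w t else if t = q then v else w (t + 2) with hw'
  have hlt : ∀ t, t < q → w' t = w t := by intro t ht; simp [hw', ht]
  have heq : w' q = v := by simp [hw']
  have hge : ∀ t, q < t → w' t = w (t + 2) := by
    intro t ht
    have h1 : ¬ t < q := by omega
    have h2 : ¬ t = q := by omega
    simp [hw', h1, h2]
  refine ⟨w', hlt 0 h0, ?_, ?_, ?_⟩
  · rw [hge (n - 2) (by omega)]; congr 1; omega
  · intro m hm
    rcases lt_trichotomy (m + 1) q with hc | hc | hc
    · rw [hlt m (by omega), hlt (m + 1) hc]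
      exact h.1 m (by omega)
    · have e1 : m + 1 = q := hc
      rw [hlt m (by omega), e1, heq]
      have e2 : m = q - 1 := by omega
      rw [e2]
      exact hadjL
    · rcases Nat.eq_or_lt_of_le (Nat.succ_le_of_lt hc) with hq | hq
      · have e0 : m = q := by omega
        subst e0
        rw [heq, hge (m + 1) (by omega)]
        have e3 : m + 1 + 2 = m + 3 := by omega
        rw [e3]
        exact hadjR
      · rw [hge m (by omega), hge (m + 1) (by omega)]
        have e2 : m + 1 + 2 = m + 2 + 1 := by omega
        rw [e2]
        exact h.1 (m + 2) (by omega)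
  · intro m hm0 hmn
    rcases lt_trichotomy (m + 1) q with hc | hc | hc
    · rw [hlt (m - 1) (by omega), hlt m (by omega), hlt (m + 1) hc]
      exact h.2 m hm0 (by omega)
    · rw [hlt (m - 1) (by omega), hlt m (by omega), hc, heq]
      have e1 : m - 1 = q - 2 := by omega
      have e2 : m = q - 1 := by omega
      rw [e1, e2]
      exact hL (by omega)
    · rcases Nat.eq_or_lt_of_le (Nat.succ_le_of_lt hc) with hq | hq
      · have e0 : m = q := by omega
        subst e0
        rw [hlt (m - 1) (by omega), heq, hge (m + 1) (by omega)]
        have e3 : m + 1 + 2 = m + 3 := by omega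
        have e1 : m - 1 = m - 1 := rfl
        rw [e3]
        exact hM
      · rcases Nat.eq_or_lt_of_le (Nat.succ_le_of_lt hq) with hq2 | hq2
        · have em1 : m - 1 = q := by omega
          rw [hge m (by omega), hge (m + 1) (by omega), em1, heq]
          have e3 : m + 2 = q + 3 := by omega
          have e4 : m + 1 + 2 = q + 4 := by omega
          rw [e3, e4]
          exact hR (by omega)
        · rw [hge (m - 1) (by omega), hge m (by omega), hge (m + 1) (by omega)]
          have := h.2 (m + 2) (by omega) (by omega)
          have e1 : m - 1 + 2 = m + 2 - 1 := by omega
          have e2 : m + 1 + 2 = m + 2 + 1 := by omega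
          rw [e1, e2]
          exact this

def SepS (e : V → V → Prop) (i j : V) : Set V :=
  {x | x ≠ i ∧ x ≠ j ∧ (Relation.TransGen e x i ∨ Relation.TransGen e x j)}

lemma descend_gen {e : V → V → Prop} {i j : V} {n : ℕ} {w : ℕ → V}
    (hw : okw e (SepS e i j) n w) (hend : w n = i ∨ w n = j) :
    ∀ t, t < n → e (w t) (w (t + 1)) →
      Relation.TransGen e (w t) i ∨ Relation.TransGen e (w t) j := by
  have H : ∀ d t, t < n → n - t ≤ d → e (w t) (w (t + 1)) →
      Relation.TransGen e (w t) i ∨ Relation.TransGen e (w t) j := by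
    intro d
    induction d with
    | zero => intro t ht hd _; omega
    | succ d IH =>
      intro t ht hd hstep
      rcases Nat.eq_or_lt_of_le (Nat.succ_le_of_lt ht) with hEnd | hlt1
      · have hEnd' : t + 1 = n := hEnd
        rw [hEnd'] at hstep
        rcases hend with h | h
        · rw [h] at hstep; exact Or.inl (Relation.TransGen.single hstep)
        · rw [h] at hstep; exact Or.inr (Relation.TransGen.single hstep)
      · by_cases hc : w (t + 1) ∈ SepS e i j
        · obtain ⟨-, -, h3⟩ := hc
          rcases h3 with h3 | h3
          · exact Or.inl (Relation.TransGen.head hstep h3)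
          · exact Or.inr (Relation.TransGen.head hstep h3)
        · have hst := hw.2 (t + 1) (by omega) hlt1
          have e1 : t + 1 - 1 = t := by omega
          rw [e1] at hst
          have hnB : ¬ e (w (t + 1 + 1)) (w (t + 1)) := by
            intro hB
            exact hc (hst.mp ⟨hstep, hB⟩)
          have hadj := hw.1 (t + 1) hlt1
          have hstep2 : e (w (t + 1)) (w (t + 1 + 1)) := by
            rcases hadj with h | h
            · exact h
            · exact absurd h hnB
          have := IH (t + 1) hlt1 (by omega) hstep2
          rcases this with h | h
          · exact Or.inl (Relation.TransGen.head hstep h)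
          · exact Or.inr (Relation.TransGen.head hstep h)
  intro t ht hstep
  exact H (n - t) t ht (le_refl _) hstep

lemma descend_left {e : V → V → Prop} {i j : V} {n : ℕ} {w : ℕ → V}
    (hw : okw e (SepS e i j) n w) (h0 : w 0 = i ∨ w 0 = j) :
    ∀ t, 0 < t → t ≤ n → e (w t) (w (t - 1)) →
      Relation.TransGen e (w t) i ∨ Relation.TransGen e (w t) j := by
  intro t ht0 htn hstep
  have hrev := okw_rev hw
  have hend : (fun u => w (n - u)) n = i ∨ (fun u => w (n - u)) n = j := by
    simpa using h0
  have hedge : e ((fun u => w (n - u)) (n - t)) ((fun u => w (n - u)) (n - t + 1)) := by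
    have e1 : n - (n - t) = t := by omega
    have e2 : n - (n - t + 1) = t - 1 := by omega
    simp only [e1, e2]
    exact hstep
  have := descend_gen hrev hend (n - t) (by omega) hedge
  have e1 : n - (n - t) = t := by omega
  simp only [e1] at this
  exact this

lemma not_conn_sep {e : V → V → Prop} (he : Ac e) {i j : V} (hij : i ≠ j)
    (hna : ¬ adjr e i j) : ¬ conn e (SepS e i j) i j := by
  suffices H : ∀ n, ∀ w : ℕ → V, w 0 = i → w n = j → ¬ okw e (SepS e i j) n w by
    rintro ⟨n, w, h0, hn, hw⟩; exact H n w h0 hn hw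
  intro n
  induction n using Nat.strong_induction_on with
  | _ n IH =>
    intro w h0 hn hw
    by_cases hrep : ∃ m, 0 < m ∧ m < n ∧ (w m = i ∨ w m = j)
    · obtain ⟨m, hm0, hmn, hm⟩ := hrep
      rcases hm with hm | hm
      · have hsub := okw_sub hw m n (le_refl n)
        exact IH (n - m) (by omega) _ (by simpa using hm)
          (by show w (m + (n - m)) = j; rw [show m + (n - m) = n by omega]; exact hn) hsub
      · have hsub := okw_sub hw 0 m (by omega)
        exact IH (m - 0) (by omega) _ (by simpa using h0) (by simpa using hm) hsub
    · push_neg at hrep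
      have hcol : ∀ m, 0 < m → m < n → e (w (m - 1)) (w m) ∧ e (w (m + 1)) (w m) := by
        intro m hm0 hmn
        by_contra hnc
        have hout : e (w m) (w (m - 1)) ∨ e (w m) (w (m + 1)) := by
          rcases Classical.em (e (w (m - 1)) (w m)) with hA | hA
          · have hadj2 := hw.1 m hmn
            rcases hadj2 with h | h
            · exact Or.inr h
            · exact absurd ⟨hA, h⟩ hnc
          · have hadj1 := hw.1 (m - 1) (by omega)
            have e1 : m - 1 + 1 = m := by omega
            rw [e1] at hadj1
            rcases hadj1 with h | h
            · exact absurd h hA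
            · exact Or.inl h
        have hAn : Relation.TransGen e (w m) i ∨ Relation.TransGen e (w m) j := by
          rcases hout with hout | hout
          · exact descend_left hw (Or.inl h0) m hm0 (by omega) hout
          · exact descend_gen hw (Or.inr hn) m hmn hout
        have hmem : w m ∈ SepS e i j :=
          ⟨(hrep m hm0 hmn).1, (hrep m hm0 hmn).2, hAn⟩
        exact hnc ((hw.2 m hm0 hmn).mpr hmem)
      rcases Nat.lt_or_ge n 2 with hn2 | hn2
      · interval_cases n
        · exact hij (h0 ▸ hn ▸ rfl)
        · exact hna (by rw [← h0, ← hn]; exact hw.1 0 (by omega))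
      · have h1 := hcol 1 one_pos (by omega)
        norm_num at h1
        have hst1 := hw.2 1 one_pos (by omega)
        norm_num at hst1
        have hmem1 : w 1 ∈ SepS e i j := hst1.mp h1
        obtain ⟨-, -, h3⟩ := hmem1
        rcases h3 with h3 | h3
        · exact he i (Relation.TransGen.head (h0 ▸ h1.1) h3)
        · rcases Nat.eq_or_lt_of_le hn2 with h2 | h2
          · have hj : w 2 = j := by rw [← h2] at hn; exact hn
            exact he j (Relation.TransGen.head (hj ▸ h1.2) h3)
          · have hcol2 := hcol 2 (by omega) h2
            norm_num at hcol2
            exact he.no2 hcol2.1 h1.2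

lemma adj_ne {e : V → V → Prop} (he : Ac e) {u v : V} (h : adjr e u v) : u ≠ v := by
  rintro rfl; rcases h with h | h <;> exact he.no_self u h

lemma mem_J_singleton (G : DAG V) {i j : V} {C : Set V} :
    (({i} : Set V), ({j} : Set V), C) ∈ G.J ↔
      (i ≠ j ∧ i ∉ C ∧ j ∉ C) ∧ ¬ conn G.edge C i j := by
  constructor
  · rintro ⟨⟨d1, d2, d3⟩, hd⟩
    refine ⟨⟨?_, ?_, ?_⟩, ?_⟩
    · simpa [Set.disjoint_singleton] using d1
    · simpa [Set.disjoint_singleton_left] using d2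
    · simpa [Set.disjoint_singleton_left] using d3
    · exact hd i rfl j rfl
  · rintro ⟨⟨hne, hiC, hjC⟩, hconn⟩
    refine ⟨⟨?_, ?_, ?_⟩, ?_⟩
    · simpa [Set.disjoint_singleton] using hne
    · simpa [Set.disjoint_singleton_left] using hiC
    · simpa [Set.disjoint_singleton_left] using hjC
    · rintro i' rfl j' rfl
      exact hconn

lemma adj_char (G : DAG V) (i j : V) :
    G.adj i j ↔ i ≠ j ∧
      ¬ ∃ C : Set V, i ∉ C ∧ j ∉ C ∧ (({i} : Set V), ({j} : Set V), C) ∈ G.J := by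
  constructor
  · intro h
    have hne : i ≠ j := adj_ne G.acyclic h
    refine ⟨hne, ?_⟩
    rintro ⟨C, hiC, hjC, hmem⟩
    exact ((mem_J_singleton G).mp hmem).2 (conn_single h)
  · rintro ⟨hne, hnex⟩
    by_contra hnadj
    exact hnex ⟨SepS G.edge i j, fun h => h.1 rfl, fun h => h.2.1 rfl,
      (mem_J_singleton G).mpr ⟨⟨hne, fun h => h.1 rfl, fun h => h.2.1 rfl⟩,
        not_conn_sep G.acyclic hne hnadj⟩⟩

lemma noncollider_char (G : DAG V) {i k j : V} (hv : VConfig G.adj i k j) :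
    (¬ G.IsCollider i k j) ↔
      ∀ C : Set V, i ∉ C → j ∉ C → (({i} : Set V), ({j} : Set V), C) ∈ G.J → k ∈ C := by
  obtain ⟨hij, hik, hjk, hnadj⟩ := hv
  constructor
  · intro hnc C hiC hjC hmem
    by_contra hkC
    have hconn : conn G.edge C i j := by
      refine ⟨2, fun t => if t = 0 then i else if t = 1 then k else j,
        by norm_num, by norm_num, ?_, ?_⟩
      · intro m hm
        interval_cases m
        · simpa [adjr, DAG.adj] using hik
        · simpa using adjr_symm hjk
      · intro m h1 h2
        have hm : m = 1 := by omega
        subst hm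
        norm_num
        exact iff_of_false hnc hkC
    exact ((mem_J_singleton G).mp hmem).2 hconn
  · intro h hcol
    have hC := h (SepS G.edge i j) (fun hh => hh.1 rfl) (fun hh => hh.2.1 rfl)
      ((mem_J_singleton G).mpr ⟨⟨hij, fun hh => hh.1 rfl, fun hh => hh.2.1 rfl⟩,
        not_conn_sep G.acyclic hij hnadj⟩)
    obtain ⟨-, -, h3⟩ := hC
    rcases h3 with h3 | h3
    · exact G.acyclic i (Relation.TransGen.head hcol.1 h3)
    · exact G.acyclic j (Relation.TransGen.head hcol.2 h3)

def Covered (e : V → V → Prop) (x y : V) : Prop :=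
  e x y ∧ ∀ z, e z y ↔ (z = x ∨ e z x)

def rev (e : V → V → Prop) (x y : V) : V → V → Prop :=
  fun u v => (e u v ∧ ¬(u = x ∧ v = y)) ∨ (u = y ∧ v = x)

lemma covered_ne {e : V → V → Prop} {x y : V} (he : Ac e) (hc : Covered e x y) : x ≠ y :=
  fun h => he.no_self x (h ▸ hc.1)

lemma rev_eq_of_ne {e : V → V → Prop} {x y u v : V}
    (h1 : ¬(u = x ∧ v = y)) (h2 : ¬(u = y ∧ v = x)) :
    rev e x y u v ↔ e u v := by
  unfold rev; tauto

lemma adjr_rev {e : V → V → Prop} {x y : V} (he : Ac e) (hxy : e x y) (u v : V) :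
    adjr (rev e x y) u v ↔ adjr e u v := by
  unfold adjr rev
  constructor
  · rintro ((⟨h, -⟩ | ⟨rfl, rfl⟩) | (⟨h, -⟩ | ⟨rfl, rfl⟩))
    · exact Or.inl h
    · exact Or.inr hxy
    · exact Or.inr h
    · exact Or.inl hxy
  · rintro (h | h)
    · by_cases hp : u = x ∧ v = y
      · exact Or.inr (Or.inr ⟨hp.2, hp.1⟩)
      · left; left
        refine ⟨h, hp⟩
    · by_cases hp : v = x ∧ u = y
      · exact Or.inl (Or.inr ⟨hp.2, hp.1⟩)
      · right; left
        exact ⟨h, hp⟩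

lemma rev_acyclic {e : V → V → Prop} {x y : V} (he : Ac e) (hc : Covered e x y) :
    Ac (rev e x y) := by
  obtain ⟨hxy, hcov⟩ := hc
  set e'' : V → V → Prop := fun u v => e u v ∧ ¬(u = x ∧ v = y) with he''
  have hsplit : ∀ u v, Relation.TransGen (rev e x y) u v →
      Relation.TransGen e'' u v ∨
      (Relation.ReflTransGen e'' u y ∧ Relation.ReflTransGen e'' x v) := by
    intro u v h
    induction h with
    | single h =>
      rcases h with h | ⟨h1, h2⟩
      · exact Or.inl (Relation.TransGen.single h)
      · subst h1; subst h2
        exact Or.inr ⟨Relation.ReflTransGen.refl, Relation.ReflTransGen.refl⟩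
    | tail hUb hbc IH =>
      rcases hbc with hbc | ⟨h1, h2⟩
      · rcases IH with IH | ⟨IH1, IH2⟩
        · exact Or.inl (Relation.TransGen.tail IH hbc)
        · exact Or.inr ⟨IH1, Relation.ReflTransGen.tail IH2 hbc⟩
      · subst h1; subst h2
        rcases IH with IH | ⟨IH1, IH2⟩
        · exact Or.inr ⟨IH.to_reflTransGen, Relation.ReflTransGen.refl⟩
        · exact Or.inr ⟨IH1, Relation.ReflTransGen.refl⟩
  intro z hz
  rcases hsplit z z hz with h | ⟨h1, h2⟩
  · exact he z (Relation.TransGen.lift id (fun a b (hab : e'' a b) => hab.1) _ _ h)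
  · have hxz : Relation.ReflTransGen e'' x y := Relation.ReflTransGen.trans h2 h1
    have hne : x ≠ y := fun h => he.no_self x (h ▸ hxy)
    have htg : Relation.TransGen e'' x y := by
      rcases Relation.reflTransGen_iff_eq_or_transGen.mp hxz with h | h
      · exact absurd h.symm hne
      · exact h
    obtain ⟨v, hrtg, hvy⟩ := Relation.TransGen.tail'_iff.mp htg
    have hvx : e v x := by
      rcases (hcov v).mp hvy.1 with h | h
      · exact absurd ⟨h, rfl⟩ hvy.2
      · exact h
    exact he x (Relation.TransGen.tail'
      (Relation.ReflTransGen.lift id (fun a b (hab : e'' a b) => hab.1) _ _ hrtg) hvx)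

lemma rev_covered {e : V → V → Prop} {x y : V} (he : Ac e) (hc : Covered e x y) :
    Covered (rev e x y) y x := by
  obtain ⟨hxy, hcov⟩ := hc
  have hne : x ≠ y := fun h => he.no_self x (h ▸ hxy)
  refine ⟨Or.inr ⟨rfl, rfl⟩, ?_⟩
  intro z
  constructor
  · rintro (⟨hz, hne2⟩ | ⟨h1, h2⟩)
    · right; left
      exact ⟨(hcov z).mpr (Or.inr hz), fun hh => he.no_self x (hh.1 ▸ hz)⟩
    · exact Or.inl h1
  · rintro (hz | hzy)
    · exact Or.inr ⟨hz, rfl⟩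
    · rcases hzy with ⟨hz, hne2⟩ | ⟨h1, h2⟩
      · have hzx : e z x := by
          rcases (hcov z).mp hz with h | h
          · exact absurd ⟨h, rfl⟩ hne2
          · exact h
        left
        exact ⟨hzx, fun hh => hne hh.2⟩
      · exact absurd h2.symm hne

lemma rev_rev {e : V → V → Prop} {x y : V} (he : Ac e) (hxy : e x y) (u v : V) :
    rev (rev e x y) y x u v ↔ e u v := by
  unfold rev
  constructor
  · rintro (⟨h, hn⟩ | ⟨rfl, rfl⟩)
    · rcases h with ⟨h, -⟩ | ⟨h1, h2⟩
      · exact h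
      · exact absurd ⟨h1, h2⟩ hn
    · exact hxy
  · intro h
    by_cases hx : u = x ∧ v = y
    · exact Or.inr ⟨hx.1, hx.2⟩
    · left
      refine ⟨Or.inl ⟨h, hx⟩, ?_⟩
      rintro ⟨rfl, rfl⟩
      exact he.no2 hxy h

lemma conn_congr {e e' : V → V → Prop} (h : ∀ u v, e u v ↔ e' u v) {C : Set V} {i j : V} :
    conn e C i j → conn e' C i j := by
  rintro ⟨n, w, h0, hn, hw1, hw2⟩
  refine ⟨n, w, h0, hn, fun m hm => ?_, fun m h1 h2 => ?_⟩
  · rcases hw1 m hm with hh | hh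
    · exact Or.inl ((h _ _).mp hh)
    · exact Or.inr ((h _ _).mp hh)
  · constructor
    · rintro ⟨a, b⟩
      exact (hw2 m h1 h2).mp ⟨(h _ _).mpr a, (h _ _).mpr b⟩
    · intro hm2
      obtain ⟨a, b⟩ := (hw2 m h1 h2).mpr hm2
      exact ⟨(h _ _).mp a, (h _ _).mp b⟩

lemma rev_vstruct {e : V → V → Prop} {x y : V} (he : Ac e) (hc : Covered e x y)
    {a k b : V} (hv : VConfig (adjr e) a k b) :
    (rev e x y a k ∧ rev e x y b k) ↔ (e a k ∧ e b k) := by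
  obtain ⟨hab, hak, hbk, hnadj⟩ := hv
  obtain ⟨hxy, hcov⟩ := hc
  have hne : x ≠ y := fun h => he.no_self x (h ▸ hxy)
  by_cases c1 : a = x ∧ k = y
  · obtain ⟨rfl, rfl⟩ := c1
    constructor
    · rintro ⟨(⟨-, hn⟩ | ⟨h1, -⟩), -⟩
      · exact absurd ⟨rfl, rfl⟩ hn
      · exact absurd h1 hne
    · rintro ⟨-, hby⟩
      exfalso
      rcases (hcov b).mp hby with h | h
      · exact hab h.symm
      · exact hnadj (Or.inr h)
  · by_cases c2 : b = x ∧ k = y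
    · obtain ⟨rfl, rfl⟩ := c2
      constructor
      · rintro ⟨-, (⟨-, hn⟩ | ⟨h1, -⟩)⟩
        · exact absurd ⟨rfl, rfl⟩ hn
        · exact absurd h1 hne
      · rintro ⟨hay, -⟩
        exfalso
        rcases (hcov a).mp hay with h | h
        · exact hab h
        · exact hnadj (Or.inl h)
    · by_cases c3 : a = y ∧ k = x
      · obtain ⟨rfl, rfl⟩ := c3
        constructor
        · rintro ⟨-, hbx⟩
          exfalso
          rcases hbx with ⟨hbx, -⟩ | ⟨h1, -⟩
          · exact hnadj (Or.inr ((hcov b).mpr (Or.inr hbx)))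
          · exact hab h1.symm
        · rintro ⟨hyx, -⟩
          exact absurd hxy (fun h => he.no2 h hyx)
      · by_cases c4 : b = y ∧ k = x
        · obtain ⟨rfl, rfl⟩ := c4
          constructor
          · rintro ⟨hax, -⟩
            exfalso
            rcases hax with ⟨hax, -⟩ | ⟨h1, -⟩
            · exact hnadj (Or.inl ((hcov a).mpr (Or.inr hax)))
            · exact hab h1
          · rintro ⟨-, hyx⟩
            exact absurd hxy (fun h => he.no2 h hyx)
        · rw [rev_eq_of_ne c1 c3, rev_eq_of_ne c2 c4]

lemma coreX {e : V → V → Prop} {x y : V} {C : Set V} (he : Ac e) (hxy : e x y)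
    (hcov : ∀ z, e z y ↔ (z = x ∨ e z x))
    {n : ℕ} {w : ℕ → V} (hw : okw e C n w)
    {m : ℕ} (hm0 : 0 < m) (hmn : m < n)
    (hmx : w m = x) (hmy : w (m + 1) = y)
    (hbad : ¬ ((rev e x y (w (m - 1)) (w m) ∧ rev e x y (w (m + 1)) (w m)) ↔ w m ∈ C)) :
    ∃ n' w', n' < n ∧ w' 0 = w 0 ∧ w' n' = w n ∧ okw e C n' w' := by
  have hnyx : ¬ e y x := fun h => he.no2 hxy h
  have hst_m := hw.2 m hm0 hmn
  rw [hmx, hmy] at hst_m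
  have hxC : x ∉ C := fun hC => hnyx (hst_m.mpr hC).2
  have hrev_pair : rev e x y (w (m - 1)) (w m) ∧ rev e x y (w (m + 1)) (w m) := by
    by_contra hh
    exact hbad (iff_of_false hh (by rw [hmx]; exact hxC))
  have hrpx : rev e x y (w (m - 1)) x := by
    have := hrev_pair.1
    rwa [hmx] at this
  by_cases hp : w (m - 1) = y
  · by_cases hend : m + 1 = n
    · -- prefix ending at w (m-1) = y = w n
      have hpe : w (m - 1) = w n := by rw [hp, ← hend, hmy]
      refine ⟨m - 1, fun u => w (0 + u), by omega, by norm_num, ?_, ?_⟩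
      · show w (0 + (m - 1)) = w n
        rw [Nat.zero_add]
        exact hpe
      · have := okw_sub hw 0 (m - 1) (by omega)
        simpa using this
    · have h2n : m + 1 < n := by omega
      have hadj : adjr e (w (m - 1)) (w (m + 2)) := by
        rw [hp, ← hmy]
        have := hw.1 (m + 1) h2n
        rwa [show m + 1 + 1 = m + 2 by omega] at this
      have hL : 1 < m → ((e (w (m - 2)) (w (m - 1)) ∧ e (w (m + 2)) (w (m - 1))) ↔ w (m - 1) ∈ C) := by
        intro h1m
        have hs1 := hw.2 (m - 1) (by omega) (by omega)
        rw [show m - 1 - 1 = m - 2 by omega, show m - 1 + 1 = m by omega, hp, hmx] at hs1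
        have hs2 := hw.2 (m + 1) (by omega) h2n
        rw [show m + 1 - 1 = m by omega, show m + 1 + 1 = m + 2 by omega, hmx, hmy] at hs2
        rw [hp]
        constructor
        · rintro ⟨h1, -⟩
          exact hs1.mp ⟨h1, hxy⟩
        · intro hC
          exact ⟨(hs1.mpr hC).1, (hs2.mpr hC).2⟩
      have hR : m + 2 < n → ((e (w (m - 1)) (w (m + 2)) ∧ e (w (m + 3)) (w (m + 2))) ↔ w (m + 2) ∈ C) := by
        intro h3
        have hs := hw.2 (m + 2) (by omega) h3
        rw [show m + 2 - 1 = m + 1 by omega, show m + 2 + 1 = m + 3 by omega, hmy] at hs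
        rw [hp]
        exact hs
      obtain ⟨w', hw0, hwn, hok⟩ := okw_del2 hw m hm0 h2n hadj hL hR
      exact ⟨n - 2, w', by omega, hw0, hwn, hok⟩
  · have hpx : e (w (m - 1)) x := by
      rcases hrpx with ⟨h, -⟩ | ⟨h1, -⟩
      · exact h
      · exact absurd h1 hp
    have hpy : e (w (m - 1)) y := (hcov _).mpr (Or.inr hpx)
    have hadj : adjr e (w (m - 1)) (w (m + 1)) := by
      rw [hmy]; exact Or.inl hpy
    have hL : 1 < m → ((e (w (m - 2)) (w (m - 1)) ∧ e (w (m + 1)) (w (m - 1))) ↔ w (m - 1) ∈ C) := by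
      intro h1m
      have hs1 := hw.2 (m - 1) (by omega) (by omega)
      rw [show m - 1 - 1 = m - 2 by omega, show m - 1 + 1 = m by omega, hmx] at hs1
      have hpC : w (m - 1) ∉ C := fun hC => he.no2 hpx (hs1.mpr hC).2
      refine iff_of_false ?_ hpC
      rintro ⟨-, h2⟩
      rw [hmy] at h2
      exact he.no2 hpy h2
    have hR : m + 1 < n → ((e (w (m - 1)) (w (m + 1)) ∧ e (w (m + 2)) (w (m + 1))) ↔ w (m + 1) ∈ C) := by
      intro h2
      have hs2 := hw.2 (m + 1) (by omega) h2
      rw [show m + 1 - 1 = m by omega, show m + 1 + 1 = m + 2 by omega, hmx, hmy] at hs2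
      rw [hmy]
      constructor
      · rintro ⟨-, h2'⟩
        exact hs2.mp ⟨hxy, h2'⟩
      · intro hC
        exact ⟨hpy, (hs2.mpr hC).2⟩
    obtain ⟨w', hw0, hwn, hok⟩ := okw_del1 hw m hm0 hmn hadj hL hR
    exact ⟨n - 1, w', by omega, hw0, hwn, hok⟩

lemma coreY {e : V → V → Prop} {x y : V} {C : Set V} (he : Ac e) (hxy : e x y)
    (hcov : ∀ z, e z y ↔ (z = x ∨ e z x))
    {n : ℕ} {w : ℕ → V} (hw : okw e C n w)
    {m : ℕ} (hm0 : 0 < m) (hmn : m < n)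
    (hmx : w (m - 1) = x) (hmy : w m = y)
    (hne0 : w 0 ≠ w n)
    (hbad : ¬ ((rev e x y (w (m - 1)) (w m) ∧ rev e x y (w (m + 1)) (w m)) ↔ w m ∈ C)) :
    ∃ n' w', n' < n ∧ w' 0 = w 0 ∧ w' n' = w n ∧ okw e C n' w' := by
  have hnex : x ≠ y := fun h => he.no_self x (h ▸ hxy)
  have hrevxy_false : ¬ rev e x y x y := by
    rintro (⟨-, hn⟩ | ⟨h1, -⟩)
    · exact hn ⟨rfl, rfl⟩
    · exact hnex h1
  have hyC : y ∈ C := by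
    by_contra hyC
    apply hbad
    refine iff_of_false ?_ (by rw [hmy]; exact hyC)
    rintro ⟨h1, -⟩
    rw [hmx, hmy] at h1
    exact hrevxy_false h1
  have hst_m := hw.2 m hm0 hmn
  rw [hmx, hmy] at hst_m
  have heby : e (w (m + 1)) y := (hst_m.mpr hyC).2
  have hbxor : w (m + 1) = x ∨ e (w (m + 1)) x := (hcov _).mp heby
  by_cases hbx : w (m + 1) = x
  · by_cases hm1 : m = 1
    · subst hm1
      have hw0 : w 0 = x := hmx
      have h2n : 1 + 1 < n := by
        rcases Nat.eq_or_lt_of_le (Nat.succ_le_of_lt hmn) with hh | hh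
        · exfalso
          apply hne0
          rw [hw0, ← hh]
          exact hbx.symm
        · exact hh
      have hadj : adjr e (w 0) (w (1 + 2)) := by
        rw [hw0, ← hbx]
        have := hw.1 2 (by omega)
        rwa [show (2 : ℕ) + 1 = 1 + 2 by omega] at this
      have hL : 1 < 1 → ((e (w (1 - 2)) (w (1 - 1)) ∧ e (w (1 + 2)) (w (1 - 1))) ↔ w (1 - 1) ∈ C) := by
        intro h; exact absurd h (by omega)
      have hR : 1 + 2 < n → ((e (w (1 - 1)) (w (1 + 2)) ∧ e (w (1 + 3)) (w (1 + 2))) ↔ w (1 + 2) ∈ C) := by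
        intro h3
        have hs := hw.2 3 (by omega) (by omega)
        rw [show (3 : ℕ) - 1 = 2 by omega, show (3 : ℕ) + 1 = 1 + 3 by omega] at hs
        rw [show (1 : ℕ) - 1 = 0 by omega, show (1 : ℕ) + 2 = 3 by omega, hw0, ← hbx]
        exact hs
      obtain ⟨w', hw0', hwn', hok⟩ := okw_del2 hw 1 one_pos h2n hadj hL hR
      exact ⟨n - 2, w', by omega, hw0', hwn', hok⟩
    · have hm2 : 2 ≤ m := by omega
      have hxC : x ∉ C := by
        have hs1 := hw.2 (m - 1) (by omega) (by omega)
        rw [show m - 1 - 1 = m - 2 by omega, show m - 1 + 1 = m by omega, hmx, hmy] at hs1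
        exact fun hC => he.no2 hxy (hs1.mpr hC).2
      by_cases hend : m + 1 = n
      · obtain ⟨w', hw0', hwn', hok⟩ := okw_del2 hw (m - 1) (by omega) (by omega)
          (by
            rw [show m - 1 - 1 = m - 2 by omega, show m - 1 + 2 = m + 1 by omega, hbx, ← hmx]
            have := hw.1 (m - 2) (by omega)
            rwa [show m - 2 + 1 = m - 1 by omega] at this)
          (by
            intro h1m
            rw [show m - 1 - 2 = m - 3 by omega, show m - 1 - 1 = m - 2 by omega,
              show m - 1 + 2 = m + 1 by omega, hbx, ← hmx]
            have hs := hw.2 (m - 2) (by omega) (by omega)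
            rwa [show m - 2 - 1 = m - 3 by omega, show m - 2 + 1 = m - 1 by omega] at hs)
          (by intro h; exact absurd h (by omega))
        exact ⟨n - 2, w', by omega, hw0', hwn', hok⟩
      · have h2n : m + 1 < n := by omega
        by_cases hAB : e (w (m - 2)) x ∧ e (w (m + 2)) x
        · have hAy : e (w (m - 2)) y := (hcov _).mpr (Or.inr hAB.1)
          have hBy : e (w (m + 2)) y := (hcov _).mpr (Or.inr hAB.2)
          obtain ⟨w', hw0', hwn', hok⟩ := okw_rep3 hw (m - 1) y (by omega) (by omega)
            (by
              rw [show m - 1 - 1 = m - 2 by omega]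
              exact Or.inl hAy)
            (by
              rw [show m - 1 + 3 = m + 2 by omega]
              exact Or.inr hBy)
            (by
              intro h1m
              rw [show m - 1 - 2 = m - 3 by omega, show m - 1 - 1 = m - 2 by omega]
              have hs := hw.2 (m - 2) (by omega) (by omega)
              rw [show m - 2 - 1 = m - 3 by omega, show m - 2 + 1 = m - 1 by omega, hmx] at hs
              have hAC : w (m - 2) ∉ C := fun hC => he.no2 hAB.1 (hs.mpr hC).2
              refine iff_of_false ?_ hAC
              rintro ⟨-, h2⟩
              exact he.no2 hAy h2)
            (by
              rw [show m - 1 - 1 = m - 2 by omega, show m - 1 + 3 = m + 2 by omega]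
              exact iff_of_true ⟨hAy, hBy⟩ hyC)
            (by
              intro h3
              rw [show m - 1 + 3 = m + 2 by omega, show m - 1 + 4 = m + 3 by omega]
              have hs := hw.2 (m + 2) (by omega) (by omega)
              rw [show m + 2 - 1 = m + 1 by omega, show m + 2 + 1 = m + 3 by omega, hbx] at hs
              have hBC : w (m + 2) ∉ C := fun hC => he.no2 hAB.2 (hs.mpr hC).1
              refine iff_of_false ?_ hBC
              rintro ⟨h2, -⟩
              exact he.no2 hBy h2)
          exact ⟨n - 2, w', by omega, hw0', hwn', hok⟩
        · obtain ⟨w', hw0', hwn', hok⟩ := okw_del2 hw (m - 1) (by omega) (by omega)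
            (by
              rw [show m - 1 - 1 = m - 2 by omega, show m - 1 + 2 = m + 1 by omega, hbx, ← hmx]
              have := hw.1 (m - 2) (by omega)
              rwa [show m - 2 + 1 = m - 1 by omega] at this)
            (by
              intro h1m
              rw [show m - 1 - 2 = m - 3 by omega, show m - 1 - 1 = m - 2 by omega,
                show m - 1 + 2 = m + 1 by omega, hbx, ← hmx]
              have hs := hw.2 (m - 2) (by omega) (by omega)
              rwa [show m - 2 - 1 = m - 3 by omega, show m - 2 + 1 = m - 1 by omega] at hs)
            (by
              intro h3
              rw [show m - 1 - 1 = m - 2 by omega, show m - 1 + 2 = m + 1 by omega,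
                show m - 1 + 3 = m + 2 by omega, hbx]
              exact iff_of_false hAB hxC)
          exact ⟨n - 2, w', by omega, hw0', hwn', hok⟩
  · have hbxe : e (w (m + 1)) x := hbxor.resolve_left hbx
    have hnxb : ¬ e x (w (m + 1)) := fun h => he.no2 h hbxe
    have hnyb : ¬ e y (w (m + 1)) := fun h => he.no2 h heby
    by_cases hm1 : m = 1
    · subst hm1
      have hw0 : w 0 = x := hmx
      obtain ⟨w', hw0', hwn', hok⟩ := okw_del1 hw 1 one_pos hmn
        (by
          rw [show (1 : ℕ) - 1 = 0 by omega, hw0]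
          exact Or.inr hbxe)
        (by intro h; exact absurd h (by omega))
        (by
          intro h2
          rw [show (1 : ℕ) - 1 = 0 by omega, hw0]
          have hs := hw.2 (1 + 1) (by omega) h2
          rw [show (1 : ℕ) + 1 - 1 = 1 by omega, show (1 : ℕ) + 1 + 1 = 1 + 2 by omega, hmy] at hs
          have hbC : w (1 + 1) ∉ C := fun hC => hnyb (hs.mpr hC).1
          refine iff_of_false ?_ hbC
          rintro ⟨h, -⟩
          exact hnxb h)
      exact ⟨n - 1, w', by omega, hw0', hwn', hok⟩
    · have hm2 : 2 ≤ m := by omega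
      by_cases hPx : e (w (m - 2)) x
      · have hPy : e (w (m - 2)) y := (hcov _).mpr (Or.inr hPx)
        obtain ⟨w', hw0', hwn', hok⟩ := okw_del1 hw (m - 1) (by omega) (by omega)
          (by
            rw [show m - 1 - 1 = m - 2 by omega, show m - 1 + 1 = m by omega, hmy]
            exact Or.inl hPy)
          (by
            intro h1m
            rw [show m - 1 - 2 = m - 3 by omega, show m - 1 - 1 = m - 2 by omega,
              show m - 1 + 1 = m by omega, hmy]
            have hs := hw.2 (m - 2) (by omega) (by omega)
            rw [show m - 2 - 1 = m - 3 by omega, show m - 2 + 1 = m - 1 by omega, hmx] at hs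
            have hPC : w (m - 2) ∉ C := fun hC => he.no2 hPx (hs.mpr hC).2
            refine iff_of_false ?_ hPC
            rintro ⟨-, h⟩
            exact he.no2 hPy h)
          (by
            intro h2
            rw [show m - 1 - 1 = m - 2 by omega, show m - 1 + 1 = m by omega,
              show m - 1 + 2 = m + 1 by omega, hmy]
            exact iff_of_true ⟨hPy, heby⟩ hyC)
        exact ⟨n - 1, w', by omega, hw0', hwn', hok⟩
      · obtain ⟨w', hw0', hwn', hok⟩ := okw_del1 hw m hm0 hmn
          (by
            rw [hmx]
            exact Or.inr hbxe)
          (by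
            intro h1m
            rw [hmx]
            have hs1 := hw.2 (m - 1) (by omega) (by omega)
            rw [show m - 1 - 1 = m - 2 by omega, show m - 1 + 1 = m by omega, hmx, hmy] at hs1
            have hxC : x ∉ C := fun hC => he.no2 hxy (hs1.mpr hC).2
            refine iff_of_false ?_ hxC
            rintro ⟨h, -⟩
            exact hPx h)
          (by
            intro h2
            rw [hmx]
            have hs2 := hw.2 (m + 1) (by omega) h2
            rw [show m + 1 - 1 = m by omega, show m + 1 + 1 = m + 2 by omega, hmy] at hs2
            have hbC : w (m + 1) ∉ C := fun hC => hnyb (hs2.mpr hC).1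
            refine iff_of_false ?_ hbC
            rintro ⟨h, -⟩
            exact hnxb h)
        exact ⟨n - 1, w', by omega, hw0', hwn', hok⟩

lemma ce1_shrink {e : V → V → Prop} {x y : V} {C : Set V} (he : Ac e) (hxy : e x y)
    (hcov : ∀ z, e z y ↔ (z = x ∨ e z x))
    {n : ℕ} {w : ℕ → V} (hw : okw e C n w) (hne0 : w 0 ≠ w n)
    {m : ℕ} (hm0 : 0 < m) (hmn : m < n)
    (hbad : ¬ ((rev e x y (w (m - 1)) (w m) ∧ rev e x y (w (m + 1)) (w m)) ↔ w m ∈ C)) :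
    ∃ n' w', n' < n ∧ w' 0 = w 0 ∧ w' n' = w n ∧ okw e C n' w' := by
  by_cases k1 : w (m - 1) = x ∧ w m = y
  · exact coreY he hxy hcov hw hm0 hmn k1.1 k1.2 hne0 hbad
  by_cases k4 : w (m + 1) = y ∧ w m = x
  · exact coreX he hxy hcov hw hm0 hmn k4.2 k4.1 hbad
  by_cases k2 : w (m - 1) = y ∧ w m = x
  · have hrev := okw_rev hw
    set u : ℕ → V := fun t => w (n - t) with hu
    have hux : u (n - m) = x := by
      show w (n - (n - m)) = x
      rw [show n - (n - m) = m by omega]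
      exact k2.2
    have huy : u (n - m + 1) = y := by
      show w (n - (n - m + 1)) = y
      rw [show n - (n - m + 1) = m - 1 by omega]
      exact k2.1
    have hbad' : ¬ ((rev e x y (u (n - m - 1)) (u (n - m)) ∧
        rev e x y (u (n - m + 1)) (u (n - m))) ↔ u (n - m) ∈ C) := by
      have e1 : n - (n - m - 1) = m + 1 := by omega
      have e2 : n - (n - m) = m := by omega
      have e3 : n - (n - m + 1) = m - 1 := by omega
      simp only [hu, e1, e2, e3]
      exact fun h => hbad (Iff.trans and_comm h)
    obtain ⟨n', w', hn', h0', hn'', hok⟩ :=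
      coreX he hxy hcov hrev (by omega) (by omega) hux huy hbad'
    refine ⟨n', fun t => w' (n' - t), hn', ?_, ?_, okw_rev hok⟩
    · show w' (n' - 0) = w 0
      rw [Nat.sub_zero, hn'']
      show w (n - n) = w 0
      rw [Nat.sub_self]
    · show w' (n' - n') = w n
      rw [Nat.sub_self, h0']
      show w (n - 0) = w n
      rw [Nat.sub_zero]
  by_cases k3 : w (m + 1) = x ∧ w m = y
  · have hrev := okw_rev hw
    set u : ℕ → V := fun t => w (n - t) with hu
    have hux : u (n - m - 1) = x := by
      show w (n - (n - m - 1)) = x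
      rw [show n - (n - m - 1) = m + 1 by omega]
      exact k3.1
    have huy : u (n - m) = y := by
      show w (n - (n - m)) = y
      rw [show n - (n - m) = m by omega]
      exact k3.2
    have hne0' : u 0 ≠ u n := by
      show w (n - 0) ≠ w (n - n)
      rw [Nat.sub_zero, Nat.sub_self]
      exact hne0.symm
    have hbad' : ¬ ((rev e x y (u (n - m - 1)) (u (n - m)) ∧
        rev e x y (u (n - m + 1)) (u (n - m))) ↔ u (n - m) ∈ C) := by
      have e1 : n - (n - m - 1) = m + 1 := by omega
      have e2 : n - (n - m) = m := by omega
      have e3 : n - (n - m + 1) = m - 1 := by omega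
      simp only [hu, e1, e2, e3]
      exact fun h => hbad (Iff.trans and_comm h)
    obtain ⟨n', w', hn', h0', hn'', hok⟩ :=
      coreY he hxy hcov hrev (show 0 < n - m by omega) (by omega)
        (by rwa [show n - m - 1 = n - m - 1 from rfl] at hux) huy hne0' hbad'
    refine ⟨n', fun t => w' (n' - t), hn', ?_, ?_, okw_rev hok⟩
    · show w' (n' - 0) = w 0
      rw [Nat.sub_zero, hn'']
      show w (n - n) = w 0
      rw [Nat.sub_self]
    · show w' (n' - n') = w n
      rw [Nat.sub_self, h0']
      show w (n - 0) = w n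
      rw [Nat.sub_zero]
  · exfalso
    apply hbad
    rw [rev_eq_of_ne k1 k2, rev_eq_of_ne k3 k4]
    exact hw.2 m hm0 hmn

lemma ce1_aux {e : V → V → Prop} {x y : V} {C : Set V} (he : Ac e) (hxy : e x y)
    (hcov : ∀ z, e z y ↔ (z = x ∨ e z x)) :
    ∀ n, ∀ w : ℕ → V, okw e C n w → conn (rev e x y) C (w 0) (w n) := by
  intro n
  induction n using Nat.strong_induction_on with
  | _ n IH =>
    intro w hw
    by_cases hne0 : w 0 = w n
    · rw [hne0]; exact conn_refl _ _ _
    · by_cases hall : ∀ m, 0 < m → m < n →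
        ((rev e x y (w (m - 1)) (w m) ∧ rev e x y (w (m + 1)) (w m)) ↔ w m ∈ C)
      · refine ⟨n, w, rfl, rfl, ?_, hall⟩
        intro m hm
        exact (adjr_rev he hxy _ _).mpr (hw.1 m hm)
      · obtain ⟨m, hm⟩ := not_forall.mp hall
        obtain ⟨hm0, hm'⟩ := _root_.not_imp.mp hm
        obtain ⟨hmn, hbad⟩ := _root_.not_imp.mp hm'
        obtain ⟨n', w', hn', h0', hn'', hok⟩ := ce1_shrink he hxy hcov hw hne0 hm0 hmn hbad
        have := IH n' hn' w' hok
        rwa [h0', hn''] at this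

lemma ce1 {e : V → V → Prop} {x y : V} {C : Set V} (he : Ac e) (hc : Covered e x y)
    {i j : V} (h : conn e C i j) : conn (rev e x y) C i j := by
  obtain ⟨n, w, h0, hn, hw⟩ := h
  have := ce1_aux he hc.1 hc.2 n w hw
  rwa [h0, hn] at this

lemma ce1' {e : V → V → Prop} {x y : V} {C : Set V} (he : Ac e) (hc : Covered e x y)
    {i j : V} (h : conn (rev e x y) C i j) : conn e C i j := by
  have hrc := rev_covered he hc
  have hra := rev_acyclic he hc
  have := ce1 hra hrc h
  exact conn_congr (fun u v => rev_rev he hc.1 u v) this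

def SameSV (e h : V → V → Prop) : Prop :=
  (∀ u v, adjr e u v ↔ adjr h u v) ∧
  ∀ a k b, VConfig (adjr e) a k b → ((e a k ∧ e b k) ↔ (h a k ∧ h b k))

lemma same_sv_symm {e h : V → V → Prop} (hsv : SameSV e h) : SameSV h e := by
  constructor
  · intro u v; exact (hsv.1 u v).symm
  · intro a k b hv
    have hv' : VConfig (adjr e) a k b := by
      obtain ⟨h1, h2, h3, h4⟩ := hv
      exact ⟨h1, (hsv.1 _ _).mpr h2, (hsv.1 _ _).mpr h3, fun hh => h4 ((hsv.1 _ _).mp hh)⟩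
    exact (hsv.2 a k b hv').symm

lemma exists_covered_diff [Fintype V] {e h : V → V → Prop} (he : Ac e) (hh : Ac h)
    (hsv : SameSV e h) (hne : ∃ p : V × V, e p.1 p.2 ∧ h p.2 p.1) :
    ∃ x y, e x y ∧ h y x ∧ Covered e x y := by
  classical
  have hirr : IsIrrefl V (Relation.TransGen e) := ⟨he⟩
  have hwf : WellFounded (Relation.TransGen e) := Finite.wellFounded_of_trans_of_irrefl _
  obtain ⟨⟨u0, v0⟩, h1, h2⟩ := hne
  obtain ⟨y, hyT, hymin⟩ := hwf.has_min {v | ∃ u, e u v ∧ h v u} ⟨v0, u0, h1, h2⟩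
  have hwf2 : WellFounded (fun a b : V => Relation.TransGen e b a) := by
    have ht2 : IsTrans V (fun a b : V => Relation.TransGen e b a) :=
      ⟨fun a b c hab hbc => Relation.TransGen.trans hbc hab⟩
    have hi2 : IsIrrefl V (fun a b : V => Relation.TransGen e b a) := ⟨fun a => he a⟩
    exact Finite.wellFounded_of_trans_of_irrefl _
  obtain ⟨u1, hu1⟩ := hyT
  obtain ⟨x, hxS, hxmax⟩ := hwf2.has_min {u | e u y ∧ h y u} ⟨u1, hu1⟩
  have hexy : e x y := hxS.1
  have hhyx : h y x := hxS.2
  refine ⟨x, y, hexy, hhyx, hexy, ?_⟩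
  intro z
  constructor
  · intro hzy
    by_cases hzx0 : z = x
    · exact Or.inl hzx0
    · right
      have hzney : z ≠ y := fun hzz => he.no_self y (hzz ▸ hzy)
      by_cases hadjzx : adjr e z x
      · rcases hadjzx with hzx | hxz
        · exact hzx
        · exfalso
          by_cases hhzy : h y z
          · exact hxmax z ⟨hzy, hhzy⟩ (Relation.TransGen.single hxz)
          · have hadj_h : adjr h z y := (hsv.1 z y).mp (Or.inl hzy)
            have hhzy2 : h z y := hadj_h.resolve_right hhzy
            have hadj_hxz : adjr h x z := (hsv.1 x z).mp (Or.inl hxz)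
            rcases hadj_hxz with hxz' | hzx'
            · exact hh x (Relation.TransGen.head hxz'
                (Relation.TransGen.head hhzy2 (Relation.TransGen.single hhyx)))
            · exact hymin z ⟨x, hxz, hzx'⟩ (Relation.TransGen.single hzy)
      · exfalso
        have hv : VConfig (adjr e) z y x :=
          ⟨hzx0, Or.inl hzy, Or.inl hexy, hadjzx⟩
        have := (hsv.2 z y x hv).mp ⟨hzy, hexy⟩
        exact hh.no2 this.2 hhyx
  · rintro (rfl | hzx)
    · exact hexy
    · by_contra hnzy
      have hzney : z ≠ y := by
        rintro rfl
        exact he.no2 hzx hexy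
      by_cases hadjzy : adjr e z y
      · rcases hadjzy with hzy | hyz
        · exact hnzy hzy
        · exact he y (Relation.TransGen.head hyz
            (Relation.TransGen.head hzx (Relation.TransGen.single hexy)))
      · have hv : VConfig (adjr e) z x y :=
          ⟨hzney, Or.inl hzx, Or.inr hexy, hadjzy⟩
        have hiff := hsv.2 z x y hv
        have hnhyx : ¬ e y x := fun hhh => he.no2 hexy hhh
        have hnot : ¬ (h z x ∧ h y x) := by
          intro hcc
          exact absurd (hiff.mpr hcc).2 hnhyx
        have hhxz : h x z := by
          have hadj_h : adjr h z x := (hsv.1 z x).mp (Or.inl hzx)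
          rcases hadj_h with hzx' | hxz'
          · exact absurd ⟨hzx', hhyx⟩ hnot
          · exact hxz'
        exact hymin x ⟨z, hzx, hhxz⟩ (Relation.TransGen.single hexy)

lemma same_sv_rev {e h : V → V → Prop} (he : Ac e) {x y : V} (hc : Covered e x y)
    (hsv : SameSV e h) : SameSV (rev e x y) h := by
  constructor
  · intro u v; rw [adjr_rev he hc.1]; exact hsv.1 u v
  · intro a k b hv
    have hv' : VConfig (adjr e) a k b := by
      obtain ⟨h1, h2, h3, h4⟩ := hv
      exact ⟨h1, (adjr_rev he hc.1 _ _).mp h2, (adjr_rev he hc.1 _ _).mp h3,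
        fun hh => h4 ((adjr_rev he hc.1 _ _).mpr hh)⟩
    rw [rev_vstruct he hc hv']
    exact hsv.2 a k b hv'

lemma rev_diff {e h : V → V → Prop} (hh : Ac h) {x y : V} (hyx : h y x) :
    {p : V × V | rev e x y p.1 p.2 ∧ h p.2 p.1} =
      {p : V × V | e p.1 p.2 ∧ h p.2 p.1} \ {(x, y)} := by
  ext ⟨u, v⟩
  simp only [Set.mem_setOf_eq, Set.mem_diff, Set.mem_singleton_iff, Prod.mk.injEq]
  constructor
  · rintro ⟨(⟨huv, hne⟩ | ⟨rfl, rfl⟩), hhvu⟩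
    · exact ⟨⟨huv, hhvu⟩, fun hh2 => hne ⟨hh2.1, hh2.2⟩⟩
    · exact (hh.no2 hyx hhvu).elim
  · rintro ⟨⟨huv, hhvu⟩, hne⟩
    refine ⟨Or.inl ⟨huv, ?_⟩, hhvu⟩
    rintro ⟨rfl, rfl⟩
    exact hne ⟨rfl, rfl⟩

lemma conn_of_same_sv_aux [Fintype V] : ∀ N : ℕ, ∀ e h : V → V → Prop, Ac e → Ac h →
    SameSV e h → Set.ncard {p : V × V | e p.1 p.2 ∧ h p.2 p.1} = N →
    ∀ (C : Set V) (i j : V), conn e C i j → conn h C i j := by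
  intro N
  induction N using Nat.strong_induction_on with
  | _ N IH =>
    intro e h he hh hsv hcard C i j hconn
    by_cases hD : ∃ p : V × V, e p.1 p.2 ∧ h p.2 p.1
    · obtain ⟨x, y, hxy, hyx, hcov⟩ := exists_covered_diff he hh hsv hD
      have hrd := rev_diff (e := e) hh hyx
      have hfin : Set.Finite {p : V × V | e p.1 p.2 ∧ h p.2 p.1} := Set.toFinite _
      have hmem : ((x, y) : V × V) ∈ {p : V × V | e p.1 p.2 ∧ h p.2 p.1} := ⟨hxy, hyx⟩
      have hlt : Set.ncard {p : V × V | rev e x y p.1 p.2 ∧ h p.2 p.1} < N := by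
        rw [hrd, ← hcard]
        exact Set.ncard_diff_singleton_lt_of_mem hmem hfin
      exact IH _ hlt (rev e x y) h (rev_acyclic he hcov) hh (same_sv_rev he hcov hsv)
        rfl C i j (ce1 he hcov hconn)
    · have hD' : ∀ u v : V, ¬ (e u v ∧ h v u) := fun u v hp => hD ⟨(u, v), hp⟩
      have heq : ∀ u v, e u v ↔ h u v := by
        intro u v
        constructor
        · intro huv
          rcases (hsv.1 u v).mp (Or.inl huv) with h1 | h1
          · exact h1
          · exact absurd ⟨huv, h1⟩ (hD' u v)
        · intro huv
          rcases (hsv.1 u v).mpr (Or.inl huv) with h1 | h1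
          · exact h1
          · exact absurd ⟨h1, huv⟩ (hD' v u)
      exact conn_congr heq hconn

lemma conn_of_same_sv [Fintype V] {e h : V → V → Prop} (he : Ac e) (hh : Ac h)
    (hsv : SameSV e h) {C : Set V} {i j : V} (hconn : conn e C i j) : conn h C i j :=
  conn_of_same_sv_aux _ e h he hh hsv rfl C i j hconn

lemma J_eq_of_same_sv [Fintype V] {G H : DAG V}
    (hadj : ∀ u v, G.adj u v ↔ H.adj u v)
    (hcol : ∀ a k b, VConfig G.adj a k b → (G.IsCollider a k b ↔ H.IsCollider a k b)) :
    G.J = H.J := by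
  have hsv : SameSV G.edge H.edge := ⟨hadj, fun a k b hv => hcol a k b hv⟩
  have htrans : ∀ (C : Set V) (i j : V), G.ConnWalk i j C ↔ H.ConnWalk i j C := by
    intro C i j
    rw [connWalk_iff, connWalk_iff]
    exact ⟨conn_of_same_sv G.acyclic H.acyclic hsv,
      conn_of_same_sv H.acyclic G.acyclic (same_sv_symm hsv)⟩
  ext t
  simp only [DAG.J, Set.mem_setOf_eq]
  constructor
  · rintro ⟨hdisj, hd⟩
    exact ⟨hdisj, fun i hi j hj hcw => hd i hi j hj ((htrans _ i j).mpr hcw)⟩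
  · rintro ⟨hdisj, hd⟩
    exact ⟨hdisj, fun i hi j hj hcw => hd i hi j hj ((htrans _ i j).mp hcw)⟩

end PCProof

/-- Exact correctness condition for the PC algorithm with orientation rule 2
(Proposition 6, case I = 2): `V₂(P, G₀) = ⊤` iff the output set
`{G : V₂(P,G) = ⊤}` of the PC variant using orientation rule 2 is nonempty and
every DAG in it is Markov equivalent to the true causal graph `G₀`. -/


theorem PC_rule2_exact_correctness {V : Type} [Fintype V]
    (P : Set (Set V × Set V × Set V)) (hP : ∀ t ∈ P, DisjTriple t)
    (G₀ : DAG V) :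
    V2 P G₀ ↔
      ((∃ G : DAG V, V2 P G) ∧ ∀ G : DAG V, V2 P G → DAG.J G = DAG.J G₀) := by
  constructor
  · intro h0
    refine ⟨⟨G₀, h0⟩, ?_⟩
    intro G hG
    have hadj : ∀ u v, G.adj u v ↔ G₀.adj u v :=
      fun u v => (hG.1 u v).symm.trans (h0.1 u v)
    apply PCProof.J_eq_of_same_sv hadj
    intro a k b hv
    have hv0 : VConfig G₀.adj a k b := by
      obtain ⟨h1, h2, h3, h4⟩ := hv
      exact ⟨h1, (hadj _ _).mp h2, (hadj _ _).mp h3, fun hh => h4 ((hadj _ _).mpr hh)⟩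
    exact not_iff_not.mp ((hG.2 a k b hv).trans (h0.2 a k b hv0).symm)
  · rintro ⟨⟨G, hG⟩, hall⟩
    have hJ : DAG.J G = DAG.J G₀ := hall G hG
    have hadj : ∀ u v, G.adj u v ↔ G₀.adj u v := by
      intro u v
      rw [PCProof.adj_char G, PCProof.adj_char G₀, hJ]
    constructor
    · intro i j
      exact (hG.1 i j).trans (hadj i j)
    · intro i k j hv0
      have hv : VConfig G.adj i k j := by
        obtain ⟨h1, h2, h3, h4⟩ := hv0
        exact ⟨h1, (hadj _ _).mpr h2, (hadj _ _).mpr h3, fun hh => h4 ((hadj _ _).mp hh)⟩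
      have c1 := PCProof.noncollider_char G₀ hv0
      have c2 := PCProof.noncollider_char G hv
      rw [hJ] at c2
      exact c1.trans (c2.symm.trans (hG.2 i k j hv))
end

section
/- Exact correctness condition for the conservative PC algorithm (Proposition 6, case I = 3): For every independence model P and every DAG G₀ on V, [V₃(P,G₀) = ⊤ and U_{V₃}(P) = ⊤] if and only if the set {G a DAG on V : V₃(P,G) = ⊤} is nonempty and every DAG in this set is Markov equivalent to G₀ (the set being the output of the conservative PC algorithm, and the right-hand side being correctness of that algorithm). -/
/-- The property `V₃` corresponding to the conservative PC orientation rule: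
`sk(P) = sk(G)` and for every v-configuration `i∼k∼j` of `sk(G)` and every
`C ⊆ V ∖ {i,j}` with `i ⊥⊥ j | C`: `i∼k∼j` is a non-collider in `G` iff `k ∈ C`. -/
def V3 {V : Type} (P : Set (Set V × Set V × Set V)) (G : DAG V) : Prop :=
  (∀ i j, skP P i j ↔ G.adj i j) ∧
  ∀ i k j, VConfig G.adj i k j →
    ∀ C : Set V, i ∉ C → j ∉ C → (({i} : Set V), ({j} : Set V), C) ∈ P →
      (¬ G.IsCollider i k j ↔ k ∈ C)

namespace DAG

variable {V : Type} (G : DAG V)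

lemma not_edge_self (i : V) : ¬ G.edge i i :=
  fun h => G.acyclic i (Relation.TransGen.single h)

lemma not_edge_both {i j : V} (h1 : G.edge i j) (h2 : G.edge j i) : False :=
  G.acyclic i (Relation.TransGen.head h1 (Relation.TransGen.single h2))

lemma adj_ne {i j : V} (h : G.adj i j) : i ≠ j := by
  rintro rfl
  rcases h with h | h <;> exact G.not_edge_self i h

lemma connWalk_one {i j : V} (h : G.adj i j) (C : Set V) : G.ConnWalk i j C := by
  refine ⟨1, fun m => if m = 0 then i else j, by simp, by simp, ?_, ?_⟩
  · intro m hm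
    interval_cases m
    simpa using h
  · intro m h1 h2
    exact absurd (h1.trans h2) (by omega)

lemma connWalk_two {i k j : V} {C : Set V} (hik : G.adj i k) (hjk : G.adj j k)
    (hC : G.IsCollider i k j ↔ k ∈ C) : G.ConnWalk i j C := by
  refine ⟨2, fun m => if m = 0 then i else if m = 1 then k else j, by simp, by simp, ?_, ?_⟩
  · intro m hm
    interval_cases m
    · simpa using hik
    · simpa using (show G.adj k j from hjk.symm)
  · intro m h1 h2
    interval_cases m
    simpa [DAG.IsCollider] using hC

lemma connWalk_symm {i j : V} {C : Set V} (h : G.ConnWalk i j C) : G.ConnWalk j i C := by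
  obtain ⟨n, w, h0, hn, hadj, hcol⟩ := h
  refine ⟨n, fun m => w (n - m), by simpa using hn, by simpa using h0, ?_, ?_⟩
  · intro m hm
    show G.adj (w (n - m)) (w (n - (m + 1)))
    have hx := hadj (n - (m + 1)) (by omega)
    rw [show n - (m + 1) + 1 = n - m by omega] at hx
    exact hx.symm
  · intro m h1 h2
    show (G.edge (w (n - (m - 1))) (w (n - m)) ∧ G.edge (w (n - (m + 1))) (w (n - m))) ↔
      w (n - m) ∈ C
    have hx := hcol (n - m) (by omega) (by omega)
    rw [show n - m - 1 = n - (m + 1) by omega, show n - m + 1 = n - (m - 1) by omega] at hx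
    rw [← hx]
    exact and_comm

lemma no_connWalk_pa {i j : V} (hna : ¬ G.adj i j) (hij : i ≠ j)
    (hanc : ¬ Relation.TransGen G.edge j i) :
    ¬ G.ConnWalk i j {x | G.edge x j} := by
  rintro ⟨n, w, h0, hn, hadj, hcol⟩
  rcases Nat.lt_or_ge n 2 with h2 | h2
  · interval_cases n
    · exact hij (by rw [← h0, hn])
    · refine hna ?_
      have := hadj 0 (by omega)
      rwa [h0, hn] at this
  · set Q : ℕ → Prop := fun m => G.edge (w (m + 1)) (w m) ∧ Relation.TransGen G.edge j (w m)
      with hQ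
    have base : Q (n - 1) := by
      have hint := hcol (n - 1) (by omega) (by omega)
      have hadj' := hadj (n - 1) (by omega)
      rw [show n - 1 + 1 = n by omega, hn] at hadj' hint
      have hxj : ¬ G.edge (w (n - 1)) j := by
        intro hx
        have hc := hint.mpr hx
        exact G.not_edge_both hx hc.2
      rcases hadj' with h | h
      · exact absurd h hxj
      · exact ⟨by rw [show n - 1 + 1 = n by omega, hn]; exact h, Relation.TransGen.single h⟩
    have step : ∀ m, 1 ≤ m → m < n → Q m → Q (m - 1) := by
      rintro m h1 hlt ⟨he, ht⟩
      have hnotC : w m ∉ {x | G.edge x j} := fun hx => G.acyclic j (ht.tail hx)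
      have hint := hcol m (by omega) hlt
      have hnl : ¬ G.edge (w (m - 1)) (w m) := fun hl => hnotC (hint.mp ⟨hl, he⟩)
      have ha := hadj (m - 1) (by omega)
      rw [show m - 1 + 1 = m by omega] at ha
      rcases ha with h | h
      · exact absurd h hnl
      · exact ⟨by rw [show m - 1 + 1 = m by omega]; exact h, ht.tail h⟩
    have all : ∀ t, t ≤ n - 1 → Q (n - 1 - t) := by
      intro t
      induction t with
      | zero => intro _; simpa using base
      | succ t ih =>
        intro hle
        have hq := ih (by omega)
        have := step (n - 1 - t) (by omega) (by omega) hq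
        rwa [show n - 1 - t - 1 = n - 1 - (t + 1) by omega] at this
    have hfin := (all (n - 1) le_rfl).2
    rw [show n - 1 - (n - 1) = 0 by omega, h0] at hfin
    exact hanc hfin

lemma exists_sep {i j : V} (hna : ¬ G.adj i j) (hij : i ≠ j) :
    ∃ C : Set V, i ∉ C ∧ j ∉ C ∧ ¬ G.ConnWalk i j C := by
  by_cases h : Relation.TransGen G.edge j i
  · have h' : ¬ Relation.TransGen G.edge i j := fun h2 => G.acyclic i (h2.trans h)
    refine ⟨{x | G.edge x i}, fun hx => G.not_edge_self i hx,
      fun hx => hna (Or.inr hx), fun hw => ?_⟩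
    exact G.no_connWalk_pa (fun ha => hna ha.symm) hij.symm h' (G.connWalk_symm hw)
  · exact ⟨{x | G.edge x j}, fun hx => hna (Or.inl hx),
      fun hx => G.not_edge_self j hx, G.no_connWalk_pa hna hij h⟩

lemma mem_J_iff {i j : V} {C : Set V} :
    ((({i} : Set V), ({j} : Set V), C)) ∈ G.J ↔
      (i ≠ j ∧ i ∉ C ∧ j ∉ C) ∧ ¬ G.ConnWalk i j C := by
  simp [DAG.J, DisjTriple, DAG.dsep, Set.disjoint_singleton_left]

lemma adj_iff_J {i j : V} :
    G.adj i j ↔ (i ≠ j ∧ ∀ C : Set V, i ∉ C → j ∉ C → ((({i} : Set V), ({j} : Set V), C)) ∉ G.J) := by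
  constructor
  · intro h
    exact ⟨G.adj_ne h, fun C hi hj hmem => (G.mem_J_iff.mp hmem).2 (G.connWalk_one h C)⟩
  · rintro ⟨hij, hC⟩
    by_contra hna
    obtain ⟨C, hi, hj, hsep⟩ := G.exists_sep hna hij
    exact hC C hi hj (G.mem_J_iff.mpr ⟨⟨hij, hi, hj⟩, hsep⟩)

lemma collider_iff_sep {i k j : V} {C : Set V} (hik : G.adj i k) (hjk : G.adj j k)
    (hsep : ¬ G.ConnWalk i j C) : G.IsCollider i k j ↔ k ∉ C := by
  constructor
  · intro hc hk
    exact hsep (G.connWalk_two hik hjk (iff_of_true hc hk))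
  · intro hk
    by_contra hnc
    exact hsep (G.connWalk_two hik hjk (iff_of_false hnc hk))

end DAG

/-- Exact correctness condition for the conservative PC algorithm (Proposition 6,
case I = 3): `V₃(P, G₀) = ⊤` together with `U_{V₃}(P) = ⊤` holds iff the output
set `{G : V₃(P,G) = ⊤}` of the conservative PC algorithm is nonempty and every
DAG in it is Markov equivalent to the true causal graph `G₀`. -/
theorem conservative_PC_exact_correctness {V : Type} [Fintype V]
    (P : Set (Set V × Set V × Set V)) (hP : ∀ t ∈ P, DisjTriple t)
    (G₀ : DAG V) :
    (V3 P G₀ ∧ ∀ G₁ G₂ : DAG V, V3 P G₁ → V3 P G₂ → DAG.J G₁ = DAG.J G₂) ↔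
      ((∃ G : DAG V, V3 P G) ∧ ∀ G : DAG V, V3 P G → DAG.J G = DAG.J G₀) := by
  constructor
  · rintro ⟨h0, hpair⟩
    exact ⟨⟨G₀, h0⟩, fun G hG => hpair G G₀ hG h0⟩
  · rintro ⟨⟨G, hG⟩, hall⟩
    have hJ : DAG.J G = DAG.J G₀ := hall G hG
    have hadjeq : ∀ a b, G.adj a b ↔ G₀.adj a b := by
      intro a b
      rw [DAG.adj_iff_J, DAG.adj_iff_J, hJ]
    refine ⟨⟨?_, ?_⟩, fun G₁ G₂ h₁ h₂ => (hall G₁ h₁).trans (hall G₂ h₂).symm⟩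
    · intro a b
      rw [hG.1 a b, hadjeq]
    · intro i k j hv C hiC hjC hPmem
      have hvG : VConfig G.adj i k j :=
        ⟨hv.1, (hadjeq i k).mpr hv.2.1, (hadjeq j k).mpr hv.2.2.1,
          fun h => hv.2.2.2 ((hadjeq i j).mp h)⟩
      have hiff : ¬ G.IsCollider i k j ↔ k ∈ C :=
        hG.2 i k j hvG C hiC hjC hPmem
      obtain ⟨C₀, hi0, hj0, hsep⟩ := G.exists_sep hvG.2.2.2 hvG.1
      have hmem : ((({i} : Set V), ({j} : Set V), C₀)) ∈ DAG.J G :=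
        G.mem_J_iff.mpr ⟨⟨hvG.1, hi0, hj0⟩, hsep⟩
      rw [hJ] at hmem
      have hsep₀ : ¬ G₀.ConnWalk i j C₀ := (G₀.mem_J_iff.mp hmem).2
      have hc : G.IsCollider i k j ↔ G₀.IsCollider i k j := by
        rw [G.collider_iff_sep hvG.2.1 hvG.2.2.1 hsep,
          G₀.collider_iff_sep hv.2.1 hv.2.2.1 hsep₀]
      rw [← not_congr hc]
      exact hiff
end
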